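/- arXiv:2204.13936 — 10 statements merged into one kernel-verified Lean document; each statement's English description precedes it below -/
import Mathlib

section
/- Let G be the complete 3-partite graph with parts V_1, V_2, V_3, not isomorphic to K_3 (i.e., not all three parts are singletons), such that at least two of the sizes |V_1|, |V_2|, |V_3| are equal. Then χ^ven(G) = 2. -/
open Finset

open Classical in
/-- `σ^ven(v) = w(v) + Σ_{e ∋ v} w(e) + Σ_{u ∈ N(v)} w(u)` for a total weighting
given by a vertex weighting `wV` and a symmetric edge weighting `wE`. -/
noncomputable def sigmaVEN {V : Type*} (G : SimpleGraph V) [Fintype V]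
    (wV : V → ℕ) (wE : V → V → ℕ) (v : V) : ℕ :=
  wV v + ∑ u : V, if G.Adj v u then wE v u + wV u else 0

/-- `G` admits a neighbor full sum distinguishing total weighting with weights in `{1,…,k}`. -/
def HasNFSDTotalWeighting {V : Type*} (G : SimpleGraph V) [Fintype V] (k : ℕ) : Prop :=
  ∃ wV : V → ℕ, ∃ wE : V → V → ℕ, (∀ u v, wE u v = wE v u) ∧
    (∀ v, 1 ≤ wV v ∧ wV v ≤ k) ∧
    (∀ u v, G.Adj u v → 1 ≤ wE u v ∧ wE u v ≤ k) ∧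
    ∀ u v, G.Adj u v → sigmaVEN G wV wE u ≠ sigmaVEN G wV wE v

/-! With weights constant on parts, every vertex of part `i` gets
`σ = a i + ∑_{j ≠ i} |V_j| (c i j + a j)`. For `k = 1` all weights are `1`, so
`σ = 1 + 2 deg`, and adjacent vertices in parts of equal size collide. For parts of sizes
`s, s, t` the weights `a = (1, 1, 2)`, `c₀₂ = 2`, `c₁₂ = 1`, `c₀₁ = γ` give the part sums
`1 + (γ + 1) s + 4 t`, `1 + (γ + 1) s + 3 t` and `2 + 5 s`: `γ = 1` works unless
`4 t = 3 s + 1`, `γ = 2` unless `3 t = 2 s + 1`, and both fail only for `s = t = 1`.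
Relabelling the parts puts the two equal sizes first. -/

open SimpleGraph

section Iso

variable {V W : Type*} [Fintype V] [Fintype W] {G : SimpleGraph V} {H : SimpleGraph W}

lemma sigmaVEN_comp_iso (e : G ≃g H) (wV : W → ℕ) (wE : W → W → ℕ) (v : V) :
    sigmaVEN G (wV ∘ e) (fun u w => wE (e u) (e w)) v = sigmaVEN H wV wE (e v) := by
  unfold sigmaVEN
  congr 1
  exact Fintype.sum_equiv e.toEquiv _ _ fun _ => by
    classical exact if_congr e.map_adj_iff.symm rfl rfl

lemma HasNFSDTotalWeighting.of_iso (e : G ≃g H) {k : ℕ} (h : HasNFSDTotalWeighting H k) :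
    HasNFSDTotalWeighting G k := by
  obtain ⟨wV, wE, hsym, hV, hE, hdist⟩ := h
  refine ⟨wV ∘ e, fun u w => wE (e u) (e w), fun u w => hsym _ _, fun v => hV _,
    fun u w huw => hE _ _ (e.map_adj_iff.2 huw), fun u w huw => ?_⟩
  rw [sigmaVEN_comp_iso, sigmaVEN_comp_iso]
  exact hdist _ _ (e.map_adj_iff.2 huw)

end Iso

lemma sigmaVEN_eq_sigmaVEN_one {V : Type*} [Fintype V] {G : SimpleGraph V} {wV : V → ℕ}
    {wE : V → V → ℕ} (hV : ∀ v, 1 ≤ wV v ∧ wV v ≤ 1)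
    (hE : ∀ u v, G.Adj u v → 1 ≤ wE u v ∧ wE u v ≤ 1) (v : V) :
    sigmaVEN G wV wE v = sigmaVEN G (fun _ => 1) (fun _ _ => 1) v := by
  unfold sigmaVEN
  congr 1
  · exact le_antisymm (hV v).2 (hV v).1
  refine sum_congr rfl fun u _ => ?_
  split_ifs with h
  · show wE v u + wV u = 1 + 1
    have := hE v u h
    have := hV u
    omega
  · rfl

def SimpleGraph.completeMultipartiteGraph.isoOfEquiv {ι κ : Type*} (V : κ → Type*)
    (e : ι ≃ κ) :
    completeMultipartiteGraph (fun i => V (e i)) ≃g completeMultipartiteGraph V where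
  toEquiv := Equiv.sigmaCongrLeft e
  map_rel_iff' := by simp [e.injective.ne_iff]

section Multipartite

variable {ι : Type*} [Fintype ι] [DecidableEq ι] (V : ι → Type*) [∀ i, Fintype (V i)]

def partSigmaVEN (a : ι → ℕ) (c : ι → ι → ℕ) (i : ι) : ℕ :=
  a i + ∑ j ∈ univ.erase i, Fintype.card (V j) * (c i j + a j)

lemma partSigmaVEN_add_card_mul (a : ι → ℕ) (c : ι → ι → ℕ) (i : ι) :
    partSigmaVEN V a c i + Fintype.card (V i) * (c i i + a i) =
      a i + ∑ j, Fintype.card (V j) * (c i j + a j) := by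
  rw [partSigmaVEN, ← add_sum_erase univ _ (mem_univ i)]
  ring

lemma sigmaVEN_completeMultipartiteGraph (a : ι → ℕ) (c : ι → ι → ℕ) (v : Σ i, V i) :
    sigmaVEN (completeMultipartiteGraph V) (fun u => a u.1) (fun u w => c u.1 w.1) v =
      partSigmaVEN V a c v.1 := by
  unfold sigmaVEN partSigmaVEN
  congr 1
  rw [← univ_sigma_univ, sum_sigma]
  simp only [comap_adj, top_adj, sum_ite_irrel, sum_const, card_univ,
    smul_eq_mul, mul_zero, ← sum_filter]
  exact sum_congr (by ext; simp [eq_comm]) fun _ _ => rfl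

lemma hasNFSDTotalWeighting_completeMultipartiteGraph_of_injective {k : ℕ} (a : ι → ℕ)
    (c : ι → ι → ℕ) (hc : ∀ i j, c i j = c j i) (ha : ∀ i, 1 ≤ a i ∧ a i ≤ k)
    (hck : ∀ i j, i ≠ j → 1 ≤ c i j ∧ c i j ≤ k)
    (hinj : Function.Injective (partSigmaVEN V a c)) :
    HasNFSDTotalWeighting (completeMultipartiteGraph V) k := by
  refine ⟨fun u => a u.1, fun u w => c u.1 w.1, fun u w => hc _ _, fun v => ha v.1,
    fun u w huw => hck _ _ huw, fun u w huw => ?_⟩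
  rw [sigmaVEN_completeMultipartiteGraph, sigmaVEN_completeMultipartiteGraph]
  exact hinj.ne huw

lemma not_hasNFSDTotalWeighting_one_completeMultipartiteGraph {i j : ι} (hij : i ≠ j) (x : V i)
    (y : V j) (hcard : Fintype.card (V i) = Fintype.card (V j)) :
    ¬ HasNFSDTotalWeighting (completeMultipartiteGraph V) 1 := by
  rintro ⟨wV, wE, -, hV, hE, hdist⟩
  apply hdist ⟨i, x⟩ ⟨j, y⟩ hij
  rw [sigmaVEN_eq_sigmaVEN_one hV hE, sigmaVEN_eq_sigmaVEN_one hV hE]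
  have hσ := sigmaVEN_completeMultipartiteGraph V (fun _ => 1) (fun _ _ => 1)
  have hi := partSigmaVEN_add_card_mul V (fun _ => 1) (fun _ _ => 1) i
  have hj := partSigmaVEN_add_card_mul V (fun _ => 1) (fun _ _ => 1) j
  rw [hσ, hσ]
  dsimp only at hi hj ⊢
  omega

end Multipartite

lemma Fin.exists_perm_three_apply_zero_apply_one {i j : Fin 3} (hij : i ≠ j) :
    ∃ σ : Equiv.Perm (Fin 3), σ 0 = i ∧ σ 1 = j := by
  revert i j
  decide

lemma hasNFSDTotalWeighting_two_completeMultipartiteGraph_fin_three {m : Fin 3 → ℕ}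
    (h01 : m 0 = m 1) (h2 : 1 ≤ m 2) (hK3 : ¬ ∀ i, m i = 1) :
    HasNFSDTotalWeighting (completeMultipartiteGraph fun i => Fin (m i)) 2 := by
  obtain ⟨γ, hγ, hγ1, hγ2⟩ : ∃ γ, (γ = 1 ∨ γ = 2) ∧
      (γ = 1 → 4 * m 2 ≠ 3 * m 0 + 1) ∧ (γ = 2 → 3 * m 2 ≠ 2 * m 0 + 1) := by
    by_cases h : 4 * m 2 = 3 * m 0 + 1
    · refine ⟨2, .inr rfl, by simp, fun _ => ?_⟩
      contrapose! hK3
      intro i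
      fin_cases i <;> simp <;> omega
    · exact ⟨1, .inl rfl, fun _ => h, by simp⟩
  set a : Fin 3 → ℕ := ![1, 1, 2]
  set c : Fin 3 → Fin 3 → ℕ := ![![1, γ, 2], ![γ, 1, 1], ![2, 1, 1]]
  have hF0 : partSigmaVEN (fun i => Fin (m i)) a c 0 = 1 + m 1 * (γ + 1) + 4 * m 2 := by
    have := partSigmaVEN_add_card_mul (fun i => Fin (m i)) a c 0
    simp [Fin.sum_univ_three, a, c] at this ⊢
    omega
  have hF1 : partSigmaVEN (fun i => Fin (m i)) a c 1 = 1 + m 0 * (γ + 1) + 3 * m 2 := by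
    have := partSigmaVEN_add_card_mul (fun i => Fin (m i)) a c 1
    simp [Fin.sum_univ_three, a, c] at this ⊢
    omega
  have hF2 : partSigmaVEN (fun i => Fin (m i)) a c 2 = 2 + 3 * m 0 + 2 * m 1 := by
    have := partSigmaVEN_add_card_mul (fun i => Fin (m i)) a c 2
    simp [Fin.sum_univ_three, a, c] at this ⊢
    omega
  refine hasNFSDTotalWeighting_completeMultipartiteGraph_of_injective _ a c ?_ ?_ ?_ ?_
  · intro i j
    fin_cases i <;> fin_cases j <;> rfl
  · intro i
    fin_cases i <;> simp [a]
  · intro i j _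
    fin_cases i <;> fin_cases j <;> simp [c] <;> omega
  · intro i j hij
    rcases hγ with rfl | rfl <;> fin_cases i <;> fin_cases j <;> simp at hij ⊢ <;> omega

/-- For the complete 3-partite graph, not isomorphic to `K_3`, in which at least
two of the three part sizes are equal, `χ^ven(G) = 2`. -/
theorem chiVEN_complete3partite_eq_two (m : Fin 3 → ℕ) (hm : ∀ i, 1 ≤ m i)
    (hK3 : ¬ ∀ i, m i = 1) (heq : ∃ i j, i ≠ j ∧ m i = m j) :
    IsLeast {k : ℕ | 0 < k ∧
      HasNFSDTotalWeighting
        (SimpleGraph.completeMultipartiteGraph fun i => Fin (m i)) k} 2 := by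
  obtain ⟨i, j, hij, hmij⟩ := heq
  refine ⟨⟨two_pos, ?_⟩, fun k ⟨hk, hkw⟩ => ?_⟩
  · obtain ⟨σ, rfl, rfl⟩ := Fin.exists_perm_three_apply_zero_apply_one hij
    have hK3σ : ¬ ∀ i, m (σ i) = 1 := fun h => hK3 fun l => by simpa using h (σ.symm l)
    exact (hasNFSDTotalWeighting_two_completeMultipartiteGraph_fin_three (m := m ∘ σ) hmij (hm _)
      hK3σ).of_iso (completeMultipartiteGraph.isoOfEquiv _ σ).symm
  · by_contra hk2
    obtain rfl : k = 1 := by omega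
    exact not_hasNFSDTotalWeighting_one_completeMultipartiteGraph _ hij ⟨0, hm i⟩ ⟨0, hm j⟩
      (by simpa using hmij) hkw
end

section
/- Let r ≥ 3, t ≥ 1 and n > 2(r−1)². Then χ^e(K_n^r(t)) = 2, where K_n^r(t) is the complete r-uniform n-partite hypergraph with all parts of size t. -/
open Finset

open Classical in
/-- `σ^e(v) = Σ_{e ∋ v} w(e)` for a hypergraph with edge set `E`. -/
noncomputable def sigmaE {V : Type*} [Fintype V] (E : Finset (Finset V))
    (w : Finset V → ℕ) (v : V) : ℕ :=
  ∑ e ∈ E.filter (fun e => v ∈ e), w e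

/-- The hypergraph with edge set `E` admits an edge weighting with weights in
`{1,…,k}` such that `σ^e` is a proper vertex coloring: every edge with at least
two vertices contains two vertices with distinct colors. -/
def HasNSDEdgeWeighting {V : Type*} [Fintype V] (E : Finset (Finset V)) (k : ℕ) : Prop :=
  ∃ w : Finset V → ℕ, (∀ e ∈ E, 1 ≤ w e ∧ w e ≤ k) ∧
    ∀ e ∈ E, 2 ≤ e.card → ∃ u ∈ e, ∃ v ∈ e, sigmaE E w u ≠ sigmaE E w v

/-- The edge set of the complete `r`-uniform `n`-partite hypergraph with parts
`{i} × Fin t` (`i : Fin n`), each of size `t`: all `r`-element subsets of the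
vertex set containing at most one vertex from each part. -/
def completePartiteEdges (n r t : ℕ) : Finset (Finset (Fin n × Fin t)) :=
  (Finset.univ.powersetCard r).filter
    (fun e => ∀ u ∈ e, ∀ v ∈ e, u ≠ v → (u : Fin n × Fin t).1 ≠ v.1)

/-!
Vertices are pairs `(p, c)` with `p` the part. The hypergraph is vertex-transitive, hence regular,
so the constant weighting gives a constant `σ^e` and one weight does not suffice.

For two weights put `q = r - 1`, `m = ⌊n / q⌋` and cut the parts `0, …, m q - 1` into blocks of
`q` consecutive parts. For every block `j`, every `c` and every vertex `x = (p, c)` with `p` in an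
earlier block, the edge formed by block `j` (at `c`) and `x` gets weight `2`, every other edge
weight `1`. Then `σ^e(p, c)` is the common degree plus a number depending only on the block `i` of
`p` (with `i = m` outside the blocks), and this number is injective in `i` since `q, m ≥ 2`. An edge
meets `q + 1` distinct parts, so it cannot lie in one block and gets two colours.
-/

section Hypergraph

variable {V : Type*} [DecidableEq V] {E F : Finset (Finset V)}

lemma card_filter_mem_le_of_map_mem (π : V ≃ V)
    (hπ : ∀ e ∈ E, e.map π.toEmbedding ∈ E) (v : V) :
    #{e ∈ E | v ∈ e} ≤ #{e ∈ E | π v ∈ e} := by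
  refine card_le_card_of_injOn (fun e => e.map π.toEmbedding) (fun e he => ?_)
    (map_injective _).injOn
  obtain ⟨heE, hv⟩ := mem_filter.1 he
  exact mem_filter.2 ⟨hπ e heE, mem_map_of_mem _ hv⟩

variable [Fintype V]

lemma sigmaE_eq_sum_filter (E : Finset (Finset V)) (w : Finset V → ℕ) (v : V) :
    sigmaE E w v = ∑ e ∈ E with v ∈ e, w e := by
  rw [sigmaE]
  exact sum_congr (by congr) fun _ _ => rfl

lemma sigmaE_of_forall_eq_one {w : Finset V → ℕ} (hw : ∀ e ∈ E, w e = 1) (v : V) :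
    sigmaE E w v = #{e ∈ E | v ∈ e} := by
  rw [sigmaE_eq_sum_filter, card_eq_sum_ones]
  exact sum_congr rfl fun e he => hw e (mem_filter.1 he).1

lemma sigmaE_ite_mem (hF : F ⊆ E) (v : V) :
    sigmaE E (fun e => if e ∈ F then 2 else 1) v = #{e ∈ E | v ∈ e} + #{e ∈ F | v ∈ e} := by
  rw [sigmaE_eq_sum_filter]
  calc ∑ e ∈ E with v ∈ e, (if e ∈ F then 2 else 1)
      = ∑ e ∈ E with v ∈ e, (1 + if e ∈ F then 1 else 0) :=
        sum_congr rfl fun e _ => by split_ifs <;> rfl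
    _ = #{e ∈ E | v ∈ e} + #{e ∈ {e ∈ E | v ∈ e} | e ∈ F} := by
        rw [sum_add_distrib, card_eq_sum_ones, sum_boole, Nat.cast_id]
    _ = #{e ∈ E | v ∈ e} + #{e ∈ F | v ∈ e} := by
        congr 2
        ext e
        simp only [mem_filter]
        exact ⟨fun h => ⟨h.2, h.1.2⟩, fun h => ⟨⟨hF h.1, h.2⟩, h.1⟩⟩

lemma not_hasNSDEdgeWeighting_one (hreg : ∀ u v, #{e ∈ E | u ∈ e} = #{e ∈ E | v ∈ e})
    {e : Finset V} (he : e ∈ E) (hcard : 2 ≤ #e) : ¬ HasNSDEdgeWeighting E 1 := by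
  rintro ⟨w, hw, hsep⟩
  have hw1 : ∀ e ∈ E, w e = 1 := fun e he => by have := hw e he; omega
  obtain ⟨u, -, v, -, huv⟩ := hsep e he hcard
  exact huv (by rw [sigmaE_of_forall_eq_one hw1, sigmaE_of_forall_eq_one hw1, hreg])

lemma hasNSDEdgeWeighting_two_of_subset (hF : F ⊆ E)
    (hreg : ∀ u v, #{e ∈ E | u ∈ e} = #{e ∈ E | v ∈ e})
    (hsep : ∀ e ∈ E, 2 ≤ #e → ∃ u ∈ e, ∃ v ∈ e, #{f ∈ F | u ∈ f} ≠ #{f ∈ F | v ∈ f}) :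
    HasNSDEdgeWeighting E 2 := by
  refine ⟨fun e => if e ∈ F then 2 else 1, fun e _ => by dsimp only; split_ifs <;> norm_num,
    fun e he hcard => ?_⟩
  obtain ⟨u, hu, v, hv, huv⟩ := hsep e he hcard
  refine ⟨u, hu, v, hv, ?_⟩
  rw [sigmaE_ite_mem hF, sigmaE_ite_mem hF, hreg u v]
  exact fun h => huv (Nat.add_left_cancel h)

end Hypergraph

section CompletePartite

variable {n r t : ℕ}

lemma mem_completePartiteEdges {e : Finset (Fin n × Fin t)} :
    e ∈ completePartiteEdges n r t ↔ #e = r ∧ Set.InjOn Prod.fst (e : Set (Fin n × Fin t)) := by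
  simp only [completePartiteEdges, mem_filter, mem_powersetCard, subset_univ, true_and]
  exact and_congr_right fun _ => forall₂_congr fun _ _ => forall₂_congr fun _ _ => not_imp_not

lemma map_prodCongr_mem_completePartiteEdges (σ : Equiv.Perm (Fin n)) (τ : Equiv.Perm (Fin t))
    {e : Finset (Fin n × Fin t)} (he : e ∈ completePartiteEdges n r t) :
    e.map (σ.prodCongr τ).toEmbedding ∈ completePartiteEdges n r t := by
  rw [mem_completePartiteEdges] at he ⊢
  refine ⟨by rw [card_map, he.1], ?_⟩
  rw [coe_map]
  rintro _ ⟨a, ha, rfl⟩ _ ⟨b, hb, rfl⟩ hab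
  exact congrArg _ (he.2 ha hb (σ.injective hab))

lemma card_filter_mem_completePartiteEdges_eq (u v : Fin n × Fin t) :
    #{e ∈ completePartiteEdges n r t | u ∈ e} = #{e ∈ completePartiteEdges n r t | v ∈ e} := by
  let π := (Equiv.swap u.1 v.1).prodCongr (Equiv.swap u.2 v.2)
  have hπ : ∀ e ∈ completePartiteEdges n r t, e.map π.toEmbedding ∈ completePartiteEdges n r t :=
    fun e he => map_prodCongr_mem_completePartiteEdges _ _ he
  have huv : π u = v := Prod.ext (Equiv.swap_apply_left _ _) (Equiv.swap_apply_left _ _)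
  have hvu : π v = u := Prod.ext (Equiv.swap_apply_right _ _) (Equiv.swap_apply_right _ _)
  exact le_antisymm (huv ▸ card_filter_mem_le_of_map_mem π hπ u)
    (hvu ▸ card_filter_mem_le_of_map_mem π hπ v)

lemma completePartiteEdges_nonempty (hrn : r ≤ n) (ht : 0 < t) :
    (completePartiteEdges n r t).Nonempty := by
  let f : Fin r ↪ Fin n × Fin t :=
    ⟨fun i => (Fin.castLE hrn i, ⟨0, ht⟩),
      fun i j h => Fin.castLE_injective hrn (congrArg Prod.fst h)⟩
  refine ⟨univ.map f, mem_completePartiteEdges.2 ⟨by simp, ?_⟩⟩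
  rw [coe_map]
  rintro _ ⟨i, -, rfl⟩ _ ⟨j, -, rfl⟩ hij
  exact congrArg f (Fin.castLE_injective hrn hij)

end CompletePartite

section Blocks

variable {n t q : ℕ}

lemma card_filter_val_div_eq (hq : 0 < q) (j : ℕ) :
    #{p : Fin n | p.val / q = j} = min n (j * q + q) - min n (j * q) := by
  have hsplit : univ.filter (fun p : Fin n => p.val / q = j) =
      univ.filter (fun p : Fin n => p < j * q + q) \ univ.filter (fun p : Fin n => p < j * q) := by
    ext p
    simp only [mem_filter, mem_sdiff, mem_univ, true_and, ← add_one_mul,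
      ← Nat.div_lt_iff_lt_mul hq]
    omega
  rw [hsplit, card_sdiff_of_subset fun p => by simp only [mem_filter, mem_univ, true_and]; omega,
    Fin.card_filter_val_lt, Fin.card_filter_val_lt]

def blockEdge (q : ℕ) (z : ℕ × (Fin n × Fin t)) : Finset (Fin n × Fin t) :=
  insert z.2 ((univ.filter fun p : Fin n => p.val / q = z.1).image (·, z.2.2))

lemma mem_blockEdge {j : ℕ} {x a : Fin n × Fin t} :
    a ∈ blockEdge q (j, x) ↔ a = x ∨ a.1.val / q = j ∧ a.2 = x.2 := by
  simp only [blockEdge, mem_insert, mem_image, mem_filter, mem_univ, true_and, Prod.ext_iff]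
  grind

lemma snd_eq_of_mem_blockEdge {j : ℕ} {x a : Fin n × Fin t} (ha : a ∈ blockEdge q (j, x)) :
    a.2 = x.2 := by
  rcases mem_blockEdge.1 ha with rfl | ⟨-, h⟩
  exacts [rfl, h]

lemma div_le_of_mem_blockEdge {j : ℕ} {x a : Fin n × Fin t} (hx : x.1.val / q < j)
    (ha : a ∈ blockEdge q (j, x)) : a.1.val / q ≤ j := by
  rcases mem_blockEdge.1 ha with rfl | ⟨h, -⟩ <;> omega

lemma exists_mem_blockEdge_div_eq (hq : 0 < q) {j : ℕ} (hj : j < n / q) (x : Fin n × Fin t) :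
    ∃ a ∈ blockEdge q (j, x), a.1.val / q = j := by
  have hjq : j * q < n := by
    have := (Nat.le_div_iff_mul_le hq).1 hj
    rw [Nat.succ_mul] at this
    omega
  exact ⟨(⟨j * q, hjq⟩, x.2), mem_blockEdge.2 (Or.inr ⟨Nat.mul_div_cancel j hq, rfl⟩),
    Nat.mul_div_cancel j hq⟩

def specialIndex (n t q : ℕ) : Finset (ℕ × (Fin n × Fin t)) :=
  (range (n / q) ×ˢ univ).filter fun z => z.2.1.val / q < z.1

lemma mem_specialIndex {z : ℕ × (Fin n × Fin t)} :
    z ∈ specialIndex n t q ↔ z.1 < n / q ∧ z.2.1.val / q < z.1 := by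
  simp [specialIndex]

def specialEdges (n t q : ℕ) : Finset (Finset (Fin n × Fin t)) :=
  (specialIndex n t q).image (blockEdge q)

lemma blockEdge_mem_completePartiteEdges (hq : 0 < q) {z : ℕ × (Fin n × Fin t)}
    (hz : z ∈ specialIndex n t q) : blockEdge q z ∈ completePartiteEdges n (q + 1) t := by
  obtain ⟨j, x⟩ := z
  obtain ⟨hj, hx⟩ : j < n / q ∧ x.1.val / q < j := mem_specialIndex.1 hz
  have hjq : j * q + q ≤ n := by
    have := (Nat.le_div_iff_mul_le hq).1 hj
    rwa [Nat.succ_mul] at this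
  refine mem_completePartiteEdges.2 ⟨?_, fun a ha b hb hab =>
    Prod.ext hab ((snd_eq_of_mem_blockEdge ha).trans (snd_eq_of_mem_blockEdge hb).symm)⟩
  have hxnot : x ∉ (univ.filter fun p : Fin n => p.val / q = j).image (·, x.2) := by
    simp only [mem_image, mem_filter, mem_univ, true_and, not_exists, not_and]
    intro p hp h
    obtain rfl : p = x.1 := congrArg Prod.fst h
    omega
  rw [blockEdge, card_insert_of_notMem hxnot, card_image_of_injective _ (Prod.mk_left_injective _),
    card_filter_val_div_eq hq]
  omega

lemma specialEdges_subset (hq : 0 < q) : specialEdges n t q ⊆ completePartiteEdges n (q + 1) t := by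
  intro e he
  obtain ⟨z, hz, rfl⟩ := mem_image.1 he
  exact blockEdge_mem_completePartiteEdges hq hz

lemma blockEdge_injOn (hq : 0 < q) :
    Set.InjOn (blockEdge q) (specialIndex n t q : Set (ℕ × (Fin n × Fin t))) := by
  have hle : ∀ z ∈ specialIndex n t q, ∀ z' ∈ specialIndex n t q,
      blockEdge q z = blockEdge q z' → z.1 ≤ z'.1 := by
    rintro ⟨j, x⟩ hz ⟨j', x'⟩ hz' heq
    obtain ⟨a, ha, rfl⟩ := exists_mem_blockEdge_div_eq hq (mem_specialIndex.1 hz).1 x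
    exact div_le_of_mem_blockEdge (mem_specialIndex.1 hz').2 (heq ▸ ha)
  rintro ⟨j, x⟩ hz ⟨j', x'⟩ hz' heq
  obtain rfl : j = j' := le_antisymm (hle _ hz _ hz' heq) (hle _ hz' _ hz heq.symm)
  have hx : x ∈ blockEdge q (j, x') := heq ▸ mem_blockEdge.2 (Or.inl rfl)
  rcases mem_blockEdge.1 hx with rfl | ⟨h, -⟩
  · rfl
  · exact absurd h (mem_specialIndex.1 hz).2.ne

/-- A vertex of block `i < m` is the extra vertex of `m - i - 1` weight-two edges and lies in the
block of `i q` others. -/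
def specialCount (m q i : ℕ) : ℕ := (m - (i + 1)) + if i < m then i * q else 0

lemma card_filter_mem_blockEdge (hq : 0 < q) (a : Fin n × Fin t) :
    #{z ∈ specialIndex n t q | a ∈ blockEdge q z} = specialCount (n / q) q (a.1.val / q) := by
  generalize hi : a.1.val / q = i
  have hsplit : {z ∈ specialIndex n t q | a ∈ blockEdge q z} =
      (Ioo i (n / q)).image (·, a) ∪
        (univ.filter fun p : Fin n => p.val / q < i ∧ i < n / q).image fun p => (i, (p, a.2)) := by
    ext ⟨j, x⟩
    simp only [mem_filter, mem_specialIndex, mem_blockEdge, mem_union, mem_image, mem_Ioo,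
      mem_univ, true_and, Prod.mk.injEq]
    constructor
    · rintro ⟨⟨hj, hx⟩, rfl | ⟨rfl, hc⟩⟩
      · exact Or.inl ⟨j, ⟨hi ▸ hx, hj⟩, rfl, rfl⟩
      · exact Or.inr ⟨x.1, ⟨hi ▸ hx, hi ▸ hj⟩, hi.symm, Prod.ext rfl hc⟩
    · rintro (⟨j, ⟨hij, hj⟩, rfl, rfl⟩ | ⟨p, ⟨hp, him⟩, rfl, rfl⟩)
      · exact ⟨⟨hj, hi ▸ hij⟩, Or.inl rfl⟩
      · exact ⟨⟨him, hp⟩, Or.inr ⟨hi, rfl⟩⟩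
  have hdisj : Disjoint ((Ioo i (n / q)).image (·, a))
      ((univ.filter fun p : Fin n => p.val / q < i ∧ i < n / q).image fun p => (i, (p, a.2))) := by
    simp only [disjoint_left, mem_image, mem_Ioo, not_exists, not_and]
    rintro _ ⟨j, hj, rfl⟩ p - h
    exact hj.1.ne (congrArg Prod.fst h)
  rw [hsplit, card_union_of_disjoint hdisj, card_image_of_injective _ (Prod.mk_left_injective a),
    card_image_of_injective (f := fun p : Fin n => (i, (p, a.2))) _
      ((Prod.mk_right_injective i).comp (Prod.mk_left_injective a.2)),
    Nat.card_Ioo, specialCount, Nat.sub_sub]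
  congr 1
  split_ifs with him
  · have hiq : i * q ≤ n := (Nat.le_div_iff_mul_le hq).1 him.le
    simp only [him, and_true, Nat.div_lt_iff_lt_mul hq, Fin.card_filter_val_lt]
    omega
  · simp [him]

lemma card_filter_mem_specialEdges (hq : 0 < q) (a : Fin n × Fin t) :
    #{e ∈ specialEdges n t q | a ∈ e} = specialCount (n / q) q (a.1.val / q) := by
  rw [specialEdges, filter_image,
    card_image_of_injOn ((blockEdge_injOn hq).mono (coe_subset.2 (filter_subset _ _))),
    card_filter_mem_blockEdge hq]

lemma specialCount_ne_of_lt {m : ℕ} (hq : 2 ≤ q) (hm : 2 ≤ m) {i i' : ℕ} (hii' : i < i')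
    (hi' : i' ≤ m) : specialCount m q i ≠ specialCount m q i' := by
  have hsplit : i * q + (i' - i) * q = i' * q := by rw [← Nat.add_mul, Nat.add_sub_cancel' hii'.le]
  have hgap : (i' - i) * 2 ≤ (i' - i) * q := Nat.mul_le_mul_left _ hq
  have hpos : i = 0 ∧ i * q = 0 ∨ q ≤ i * q := by
    rcases i.eq_zero_or_pos with rfl | h
    exacts [Or.inl ⟨rfl, zero_mul q⟩, Or.inr (Nat.le_mul_of_pos_left q h)]
  unfold specialCount
  split_ifs <;> omega

lemma specialCount_injOn {m : ℕ} (hq : 2 ≤ q) (hm : 2 ≤ m) :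
    Set.InjOn (specialCount m q) (Set.Iic m) := by
  intro i hi i' hi' h
  rcases lt_trichotomy i i' with hlt | heq | hgt
  · exact absurd h (specialCount_ne_of_lt hq hm hlt hi')
  · exact heq
  · exact absurd h.symm (specialCount_ne_of_lt hq hm hgt hi)

lemma exists_div_ne_of_mem_completePartiteEdges (hq : 0 < q) {e : Finset (Fin n × Fin t)}
    (he : e ∈ completePartiteEdges n (q + 1) t) :
    ∃ u ∈ e, ∃ v ∈ e, u.1.val / q ≠ v.1.val / q := by
  obtain ⟨hcard, hinj⟩ := mem_completePartiteEdges.1 he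
  obtain ⟨a, ha⟩ : e.Nonempty := card_pos.1 (by omega)
  by_contra! hsame
  have hsub : e.image Prod.fst ⊆ univ.filter fun p : Fin n => p.val / q = a.1.val / q := by
    intro p hp
    obtain ⟨u, hu, rfl⟩ := mem_image.1 hp
    exact mem_filter.2 ⟨mem_univ _, hsame u hu a ha⟩
  have := card_le_card hsub
  rw [card_image_of_injOn hinj, hcard, card_filter_val_div_eq hq] at this
  omega

lemma exists_card_filter_mem_specialEdges_ne (hq : 2 ≤ q) (hm : 2 ≤ n / q)
    {e : Finset (Fin n × Fin t)} (he : e ∈ completePartiteEdges n (q + 1) t) :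
    ∃ u ∈ e, ∃ v ∈ e, #{f ∈ specialEdges n t q | u ∈ f} ≠ #{f ∈ specialEdges n t q | v ∈ f} := by
  obtain ⟨u, hu, v, hv, huv⟩ := exists_div_ne_of_mem_completePartiteEdges (by omega) he
  refine ⟨u, hu, v, hv, ?_⟩
  rw [card_filter_mem_specialEdges (by omega), card_filter_mem_specialEdges (by omega)]
  exact (specialCount_injOn hq hm).ne (Nat.div_le_div_right u.1.isLt.le)
    (Nat.div_le_div_right v.1.isLt.le) huv

end Blocks

/-- For `r ≥ 3`, `t ≥ 1` and `n > 2(r-1)²`, `χ^e(K_n^r(t)) = 2`. -/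
theorem chiE_completePartiteHypergraph (n r t : ℕ) (hr : 3 ≤ r) (ht : 1 ≤ t)
    (hn : 2 * (r - 1) ^ 2 < n) :
    IsLeast {k : ℕ | 0 < k ∧ HasNSDEdgeWeighting (completePartiteEdges n r t) k} 2 := by
  obtain ⟨q, rfl⟩ : ∃ q, r = q + 1 := ⟨r - 1, by omega⟩
  rw [Nat.add_sub_cancel] at hn
  have hq : 2 ≤ q := by omega
  have hm : 2 ≤ n / q := (Nat.le_div_iff_mul_le (by omega)).2 (by nlinarith)
  have hreg := card_filter_mem_completePartiteEdges_eq (n := n) (r := q + 1) (t := t)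
  refine ⟨⟨two_pos, hasNSDEdgeWeighting_two_of_subset (specialEdges_subset (by omega)) hreg
    fun e he _ => exists_card_filter_mem_specialEdges_ne hq hm he⟩, ?_⟩
  rintro k ⟨hk, hkE⟩
  by_contra! hk2
  obtain rfl : k = 1 := by omega
  obtain ⟨e, he⟩ := completePartiteEdges_nonempty (n := n) (r := q + 1) (by nlinarith) ht
  exact not_hasNSDEdgeWeighting_one hreg he (by rw [(mem_completePartiteEdges.1 he).1]; omega) hkE
end

section
/- Let r be an even integer, t = r/2, and let P = P_{n,t}^{(r)} be the r-uniform t-tight path of length ℓ > 2. Then χ^e(P) = 2. -/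
open Finset

/-- The edge set of the `r`-uniform `t`-tight path of length `ℓ`, on vertex set
`Fin (ℓ*(r-t)+t)`: the `i`-th edge (`i : Fin ℓ`) consists of the `r` consecutive
vertices starting at position `i*(r-t)` (0-indexed). -/
def tightPathEdges (r t ℓ : ℕ) : Finset (Finset (Fin (ℓ * (r - t) + t))) :=
  (Finset.univ : Finset (Fin ℓ)).image (fun i : Fin ℓ =>
    Finset.univ.filter (fun v : Fin (ℓ * (r - t) + t) =>
      (i : ℕ) * (r - t) ≤ (v : ℕ) ∧ (v : ℕ) < (i : ℕ) * (r - t) + r))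

def W (i : ℕ) : ℕ := if i % 4 < 2 then 1 else 2

lemma W_pos (i : ℕ) : 1 ≤ W i := by unfold W; split_ifs <;> omega
lemma W_le (i : ℕ) : W i ≤ 2 := by unfold W; split_ifs <;> omega
lemma W_ne (i : ℕ) : W i ≠ W (i + 2) := by
  unfold W; split_ifs with h1 h2 h2 <;> omega

/-- For `r` even, `t = r/2`, and the `r`-uniform `t`-tight path `P` of length
`ℓ > 2`, `χ^e(P) = 2`. -/
theorem chiE_tightPath_half (r t ℓ : ℕ) (ht : 1 ≤ t) (hrt : r = 2 * t) (hl : 2 < ℓ) :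
    IsLeast {k : ℕ | 0 < k ∧ HasNSDEdgeWeighting (tightPathEdges r t ℓ) k} 2 := by
  classical
  have htt : r - t = t := by omega
  have hr2 : r = t + t := by omega
  set n := ℓ * (r - t) + t with hn
  have hnt : n = ℓ * t + t := by rw [hn, htt]
  -- the edge as a function of a natural block index
  set g : ℕ → Finset (Fin n) := fun j =>
    Finset.univ.filter (fun v : Fin n => j * t ≤ (v : ℕ) ∧ (v : ℕ) < j * t + (t + t)) with hg
  have hmemg : ∀ (j : ℕ) (v : Fin n), v ∈ g j ↔ (j * t ≤ (v : ℕ) ∧ (v : ℕ) < j * t + (t + t)) := by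
    intro j v; simp [hg]
  have hE : tightPathEdges r t ℓ = Finset.univ.image (fun i : Fin ℓ => g (i : ℕ)) := by
    unfold tightPathEdges
    apply Finset.image_congr
    intro i _
    apply Finset.filter_congr
    intro v _
    have hvri : (i:ℕ) * (r - t) = (i:ℕ) * t := by rw [htt]
    rw [hvri]
    omega
  -- vertex existence
  have hvx : ∀ j : ℕ, j ≤ ℓ → j * t < n := by
    intro j hj
    have : j * t ≤ ℓ * t := Nat.mul_le_mul_right t hj
    omega
  -- membership of base point
  have hbase : ∀ (j : ℕ) (hj : j ≤ ℓ - 1), (⟨j * t, hvx j (by omega)⟩ : Fin n) ∈ g j := by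
    intro j hj
    rw [hmemg]
    constructor
    · exact le_refl _
    · simp; omega
  -- injectivity
  have hinj : ∀ i j : ℕ, i < ℓ → j < ℓ → g i = g j → i = j := by
    intro i j hi hj hgij
    by_contra hne
    rcases Nat.lt_or_ge i j with h | h
    · have hm := hbase i (by omega)
      rw [hgij, hmemg] at hm
      have : j * t ≤ i * t := hm.1
      have : j * t ≤ i * t → j ≤ i := fun hh => Nat.le_of_mul_le_mul_right (by simpa [Nat.mul_comm] using hh) ht
      omega
    · have h' : j < i := by omega
      have hm := hbase j (by omega)
      rw [← hgij, hmemg] at hm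
      have : i * t ≤ j * t := hm.1
      have : i * t ≤ j * t → i ≤ j := fun hh => Nat.le_of_mul_le_mul_right (by simpa [Nat.mul_comm] using hh) ht
      omega
  -- sigma as a sum over Fin ℓ
  have hsum : ∀ (w : Finset (Fin n) → ℕ) (v : Fin n),
      sigmaE (tightPathEdges r t ℓ) w v
        = ∑ i ∈ Finset.univ.filter (fun i : Fin ℓ => v ∈ g (i : ℕ)), w (g (i : ℕ)) := by
    intro w v
    unfold sigmaE
    rw [hE]
    refine (Finset.sum_congr
      (s₂ := (Finset.univ.filter (fun i : Fin ℓ => v ∈ g (i:ℕ))).image (fun i : Fin ℓ => g (i:ℕ)))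
      ?_ (fun _ _ => rfl)).trans ?_
    · ext e
      simp only [Finset.mem_filter, Finset.mem_image, Finset.mem_univ, true_and]
      constructor
      · rintro ⟨⟨i, rfl⟩, hv⟩; exact ⟨i, hv, rfl⟩
      · rintro ⟨i, hv, rfl⟩; exact ⟨⟨i, rfl⟩, hv⟩
    · rw [Finset.sum_image (fun i _ j _ hij => Fin.ext (hinj i j i.isLt j.isLt hij))]
  have htpos : 0 < t := ht
  -- membership condition via block index
  have hlt : ∀ (i : ℕ) (v : Fin n), v ∈ g i ↔ (i ≤ (v:ℕ)/t ∧ (v:ℕ)/t < i + 2) := by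
    intro i v
    rw [hmemg]
    constructor
    · rintro ⟨h1, h2⟩
      constructor
      · exact (Nat.le_div_iff_mul_le htpos).2 h1
      · refine (Nat.div_lt_iff_lt_mul htpos).2 ?_
        calc (v:ℕ) < i * t + (t + t) := h2
        _ = (i + 2) * t := by ring
    · rintro ⟨h1, h2⟩
      constructor
      · exact (Nat.le_div_iff_mul_le htpos).1 h1
      · have := (Nat.div_lt_iff_lt_mul htpos).1 h2
        calc (v:ℕ) < (i + 2) * t := this
        _ = i * t + (t + t) := by ring
  have hbl : ∀ v : Fin n, (v:ℕ)/t ≤ ℓ := by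
    intro v
    have hv : (v:ℕ) < (ℓ + 1) * t := by
      have := v.isLt
      have : (v:ℕ) < ℓ * (r - t) + t := this
      rw [htt] at this
      calc (v:ℕ) < ℓ * t + t := this
      _ = (ℓ + 1) * t := by ring
    have := (Nat.div_lt_iff_lt_mul htpos).2 hv
    omega
  -- the sigma formula
  have hsig : ∀ (w : Finset (Fin n) → ℕ) (v : Fin n),
      sigmaE (tightPathEdges r t ℓ) w v
        = (if 1 ≤ (v:ℕ)/t then w (g ((v:ℕ)/t - 1)) else 0)
          + (if (v:ℕ)/t < ℓ then w (g ((v:ℕ)/t)) else 0) := by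
    intro w v
    rw [hsum]
    set b := (v:ℕ)/t with hb
    have hbl' : b ≤ ℓ := hbl v
    rcases Nat.eq_zero_or_pos b with hb0 | hb1
    · have hfil : Finset.univ.filter (fun i : Fin ℓ => v ∈ g (i:ℕ)) = {(⟨0, by omega⟩ : Fin ℓ)} := by
        ext i
        simp only [Finset.mem_filter, Finset.mem_univ, true_and, Finset.mem_singleton, Fin.ext_iff]
        rw [hlt]
        omega
      rw [hfil, Finset.sum_singleton, if_neg (by omega), if_pos (by omega : b < ℓ)]
      simp [hb0]
    · rcases Nat.lt_or_ge b ℓ with hbℓ | hbℓ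
      · have hfil : Finset.univ.filter (fun i : Fin ℓ => v ∈ g (i:ℕ))
            = {(⟨b - 1, by omega⟩ : Fin ℓ), (⟨b, hbℓ⟩ : Fin ℓ)} := by
          ext i
          simp only [Finset.mem_filter, Finset.mem_univ, true_and, Finset.mem_insert,
            Finset.mem_singleton, Fin.ext_iff]
          rw [hlt]
          omega
        rw [hfil, Finset.sum_pair (by simp [Fin.ext_iff]; omega), if_pos (by omega : 1 ≤ b), if_pos hbℓ]
      · have hbeq : b = ℓ := by omega
        have hfil : Finset.univ.filter (fun i : Fin ℓ => v ∈ g (i:ℕ))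
            = {(⟨b - 1, by omega⟩ : Fin ℓ)} := by
          ext i
          simp only [Finset.mem_filter, Finset.mem_univ, true_and, Finset.mem_singleton, Fin.ext_iff]
          rw [hlt]
          omega
        rw [hfil, Finset.sum_singleton, if_pos (by omega : 1 ≤ b), if_neg (by omega)]
        simp
  have hgE : ∀ j : ℕ, j < ℓ → g j ∈ tightPathEdges r t ℓ := by
    intro j hj
    rw [hE, Finset.mem_image]
    exact ⟨⟨j, hj⟩, Finset.mem_univ _, rfl⟩
  have hgne : ∀ (j : ℕ) (hj : j < ℓ), (g j).Nonempty := by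
    intro j hj
    exact ⟨_, hbase j (by omega)⟩
  -- the weighting
  set w0 : Finset (Fin n) → ℕ :=
    fun e => if h : e.Nonempty then W (((e.min' h : Fin n) : ℕ) / t) else 1 with hw0def
  have hw0 : ∀ j : ℕ, j < ℓ → w0 (g j) = W j := by
    intro j hj
    have hne := hgne j hj
    have hmin : (g j).min' hne = (⟨j * t, hvx j (le_of_lt hj)⟩ : Fin n) := by
      refine le_antisymm (Finset.min'_le _ _ (hbase j (by omega))) (Finset.le_min' _ _ _ ?_)
      intro y hy
      rw [Fin.le_def]
      exact ((hmemg j y).1 hy).1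
    rw [hw0def]
    simp only [dif_pos hne, hmin]
    rw [Nat.mul_div_cancel j htpos]
  -- sigma at base points under w0
  have hsigbase : ∀ (j : ℕ) (hj : j ≤ ℓ),
      sigmaE (tightPathEdges r t ℓ) w0 ⟨j * t, hvx j hj⟩
        = (if 1 ≤ j then W (j - 1) else 0) + (if j < ℓ then W j else 0) := by
    intro j hj
    rw [hsig]
    rw [show ((⟨j * t, hvx j hj⟩ : Fin n) : ℕ) = j * t from rfl, Nat.mul_div_cancel j htpos]
    by_cases h1 : 1 ≤ j
    · rw [if_pos h1, if_pos h1, hw0 (j - 1) (by omega)]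
      by_cases h2 : j < ℓ
      · rw [if_pos h2, if_pos h2, hw0 j h2]
      · rw [if_neg h2, if_neg h2]
    · rw [if_neg h1, if_neg h1]
      by_cases h2 : j < ℓ
      · rw [if_pos h2, if_pos h2, hw0 j h2]
      · rw [if_neg h2, if_neg h2]
  constructor
  · -- 2 is in the set
    refine ⟨by norm_num, w0, ?_, ?_⟩
    · intro e he
      rw [hE, Finset.mem_image] at he
      obtain ⟨i, -, rfl⟩ := he
      rw [hw0 (i : ℕ) i.isLt]
      exact ⟨W_pos _, W_le _⟩
    · intro e he _
      rw [hE, Finset.mem_image] at he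
      obtain ⟨i, -, rfl⟩ := he
      have hj : (i : ℕ) < ℓ := i.isLt
      set j := (i : ℕ) with hjd
      have hjt : (j + 1) * t = j * t + t := by ring
      refine ⟨⟨j * t, hvx j (le_of_lt hj)⟩, hbase j (by omega),
        ⟨(j + 1) * t, hvx (j + 1) (by omega)⟩, ?_, ?_⟩
      · rw [hmemg]
        show j * t ≤ (j + 1) * t ∧ (j + 1) * t < j * t + (t + t)
        omega
      · rw [hsigbase j (le_of_lt hj), hsigbase (j + 1) (by omega),
          if_pos (by omega : 1 ≤ j + 1), if_pos hj]
        simp only [Nat.add_sub_cancel]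
        by_cases h1 : 1 ≤ j
        · rw [if_pos h1]
          by_cases h2 : j + 1 < ℓ
          · rw [if_pos h2]
            have hWe : W (j - 1) ≠ W (j + 1) := by
              have h := W_ne (j - 1)
              rwa [show j - 1 + 2 = j + 1 from by omega] at h
            omega
          · rw [if_neg h2]
            have := W_pos (j - 1)
            omega
        · rw [if_neg h1, if_pos (by omega : j + 1 < ℓ)]
          have := W_pos (j + 1)
          omega
  · -- 2 is a lower bound
    rintro k ⟨hk0, w, hwb, hwp⟩
    by_contra hklt
    push_neg at hklt
    have hk1 : k = 1 := by omega
    have hwall : ∀ j : ℕ, j < ℓ → w (g j) = 1 := by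
      intro j hj
      have := hwb (g j) (hgE j hj)
      omega
    have hcard : 2 ≤ (g 1).card := by
      rw [Nat.succ_le_iff, Finset.one_lt_card_iff]
      refine ⟨⟨1 * t, hvx 1 (by omega)⟩, ⟨2 * t, hvx 2 (by omega)⟩,
        hbase 1 (by omega), ?_, ?_⟩
      · rw [hmemg]
        show 1 * t ≤ 2 * t ∧ 2 * t < 1 * t + (t + t)
        omega
      · simp only [ne_eq, Fin.mk.injEq]; omega
    obtain ⟨u, hu, v, hv, hne⟩ := hwp (g 1) (hgE 1 (by omega)) hcard
    have hsig2 : ∀ x : Fin n, x ∈ g 1 → sigmaE (tightPathEdges r t ℓ) w x = 2 := by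
      intro x hx
      rw [hlt] at hx
      rw [hsig, if_pos (by omega : 1 ≤ (x:ℕ)/t), if_pos (by omega : (x:ℕ)/t < ℓ),
        hwall ((x:ℕ)/t - 1) (by omega), hwall ((x:ℕ)/t) (by omega)]
    exact hne (by rw [hsig2 u hu, hsig2 v hv])
end

section
/- Let 1 ≤ t < r be integers with t > r/2 and with r−t dividing r, and let P = P_{n,t}^{(r)} be the r-uniform t-tight path of length ℓ, where ℓ > 2 and ℓ ≥ 2r/(r−t) − 1. Then χ^e(P) = 2. -/
open Finset

/-!
Write `s = r - t` and `r = m s`, so `m ≥ 2` and the vertices split into blocks `⌊v / s⌋` of `s`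
consecutive vertices; the `i`-th edge is the union of blocks `i, …, i + m - 1`. Hence `σ(v)` depends
only on the block `b` of `v`: it is the total weight of the edges `i ∈ [b + 1 - m, b]`, a sliding
window sum. With all weights `1`, every vertex of edge `m - 1` lies in exactly `m` edges, since
`ℓ ≥ 2m - 1`, so one weight does not suffice. With weights `1, 2` alternating in runs of length `m`,
moving the window from block `b` to block `b + 1` adds the weight of edge `b + 1` and drops the
different weight of edge `b + 1 - m` (at the ends of the path it only adds or only drops one), so
the first two blocks of every edge receive different colours.
-/

open Function

lemma sigmaE_image {ι V : Type*} [Fintype ι] [Fintype V] [DecidableEq V] {f : ι → Finset V}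
    (hf : Injective f) (w : Finset V → ℕ) (v : V) :
    sigmaE (univ.image f) w v = ∑ i with v ∈ f i, w (f i) := by
  rw [sigmaE, ← sum_image hf.injOn]
  congr 1
  ext e
  simp only [mem_filter, mem_image, mem_univ, true_and]
  exact ⟨fun ⟨⟨i, hi⟩, hv⟩ => ⟨i, hi ▸ hv, hi⟩, fun ⟨i, hv, hi⟩ => ⟨⟨i, hi⟩, hi ▸ hv⟩⟩

lemma isLeast_setOf_hasNSDEdgeWeighting_two {V : Type*} [Fintype V] {E : Finset (Finset V)}
    (h2 : HasNSDEdgeWeighting E 2) (h1 : ¬ HasNSDEdgeWeighting E 1) :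
    IsLeast {k : ℕ | 0 < k ∧ HasNSDEdgeWeighting E k} 2 := by
  refine ⟨⟨two_pos, h2⟩, fun k ⟨hk, hkE⟩ => ?_⟩
  by_contra! hk2
  obtain rfl : k = 1 := by omega
  exact h1 hkE

def windowSum (W : ℕ → ℕ) (m ℓ b : ℕ) : ℕ :=
  ∑ k ∈ Ico (b + 1 - m) (min (b + 1) ℓ), W k

lemma windowSum_one {m ℓ b : ℕ} (hmb : m ≤ b + 1) (hbℓ : b + 1 ≤ ℓ) :
    windowSum (fun _ => 1) m ℓ b = m := by
  rw [windowSum, sum_const, smul_eq_mul, mul_one, Nat.card_Ico]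
  omega

lemma windowSum_succ_ne {W : ℕ → ℕ} {m ℓ b : ℕ} (hW : ∀ k, W (k + m) ≠ W k)
    (hW_pos : ∀ k, 0 < W k) (hmℓ : m ≤ ℓ) (hbℓ : b < ℓ) :
    windowSum W m ℓ (b + 1) ≠ windowSum W m ℓ b := by
  have hm : m ≠ 0 := by
    rintro rfl
    exact hW 0 rfl
  rw [windowSum, windowSum]
  rcases lt_or_ge (b + 1) m with hbm | hmb
  · rw [show b + 1 + 1 - m = b + 1 - m by omega, min_eq_left (by omega),
      min_eq_left (by omega), sum_Ico_succ_top (by omega)]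
    exact (Nat.lt_add_of_pos_right (hW_pos _)).ne'
  obtain ⟨a, ha⟩ : ∃ a, b + 1 - m = a := ⟨_, rfl⟩
  rw [show b + 1 + 1 - m = a + 1 by omega, ha]
  rcases (by omega : b + 1 < ℓ ∨ b + 1 = ℓ) with hlt | heq
  · have hW' : W (b + 1) ≠ W a := by
      rw [show b + 1 = a + m by omega]
      exact hW a
    have hslide : ∑ k ∈ Ico a (b + 1), W k + W (b + 1) =
        W a + ∑ k ∈ Ico (a + 1) (b + 1 + 1), W k := by
      rw [← sum_Ico_succ_top (by omega), sum_eq_sum_Ico_succ_bot (by omega)]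
    rw [min_eq_left (by omega), min_eq_left (by omega)]
    omega
  · rw [min_eq_right (by omega), min_eq_right heq.ge,
      sum_eq_sum_Ico_succ_bot (a := a) (by omega)]
    exact (Nat.lt_add_of_pos_left (hW_pos _)).ne

def alternatingWeight (m k : ℕ) : ℕ := 1 + k / m % 2

lemma alternatingWeight_pos (m k : ℕ) : 0 < alternatingWeight m k := Nat.add_pos_left one_pos _

lemma alternatingWeight_le_two (m k : ℕ) : alternatingWeight m k ≤ 2 := by
  have := Nat.mod_lt (k / m) two_pos
  rw [alternatingWeight]
  omega

lemma alternatingWeight_add_ne {m : ℕ} (hm : 0 < m) (k : ℕ) :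
    alternatingWeight m (k + m) ≠ alternatingWeight m k := by
  rw [alternatingWeight, alternatingWeight, Nat.add_div_right k hm]
  omega

namespace TightPath

def edge (r t ℓ : ℕ) (i : Fin ℓ) : Finset (Fin (ℓ * (r - t) + t)) :=
  univ.filter fun v => (i : ℕ) * (r - t) ≤ v ∧ (v : ℕ) < i * (r - t) + r

variable {r t ℓ m : ℕ}

lemma tightPathEdges_eq : tightPathEdges r t ℓ = univ.image (edge r t ℓ) := rfl

lemma mem_tightPathEdges {e : Finset (Fin (ℓ * (r - t) + t))} :
    e ∈ tightPathEdges r t ℓ ↔ ∃ i, edge r t ℓ i = e := by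
  simp [tightPathEdges_eq]

lemma edge_mem_tightPathEdges (i : Fin ℓ) : edge r t ℓ i ∈ tightPathEdges r t ℓ :=
  mem_tightPathEdges.2 ⟨i, rfl⟩

lemma mem_edge_iff (hs : 0 < r - t) (hr : r = m * (r - t)) {i : Fin ℓ}
    {v : Fin (ℓ * (r - t) + t)} :
    v ∈ edge r t ℓ i ↔ (i : ℕ) ≤ v / (r - t) ∧ (v : ℕ) / (r - t) < i + m := by
  rw [edge, mem_filter, Nat.le_div_iff_mul_le hs, Nat.div_lt_iff_lt_mul hs, add_mul, ← hr]
  simp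

lemma exists_mem_edge_div_eq (hs : 0 < r - t) (hr : r = m * (r - t)) {i : Fin ℓ} {b : ℕ}
    (hib : (i : ℕ) ≤ b) (hbi : b < i + m) :
    ∃ v ∈ edge r t ℓ i, (v : ℕ) / (r - t) = b := by
  have hv : b * (r - t) < ℓ * (r - t) + t := by
    have hb : (b + 1) * (r - t) ≤ (ℓ + (m - 1)) * (r - t) := Nat.mul_le_mul_right _ (by omega)
    rw [add_mul, add_mul, Nat.sub_one_mul, ← hr] at hb
    omega
  refine ⟨⟨b * (r - t), hv⟩, ?_, Nat.mul_div_cancel b hs⟩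
  rw [mem_edge_iff hs hr, Nat.mul_div_cancel b hs]
  exact ⟨hib, hbi⟩

lemma edge_injective (hs : 0 < r - t) (hr : r = m * (r - t)) : Injective (edge r t ℓ) := by
  have hm : 0 < m := Nat.pos_of_ne_zero (by rintro rfl; omega)
  intro i j hij
  obtain ⟨u, hu, hui⟩ := exists_mem_edge_div_eq hs hr (le_refl (i : ℕ)) (by omega)
  obtain ⟨v, hv, hvj⟩ := exists_mem_edge_div_eq hs hr (le_refl (j : ℕ)) (by omega)
  rw [hij, mem_edge_iff hs hr, hui] at hu
  rw [← hij, mem_edge_iff hs hr, hvj] at hv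
  exact Fin.ext (by omega)

lemma sigmaE_tightPathEdges (hs : 0 < r - t) (hr : r = m * (r - t)) (W : ℕ → ℕ)
    {w : Finset (Fin (ℓ * (r - t) + t)) → ℕ} (hw : ∀ i, w (edge r t ℓ i) = W i)
    (v : Fin (ℓ * (r - t) + t)) :
    sigmaE (tightPathEdges r t ℓ) w v = windowSum W m ℓ (v / (r - t)) := by
  rw [tightPathEdges_eq, sigmaE_image (edge_injective hs hr)]
  simp_rw [mem_edge_iff hs hr, hw]
  rw [sum_filter, Fin.sum_univ_eq_sum_range
    (fun k => if k ≤ (v : ℕ) / (r - t) ∧ (v : ℕ) / (r - t) < k + m then W k else 0),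
    ← sum_filter, windowSum]
  congr 1
  ext k
  simp only [mem_filter, mem_range, mem_Ico]
  omega

lemma hasNSDEdgeWeighting_two (hs : 0 < r - t) (hr : r = m * (r - t)) (hm : 2 ≤ m)
    (hmℓ : m ≤ ℓ) : HasNSDEdgeWeighting (tightPathEdges r t ℓ) 2 := by
  set w := extend (edge r t ℓ) (fun i => alternatingWeight m i) fun _ => 1
  have hw (i : Fin ℓ) : w (edge r t ℓ i) = alternatingWeight m i :=
    (edge_injective hs hr).extend_apply _ _ i
  refine ⟨w, fun e he => ?_, fun e he _ => ?_⟩ <;> obtain ⟨i, rfl⟩ := mem_tightPathEdges.1 he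
  · exact hw i ▸ ⟨alternatingWeight_pos m i, alternatingWeight_le_two m i⟩
  obtain ⟨u, hu, hui⟩ := exists_mem_edge_div_eq hs hr (le_refl (i : ℕ)) (by omega)
  obtain ⟨v, hv, hvi⟩ := exists_mem_edge_div_eq hs hr (Nat.le_succ (i : ℕ)) (by omega)
  refine ⟨v, hv, u, hu, ?_⟩
  rw [sigmaE_tightPathEdges hs hr _ hw, sigmaE_tightPathEdges hs hr _ hw, hui, hvi]
  exact windowSum_succ_ne (alternatingWeight_add_ne (by omega)) (alternatingWeight_pos m) hmℓ
    i.isLt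

lemma not_hasNSDEdgeWeighting_one (hs : 0 < r - t) (hr : r = m * (r - t)) (hm : 2 ≤ m)
    (hmℓ : 2 * m - 1 ≤ ℓ) : ¬ HasNSDEdgeWeighting (tightPathEdges r t ℓ) 1 := by
  rintro ⟨w, hw_one, hproper⟩
  have hw (i : Fin ℓ) : w (edge r t ℓ i) = 1 :=
    le_antisymm (hw_one _ (edge_mem_tightPathEdges i)).2 (hw_one _ (edge_mem_tightPathEdges i)).1
  obtain ⟨i, hi⟩ : ∃ i : Fin ℓ, (i : ℕ) = m - 1 := ⟨⟨m - 1, by omega⟩, rfl⟩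
  have hσ : ∀ v ∈ edge r t ℓ i, sigmaE (tightPathEdges r t ℓ) w v = m := by
    intro v hv
    rw [mem_edge_iff hs hr] at hv
    rw [sigmaE_tightPathEdges hs hr (fun _ => 1) hw]
    exact windowSum_one (by omega) (by omega)
  obtain ⟨u, hu, hui⟩ := exists_mem_edge_div_eq hs hr (le_refl (i : ℕ)) (by omega)
  obtain ⟨v, hv, hvi⟩ := exists_mem_edge_div_eq hs hr (Nat.le_succ (i : ℕ)) (by omega)
  have hcard : 2 ≤ (edge r t ℓ i).card :=
    one_lt_card.2 ⟨u, hu, v, hv, fun huv => by rw [huv] at hui; omega⟩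
  obtain ⟨x, hx, y, hy, hxy⟩ := hproper _ (edge_mem_tightPathEdges i) hcard
  exact hxy ((hσ x hx).trans (hσ y hy).symm)

end TightPath

theorem chiE_tightPath_two_general (r t ℓ : ℕ) (ht : 1 ≤ t) (htr : t < r)
    (hdvd : (r - t) ∣ r) (hl' : 2 * (r / (r - t)) - 1 ≤ ℓ) :
    IsLeast {k : ℕ | 0 < k ∧ HasNSDEdgeWeighting (tightPathEdges r t ℓ) k} 2 := by
  have hs : 0 < r - t := by omega
  set m := r / (r - t)
  have hr : r = m * (r - t) := (Nat.div_mul_cancel hdvd).symm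
  have hm : 2 ≤ m := Nat.lt_of_mul_lt_mul_right (a := r - t) (by omega)
  exact isLeast_setOf_hasNSDEdgeWeighting_two
    (TightPath.hasNSDEdgeWeighting_two hs hr hm (by omega))
    (TightPath.not_hasNSDEdgeWeighting_one hs hr hm hl')

/-- For `1 ≤ t < r` with `t > r/2` and `r-t` dividing `r`, and the `r`-uniform
`t`-tight path `P` of length `ℓ`, where `ℓ > 2` and `ℓ ≥ 2r/(r-t) - 1`,
`χ^e(P) = 2`. -/
theorem chiE_tightPath_two (r t ℓ : ℕ) (ht : 1 ≤ t) (htr : t < r) (h2t : r < 2 * t)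
    (hdvd : (r - t) ∣ r) (hl : 2 < ℓ) (hl' : 2 * (r / (r - t)) - 1 ≤ ℓ) :
    IsLeast {k : ℕ | 0 < k ∧ HasNSDEdgeWeighting (tightPathEdges r t ℓ) k} 2 :=
  chiE_tightPath_two_general r t ℓ ht htr hdvd hl'
end

section
/- Let 1 ≤ t < r be integers and let P = P_{n,t}^{(r)} be the r-uniform t-tight path of length ℓ > 2. Suppose that t ≠ r/2, and that it is not the case that t > r/2, r−t divides r and ℓ ≥ 2r/(r−t) − 1. Then χ^e(P) = 1. -/
open Finset

def D (r d ℓ v : ℕ) : ℕ :=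
  ((Finset.range ℓ).filter (fun j => j * d ≤ v ∧ v < j * d + r)).card

lemma D_val {r d ℓ : ℕ} (hd : 0 < d) (hl : 0 < ℓ) (v a lo : ℕ)
    (ha1 : a * d ≤ v) (ha2 : v < a * d + d)
    (h1 : v < lo * d + r) (h2 : lo = 0 ∨ lo * d + r ≤ v + d) :
    D r d ℓ v = min a (ℓ - 1) + 1 - lo := by
  have e1 : ∀ j : ℕ, (j * d ≤ v ↔ j ≤ a) := by
    intro j
    constructor
    · intro h
      by_contra hx
      push_neg at hx
      have h3 : (a + 1) * d ≤ j * d := Nat.mul_le_mul_right d hx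
      have h4 : (a + 1) * d = a * d + d := by ring
      linarith
    · intro h
      have := Nat.mul_le_mul_right d h
      linarith
  have e2 : ∀ j : ℕ, (v < j * d + r ↔ lo ≤ j) := by
    intro j
    constructor
    · intro h
      by_contra hx
      push_neg at hx
      rcases h2 with h2 | h2
      · omega
      · have h3 : (j + 1) * d ≤ lo * d := Nat.mul_le_mul_right d hx
        have h4 : (j + 1) * d = j * d + d := by ring
        linarith
    · intro h
      have := Nat.mul_le_mul_right d h
      linarith
  have hset : (Finset.range ℓ).filter (fun j => j * d ≤ v ∧ v < j * d + r)
      = Finset.Icc lo (min a (ℓ - 1)) := by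
    ext j
    simp only [mem_filter, mem_range, mem_Icc, e1 j, e2 j]
    omega
  rw [D, hset, Nat.card_Icc]

lemma two_le_D {r d ℓ : ℕ} (v j1 j2 : ℕ) (hne : j1 ≠ j2)
    (h1 : j1 < ℓ ∧ j1 * d ≤ v ∧ v < j1 * d + r)
    (h2 : j2 < ℓ ∧ j2 * d ≤ v ∧ v < j2 * d + r) :
    2 ≤ D r d ℓ v := by
  apply Finset.one_lt_card.mpr
  exact ⟨j1, by simp only [mem_filter, mem_range]; tauto,
    j2, by simp only [mem_filter, mem_range]; tauto, hne⟩

/-- The key combinatorial fact: in edge `i` there are two vertices with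
distinct degrees. -/
lemma key_exists (r t d ℓ I : ℕ) (ht : 1 ≤ t) (hr : r = d + t) (hd : 0 < d)
    (hl : 2 < ℓ) (hI : I < ℓ) (hne : 2 * t ≠ r)
    (hnot : ¬(r < 2 * t ∧ d ∣ r ∧ 2 * (r / d) - 1 ≤ ℓ)) :
    ∃ a b : ℕ, (I * d ≤ a ∧ a < I * d + r) ∧ (I * d ≤ b ∧ b < I * d + r) ∧
      D r d ℓ a ≠ D r d ℓ b := by
  have hl0 : 0 < ℓ := by omega
  rcases Nat.lt_or_ge t d with htd | htd
  · -- Case A : t < d, i.e. 2t < r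
    rcases Nat.eq_zero_or_pos I with hI0 | hI1
    · subst hI0
      refine ⟨t, d, ⟨by omega, by omega⟩, ⟨by omega, by omega⟩, ?_⟩
      have hDa : D r d ℓ t = min 0 (ℓ - 1) + 1 - 0 :=
        D_val hd hl0 t 0 0 (by omega) (by omega) (by omega) (Or.inl rfl)
      have hDb : D r d ℓ d = min 1 (ℓ - 1) + 1 - 0 :=
        D_val hd hl0 d 1 0 (by omega) (by omega) (by omega) (Or.inl rfl)
      omega
    · obtain ⟨m, rfl⟩ : ∃ m, I = m + 1 := ⟨I - 1, by omega⟩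
      refine ⟨(m + 1) * d + t, (m + 1) * d,
        ⟨by omega, by omega⟩, ⟨by omega, by omega⟩, ?_⟩
      have hDa : D r d ℓ ((m + 1) * d + t) = min (m + 1) (ℓ - 1) + 1 - (m + 1) := by
        apply D_val hd hl0 _ (m + 1) (m + 1) (by omega) (by omega) (by omega)
        right; omega
      have hDb : D r d ℓ ((m + 1) * d) = min (m + 1) (ℓ - 1) + 1 - m := by
        apply D_val hd hl0 _ (m + 1) m (by omega) (by omega) ?_ ?_
        · have : m * d + d = (m + 1) * d := by ring
          omega
        · right
          have : m * d + d = (m + 1) * d := by ring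
          omega
      omega
  · -- Case B : d ≤ t, and 2t ≠ r forces d < t, i.e. 2d < r
    have htd' : d < t := by omega
    have hq2 : 2 * d < r := by omega
    have hdm := Nat.div_add_mod r d
    obtain ⟨q, hq⟩ : ∃ q, r / d = q := ⟨_, rfl⟩
    obtain ⟨s, hs⟩ : ∃ s, r % d = s := ⟨_, rfl⟩
    rw [hq] at hnot
    rw [hq, hs] at hdm
    have hrqs : r = q * d + s := by
      have hcomm : q * d = d * q := by ring
      omega
    have hsd : s < d := by
      have := Nat.mod_lt r hd
      omega
    have hq2' : 2 ≤ q := by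
      have h2 : 2 ≤ r / d := (Nat.le_div_iff_mul_le hd).mpr (by omega)
      omega
    rcases Nat.eq_zero_or_pos I with hI0 | hI1
    · subst hI0
      refine ⟨0, d, ⟨by omega, by omega⟩, ⟨by omega, by omega⟩, ?_⟩
      have hDa : D r d ℓ 0 = min 0 (ℓ - 1) + 1 - 0 :=
        D_val hd hl0 0 0 0 (by omega) (by omega) (by omega) (Or.inl rfl)
      have hDb : D r d ℓ d = min 1 (ℓ - 1) + 1 - 0 := by
        apply D_val hd hl0 d 1 0 (by omega) (by omega) ?_ (Or.inl rfl)
        have h2d : 2 * d ≤ q * d := Nat.mul_le_mul_right d hq2'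
        omega
      omega
    rcases Nat.lt_or_ge I (ℓ - 1) with hIl | hIl
    · -- middle edge : 1 ≤ I ≤ ℓ - 2
      rcases Nat.eq_zero_or_pos s with hs0 | hs1
      · -- B2 : d ∣ r
        have hdvd : d ∣ r := ⟨q, by omega⟩
        have hq3 : 3 ≤ q := by
          by_contra hx
          push_neg at hx
          have : q * d ≤ 2 * d := Nat.mul_le_mul_right d (by omega)
          omega
        have hlle : ℓ ≤ 2 * q - 2 := by
          by_contra hx
          exact hnot ⟨by omega, hdvd, by omega⟩
        obtain ⟨p, rfl⟩ : ∃ p, q = p + 1 := ⟨q - 1, by omega⟩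
        rcases Nat.lt_or_ge I p with hIp | hIp
        · -- I ≤ q - 2
          have e1 : (I + 1) * d = I * d + d := by ring
          have e2 : (I + 2) * d = I * d + d + d := by ring
          have e3 : (I + 2) * d ≤ (p + 1) * d := Nat.mul_le_mul_right d (by omega)
          refine ⟨I * d, (I + 1) * d, ⟨by omega, by omega⟩,
            ⟨by omega, by omega⟩, ?_⟩
          have hDa : D r d ℓ (I * d) = min I (ℓ - 1) + 1 - 0 := by
            apply D_val hd hl0 _ I 0 (by omega) (by omega) ?_ (Or.inl rfl)
            omega
          have hDb : D r d ℓ ((I + 1) * d) = min (I + 1) (ℓ - 1) + 1 - 0 := by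
            apply D_val hd hl0 _ (I + 1) 0 (by omega) (by omega) ?_ (Or.inl rfl)
            omega
          omega
        · -- I ≥ q - 1
          obtain ⟨m, rfl⟩ : ∃ m, I = p + m := ⟨I - p, by omega⟩
          refine ⟨(p + m) * d, (p + m) * d + r - 1, ⟨by omega, by omega⟩,
            ⟨by omega, by omega⟩, ?_⟩
          have hDa : D r d ℓ ((p + m) * d) = min (p + m) (ℓ - 1) + 1 - m := by
            apply D_val hd hl0 _ (p + m) m (by omega) (by omega) ?_ ?_
            · have : m * d + r = (p + m) * d + d := by rw [hrqs, hs0]; ring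
              omega
            · right
              have : m * d + r = (p + m) * d + d := by rw [hrqs, hs0]; ring
              omega
          have hDb : D r d ℓ ((p + m) * d + r - 1)
              = min (2 * p + m) (ℓ - 1) + 1 - (p + m) := by
            have hv1 : (p + m) * d + r - 1 + 1 = (2 * p + m) * d + d := by
              have h1 : (p + m) * d + r = (2 * p + m) * d + d := by
                rw [hrqs, hs0]; ring
              omega
            apply D_val hd hl0 _ (2 * p + m) (p + m) (by omega) (by omega) ?_ ?_
            · have h1 : (p + m) * d + r = (2 * p + m) * d + d := by
                rw [hrqs, hs0]; ring
              omega
            · right; omega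
          omega
      · -- B1 : s ≥ 1
        rcases Nat.lt_or_ge I q with hIq | hIq
        · -- I < q
          have e1 : (I + 1) * d = I * d + d := by ring
          have e3 : (I + 1) * d ≤ q * d := Nat.mul_le_mul_right d (by omega)
          refine ⟨I * d, (I + 1) * d, ⟨by omega, by omega⟩,
            ⟨by omega, by omega⟩, ?_⟩
          have hDa : D r d ℓ (I * d) = min I (ℓ - 1) + 1 - 0 := by
            apply D_val hd hl0 _ I 0 (by omega) (by omega) ?_ (Or.inl rfl)
            omega
          have hDb : D r d ℓ ((I + 1) * d) = min (I + 1) (ℓ - 1) + 1 - 0 := by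
            apply D_val hd hl0 _ (I + 1) 0 (by omega) (by omega) ?_ (Or.inl rfl)
            omega
          omega
        · -- I ≥ q
          obtain ⟨m, rfl⟩ : ∃ m, I = q + m := ⟨I - q, by omega⟩
          refine ⟨(q + m) * d, (q + m) * d + s, ⟨by omega, by omega⟩,
            ⟨by omega, by omega⟩, ?_⟩
          have hQM : m * d + r = (q + m) * d + s := by rw [hrqs]; ring
          have hQM2 : (m + 1) * d + r = (q + m) * d + d + s := by rw [hrqs]; ring
          have hDa : D r d ℓ ((q + m) * d) = min (q + m) (ℓ - 1) + 1 - m :=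
            D_val hd hl0 _ (q + m) m (by omega) (by omega) (by omega)
              (Or.inr (by omega))
          have hDb : D r d ℓ ((q + m) * d + s)
              = min (q + m) (ℓ - 1) + 1 - (m + 1) :=
            D_val hd hl0 _ (q + m) (m + 1) (by omega) (by omega) (by omega)
              (Or.inr (by omega))
          omega
    · -- I = ℓ - 1 : last edge
      obtain ⟨L, rfl⟩ : ∃ L, I = L + 1 := ⟨I - 1, by omega⟩
      have hLl : L + 1 = ℓ - 1 := by omega
      refine ⟨(L + 1) * d + r - 1, (L + 1) * d, ⟨by omega, by omega⟩,
        ⟨by omega, by omega⟩, ?_⟩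
      set v := (L + 1) * d + r - 1 with hv
      have hmod := Nat.div_add_mod v d
      have hmlt : v % d < d := Nat.mod_lt v hd
      obtain ⟨A, hA⟩ : ∃ A, v / d = A := ⟨_, rfl⟩
      rw [hA] at hmod
      have hcm : d * A = A * d := by ring
      have hA1 : A * d ≤ v := by omega
      have hA2 : v < A * d + d := by omega
      have hAge : L + 1 ≤ A := by
        rcases Nat.lt_or_ge A (L + 1) with hx | hx
        · exfalso
          have h6 : A * d ≤ L * d := Nat.mul_le_mul_right d (by omega)
          have h7 : (L + 1) * d = L * d + d := by ring
          omega
        · exact hx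
      have hDa : D r d ℓ v = min A (ℓ - 1) + 1 - (L + 1) := by
        apply D_val hd hl0 v A (L + 1) hA1 hA2 (by omega) (Or.inr (by omega))
      have hDb : 2 ≤ D r d ℓ ((L + 1) * d) := by
        apply two_le_D _ (L + 1) L (by omega) ⟨by omega, by omega, by omega⟩
        refine ⟨by omega, ?_, ?_⟩
        · have : L * d ≤ (L + 1) * d := Nat.mul_le_mul_right d (by omega)
          omega
        · have : (L + 1) * d = L * d + d := by ring
          omega
      omega

lemma sigma_eq (r t ℓ : ℕ) (ht : 1 ≤ t) (htr : t < r) (hl : 0 < ℓ)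
    (v : Fin (ℓ * (r - t) + t)) :
    sigmaE (tightPathEdges r t ℓ) (fun _ => 1) v = D r (r - t) ℓ (v : ℕ) := by
  classical
  have hd : 0 < r - t := by omega
  set f : Fin ℓ → Finset (Fin (ℓ * (r - t) + t)) := fun i =>
    Finset.univ.filter (fun v : Fin (ℓ * (r - t) + t) =>
      (i : ℕ) * (r - t) ≤ (v : ℕ) ∧ (v : ℕ) < (i : ℕ) * (r - t) + r) with hf
  have hinj : Function.Injective f := by
    intro i j hij
    have hbound : ∀ k : Fin ℓ, (k : ℕ) * (r - t) < ℓ * (r - t) + t := by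
      intro k
      have := (Nat.mul_lt_mul_right hd).mpr k.isLt
      omega
    have hmem : (⟨(i : ℕ) * (r - t), hbound i⟩ : Fin (ℓ * (r - t) + t)) ∈ f i := by
      simp [hf]; omega
    rw [hij] at hmem
    simp only [hf, mem_filter] at hmem
    have hmem2 : (⟨(j : ℕ) * (r - t), hbound j⟩ : Fin (ℓ * (r - t) + t)) ∈ f j := by
      simp [hf]; omega
    rw [← hij] at hmem2
    simp only [hf, mem_filter] at hmem2
    have h3 : (i : ℕ) * (r - t) = (j : ℕ) * (r - t) := by omega
    exact Fin.ext (Nat.eq_of_mul_eq_mul_right hd h3)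
  unfold sigmaE
  rw [Finset.sum_filter]
  rw [show tightPathEdges r t ℓ = Finset.univ.image f from rfl]
  rw [Finset.sum_image (fun x _ y _ h => hinj h)]
  rw [D, Finset.card_filter]
  rw [← Fin.sum_univ_eq_sum_range (fun j => if j * (r - t) ≤ (v : ℕ) ∧ (v : ℕ) < j * (r - t) + r then 1 else 0) ℓ]
  apply Finset.sum_congr rfl
  intro i _
  congr 1
  simp [hf]

/-- For `1 ≤ t < r` and the `r`-uniform `t`-tight path `P` of length `ℓ > 2`,
if `t ≠ r/2` and it is not the case that (`t > r/2`, `r-t` divides `r` and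
`ℓ ≥ 2r/(r-t) - 1`), then `χ^e(P) = 1`. -/
theorem chiE_tightPath_one (r t ℓ : ℕ) (ht : 1 ≤ t) (htr : t < r) (hl : 2 < ℓ)
    (hne : 2 * t ≠ r)
    (hnot : ¬(r < 2 * t ∧ (r - t) ∣ r ∧ 2 * (r / (r - t)) - 1 ≤ ℓ)) :
    IsLeast {k : ℕ | 0 < k ∧ HasNSDEdgeWeighting (tightPathEdges r t ℓ) k} 1 := by
  constructor
  · refine ⟨Nat.one_pos, fun _ => 1, fun e _ => ⟨le_refl 1, le_refl 1⟩, ?_⟩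
    intro e he _
    have hd : 0 < r - t := by omega
    rw [tightPathEdges, Finset.mem_image] at he
    obtain ⟨i, -, rfl⟩ := he
    obtain ⟨a, b, ⟨ha1, ha2⟩, ⟨hb1, hb2⟩, hab⟩ :=
      key_exists r t (r - t) ℓ (i : ℕ) ht (by omega) hd hl i.isLt hne hnot
    have hmax : ∀ x : ℕ, x < (i : ℕ) * (r - t) + r → x < ℓ * (r - t) + t := by
      intro x hx
      have h1 : (i : ℕ) * (r - t) ≤ (ℓ - 1) * (r - t) :=
        Nat.mul_le_mul_right _ (by have := i.isLt; omega)
      have h2 : (ℓ - 1) * (r - t) + (r - t) = ℓ * (r - t) := by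
        obtain ⟨m, rfl⟩ : ∃ m, ℓ = m + 1 := ⟨ℓ - 1, by omega⟩
        simp [Nat.add_sub_cancel]; ring
      omega
    refine ⟨⟨a, hmax a ha2⟩, ?_, ⟨b, hmax b hb2⟩, ?_, ?_⟩
    · simp only [Finset.mem_filter, Finset.mem_univ, true_and]
      exact ⟨ha1, ha2⟩
    · simp only [Finset.mem_filter, Finset.mem_univ, true_and]
      exact ⟨hb1, hb2⟩
    · rw [sigma_eq r t ℓ ht htr (by omega), sigma_eq r t ℓ ht htr (by omega)]
      exact hab
  · rintro k ⟨hk, -⟩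
    omega
end

section
/- Let r ≥ 3 and let P = P_{n,r−1}^{(r)} be the r-uniform tight path (the t-tight path with t = r−1) of length ℓ > 2. If ℓ ≥ 2r − 1 then χ^e(P) = 2; otherwise χ^e(P) = 1. -/
open Finset

namespace ChiEAux

def eSet (r ℓ : ℕ) (i : Fin ℓ) : Finset (Fin (ℓ * (r - (r-1)) + (r-1))) :=
  Finset.univ.filter (fun v : Fin (ℓ * (r - (r-1)) + (r-1)) =>
    (i : ℕ) * (r - (r-1)) ≤ (v : ℕ) ∧ (v : ℕ) < (i : ℕ) * (r - (r-1)) + r)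

lemma tpe_eq (r ℓ : ℕ) :
    tightPathEdges r (r-1) ℓ = (Finset.univ : Finset (Fin ℓ)).image (eSet r ℓ) := rfl

open Classical in
noncomputable def minIdx {N : ℕ} (S : Finset (Fin N)) : ℕ :=
  if h : S.Nonempty then ((S.min' h : Fin N) : ℕ) else 0

variable {r ℓ : ℕ}

lemma hn (hr : 3 ≤ r) : ℓ * (r - (r-1)) + (r-1) = ℓ + r - 1 := by
  have h1 : r - (r-1) = 1 := by omega
  rw [h1]; omega

lemma mem_eSet (hr : 3 ≤ r) (i : Fin ℓ) (v : Fin (ℓ * (r - (r-1)) + (r-1))) :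
    v ∈ eSet r ℓ i ↔ (i : ℕ) ≤ (v : ℕ) ∧ (v : ℕ) < (i : ℕ) + r := by
  have h1 : r - (r-1) = 1 := by omega
  simp [eSet, h1]

lemma minIdx_eSet (hr : 3 ≤ r) (i : Fin ℓ) : minIdx (eSet r ℓ i) = (i : ℕ) := by
  have hN := hn (ℓ := ℓ) hr
  have hiN : (i : ℕ) < ℓ * (r - (r-1)) + (r-1) := by have := i.isLt; omega
  have hmem : (⟨(i : ℕ), hiN⟩ : Fin (ℓ * (r - (r-1)) + (r-1))) ∈ eSet r ℓ i := by
    rw [mem_eSet hr]; refine ⟨le_refl _, ?_⟩; simp; omega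
  have hne : (eSet r ℓ i).Nonempty := ⟨_, hmem⟩
  have h1 : ((eSet r ℓ i).min' hne : ℕ) ≤ (i : ℕ) := (eSet r ℓ i).min'_le _ hmem
  have h2 : (i : ℕ) ≤ ((eSet r ℓ i).min' hne : ℕ) :=
    ((mem_eSet hr i _).1 ((eSet r ℓ i).min'_mem hne)).1
  rw [minIdx, dif_pos hne]; omega

lemma eSet_inj (hr : 3 ≤ r) : Function.Injective (eSet r ℓ) := by
  intro a b hab
  apply Fin.ext
  rw [← minIdx_eSet hr a, ← minIdx_eSet hr b, hab]

lemma sigma_formula (hr : 3 ≤ r) (hl : 2 < ℓ) (f : ℕ → ℕ)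
    (v : Fin (ℓ * (r - (r-1)) + (r-1))) :
    sigmaE (tightPathEdges r (r-1) ℓ) (fun S => f (minIdx S)) v
      = ∑ m ∈ Finset.Ico ((v : ℕ) + 1 - r) (min ((v : ℕ) + 1) ℓ), f m := by
  classical
  rw [sigmaE, Finset.filter_congr_decidable, tpe_eq, filter_image,
    Finset.sum_image (fun a _ b _ h => eSet_inj hr h)]
  refine Finset.sum_nbij' (i := fun a : Fin ℓ => (a : ℕ))
    (j := fun m : ℕ => (⟨m % ℓ, Nat.mod_lt _ (by omega)⟩ : Fin ℓ)) ?_ ?_ ?_ ?_ ?_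
  · intro a ha
    simp only [Finset.mem_filter, Finset.mem_univ, true_and, mem_eSet hr] at ha
    have := a.isLt
    simp only [Finset.mem_Ico]
    omega
  · intro m hm
    simp only [Finset.mem_Ico] at hm
    have hmℓ : m < ℓ := by omega
    simp only [Finset.mem_filter, Finset.mem_univ, true_and, mem_eSet hr]
    simp only [Nat.mod_eq_of_lt hmℓ]
    omega
  · intro a ha
    apply Fin.ext
    simp [Nat.mod_eq_of_lt a.isLt]
  · intro m hm
    simp only [Finset.mem_Ico] at hm
    simp [Nat.mod_eq_of_lt (show m < ℓ by omega)]
  · intro a ha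
    rw [minIdx_eSet hr]

lemma sigma_const_one (hr : 3 ≤ r) (hl : 2 < ℓ) (v : Fin (ℓ * (r - (r-1)) + (r-1))) :
    sigmaE (tightPathEdges r (r-1) ℓ) (fun _ => 1) v
      = min ((v : ℕ) + 1) ℓ - ((v : ℕ) + 1 - r) := by
  have h := sigma_formula hr hl (fun _ => 1) v
  simpa using h


variable {r ℓ : ℕ}

lemma mem_eSet' (hr : 3 ≤ r) (i : Fin ℓ) (c : ℕ) (hc : c < ℓ * (r - (r-1)) + (r-1))
    (h1 : (i : ℕ) ≤ c) (h2 : c < (i : ℕ) + r) :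
    (⟨c, hc⟩ : Fin (ℓ * (r - (r-1)) + (r-1))) ∈ eSet r ℓ i := by
  rw [mem_eSet hr]; exact ⟨h1, h2⟩

lemma sigma_mk (hr : 3 ≤ r) (hl : 2 < ℓ) (f : ℕ → ℕ) (c : ℕ)
    (hc : c < ℓ * (r - (r-1)) + (r-1)) :
    sigmaE (tightPathEdges r (r-1) ℓ) (fun S => f (minIdx S)) ⟨c, hc⟩
      = ∑ m ∈ Finset.Ico (c + 1 - r) (min (c + 1) ℓ), f m :=
  sigma_formula hr hl f ⟨c, hc⟩

lemma sigma_one_mk (hr : 3 ≤ r) (hl : 2 < ℓ) (c : ℕ)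
    (hc : c < ℓ * (r - (r-1)) + (r-1)) :
    sigmaE (tightPathEdges r (r-1) ℓ) (fun _ => 1) ⟨c, hc⟩
      = min (c + 1) ℓ - (c + 1 - r) :=
  sigma_const_one hr hl ⟨c, hc⟩

/-- key inequality for the middle edges in the `f₂` weighting. -/
lemma sum_shift_ne (hr : 0 < r) (x : ℕ) :
    (∑ m ∈ Finset.Ico x (x + r), (1 + m / r % 2))
      ≠ ∑ m ∈ Finset.Ico (x + 1) (x + r + 1), (1 + m / r % 2) := by
  have e1 := Finset.sum_Ico_succ_top (a := x) (b := x + r) (by omega)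
    (fun m => 1 + m / r % 2)
  have e2 := Finset.sum_eq_sum_Ico_succ_bot (a := x) (b := x + r + 1) (by omega)
    (fun m => 1 + m / r % 2)
  have hdiv : (x + r) / r = x / r + 1 := Nat.add_div_right x hr
  rw [hdiv] at e1
  omega

end ChiEAux


/-- For `r ≥ 3` and the `r`-uniform tight path `P` (the `t`-tight path with
`t = r-1`) of length `ℓ > 2`: if `ℓ ≥ 2r - 1` then `χ^e(P) = 2`, and
otherwise `χ^e(P) = 1`. -/
theorem chiE_tightPath (r ℓ : ℕ) (hr : 3 ≤ r) (hl : 2 < ℓ) :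
    (2 * r - 1 ≤ ℓ →
      IsLeast {k : ℕ | 0 < k ∧ HasNSDEdgeWeighting (tightPathEdges r (r - 1) ℓ) k} 2) ∧
    (ℓ < 2 * r - 1 →
      IsLeast {k : ℕ | 0 < k ∧ HasNSDEdgeWeighting (tightPathEdges r (r - 1) ℓ) k} 1) := by
  have hN := ChiEAux.hn (ℓ := ℓ) hr
  constructor
  · -- long case: χ = 2
    intro hge
    constructor
    · -- 2 ∈ S
      refine ⟨by norm_num, fun S => 1 + ChiEAux.minIdx S / r % 2, fun e _ => by
        show 1 ≤ 1 + ChiEAux.minIdx e / r % 2 ∧ 1 + ChiEAux.minIdx e / r % 2 ≤ 2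
        omega, ?_⟩
      intro e he _
      rw [ChiEAux.tpe_eq] at he
      obtain ⟨i, -, rfl⟩ := Finset.mem_image.mp he
      have hiℓ := i.isLt
      rcases lt_trichotomy ((i : ℕ) + 1) r with hc1 | hc1 | hc1
      · -- left boundary: i + 1 ≤ r - 1
        refine ⟨⟨(i : ℕ), by omega⟩, ChiEAux.mem_eSet' hr i _ _ (by omega) (by omega),
          ⟨(i : ℕ) + 1, by omega⟩, ChiEAux.mem_eSet' hr i _ _ (by omega) (by omega), ?_⟩
        rw [ChiEAux.sigma_mk hr hl (fun m => 1 + m / r % 2) _ _,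
          ChiEAux.sigma_mk hr hl (fun m => 1 + m / r % 2) _ _]
        rw [show (i : ℕ) + 1 - r = 0 by omega, show min ((i : ℕ) + 1) ℓ = (i : ℕ) + 1 by omega,
          show (i : ℕ) + 1 + 1 - r = 0 by omega,
          show min ((i : ℕ) + 1 + 1) ℓ = (i : ℕ) + 1 + 1 by omega]
        rw [Finset.sum_Ico_succ_top (a := 0) (b := (i : ℕ) + 1) (by omega) (fun m => 1 + m / r % 2)]
        omega
      · -- middle or boundary with i + 1 = r : also middle since i ≤ ℓ - 2 here? handle below
        -- i + 1 = r, so i = r - 1 ≤ ℓ - 2 (since ℓ ≥ 2r - 1 ≥ r + 2)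
        obtain ⟨x, hx⟩ : ∃ x, (i : ℕ) + 1 = x + r := ⟨(i : ℕ) + 1 - r, by omega⟩
        refine ⟨⟨(i : ℕ), by omega⟩, ChiEAux.mem_eSet' hr i _ _ (by omega) (by omega),
          ⟨(i : ℕ) + 1, by omega⟩, ChiEAux.mem_eSet' hr i _ _ (by omega) (by omega), ?_⟩
        rw [ChiEAux.sigma_mk hr hl (fun m => 1 + m / r % 2) _ _,
          ChiEAux.sigma_mk hr hl (fun m => 1 + m / r % 2) _ _]
        rw [show (i : ℕ) + 1 - r = x by omega, show min ((i : ℕ) + 1) ℓ = x + r by omega,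
          show (i : ℕ) + 1 + 1 - r = x + 1 by omega,
          show min ((i : ℕ) + 1 + 1) ℓ = x + r + 1 by omega]
        exact ChiEAux.sum_shift_ne (by omega) x
      · -- i + 1 > r
        by_cases hc2 : (i : ℕ) + 1 ≤ ℓ - 1
        · -- middle edge
          obtain ⟨x, hx⟩ : ∃ x, (i : ℕ) + 1 = x + r := ⟨(i : ℕ) + 1 - r, by omega⟩
          refine ⟨⟨(i : ℕ), by omega⟩, ChiEAux.mem_eSet' hr i _ _ (by omega) (by omega),
            ⟨(i : ℕ) + 1, by omega⟩, ChiEAux.mem_eSet' hr i _ _ (by omega) (by omega), ?_⟩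
          rw [ChiEAux.sigma_mk hr hl (fun m => 1 + m / r % 2) _ _,
            ChiEAux.sigma_mk hr hl (fun m => 1 + m / r % 2) _ _]
          rw [show (i : ℕ) + 1 - r = x by omega, show min ((i : ℕ) + 1) ℓ = x + r by omega,
            show (i : ℕ) + 1 + 1 - r = x + 1 by omega,
            show min ((i : ℕ) + 1 + 1) ℓ = x + r + 1 by omega]
          exact ChiEAux.sum_shift_ne (by omega) x
        · -- last edge: i = ℓ - 1
          refine ⟨⟨(i : ℕ), by omega⟩, ChiEAux.mem_eSet' hr i _ _ (by omega) (by omega),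
            ⟨(i : ℕ) + 1, by omega⟩, ChiEAux.mem_eSet' hr i _ _ (by omega) (by omega), ?_⟩
          rw [ChiEAux.sigma_mk hr hl (fun m => 1 + m / r % 2) _ _,
            ChiEAux.sigma_mk hr hl (fun m => 1 + m / r % 2) _ _]
          obtain ⟨a, ha⟩ : ∃ a, (i : ℕ) + 1 - r = a := ⟨(i : ℕ) + 1 - r, rfl⟩
          rw [show min ((i : ℕ) + 1) ℓ = ℓ by omega, show min ((i : ℕ) + 1 + 1) ℓ = ℓ by omega,
            ha, show (i : ℕ) + 1 + 1 - r = a + 1 by omega]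
          have e2 := Finset.sum_eq_sum_Ico_succ_bot (a := a) (b := ℓ) (by omega)
            (fun m => 1 + m / r % 2)
          omega
    · -- lower bound: k = 1 impossible
      rintro k ⟨hk0, w, hwb, hprop⟩
      by_contra hk2
      have hk1 : k = 1 := by omega
      subst hk1
      have hi : r - 1 < ℓ := by omega
      have he : ChiEAux.eSet r ℓ ⟨r - 1, hi⟩ ∈ tightPathEdges r (r - 1) ℓ := by
        rw [ChiEAux.tpe_eq]; exact Finset.mem_image_of_mem _ (Finset.mem_univ _)
      have hival : ((⟨r - 1, hi⟩ : Fin ℓ) : ℕ) = r - 1 := rfl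
      have hcard : 2 ≤ (ChiEAux.eSet r ℓ ⟨r - 1, hi⟩).card := by
        refine Finset.one_lt_card.mpr
          ⟨⟨r - 1, by omega⟩, ChiEAux.mem_eSet' hr _ _ _ (by omega) (by omega),
           ⟨r, by omega⟩, ChiEAux.mem_eSet' hr _ _ _ (by omega) (by omega), ?_⟩
        intro hcon
        have := congrArg Fin.val hcon
        simp only [] at this
        omega
      obtain ⟨u, hu, v, hv, hne⟩ := hprop _ he hcard
      have hsig : ∀ x, x ∈ ChiEAux.eSet r ℓ ⟨r - 1, hi⟩ →
          sigmaE (tightPathEdges r (r - 1) ℓ) w x = r := by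
        intro x hx
        have hx' := (ChiEAux.mem_eSet hr _ x).1 hx
        rw [hival] at hx'
        have h1 : sigmaE (tightPathEdges r (r - 1) ℓ) w x
            = sigmaE (tightPathEdges r (r - 1) ℓ) (fun _ => 1) x := by
          rw [sigmaE, sigmaE]
          refine Finset.sum_congr rfl fun e hee => ?_
          simp only [Finset.mem_filter] at hee
          exact le_antisymm (hwb e hee.1).2 (hwb e hee.1).1
        rw [h1, ChiEAux.sigma_const_one hr hl]
        omega
      exact hne (by rw [hsig u hu, hsig v hv])
  · -- short case: χ = 1
    intro hlt
    refine ⟨⟨one_pos, fun _ => 1, fun e _ => ⟨le_refl 1, le_refl 1⟩, ?_⟩, fun k hk => hk.1⟩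
    intro e he _
    rw [ChiEAux.tpe_eq] at he
    obtain ⟨i, -, rfl⟩ := Finset.mem_image.mp he
    have hiℓ := i.isLt
    by_cases hc1 : (i : ℕ) + 1 ≤ r - 1 ∧ (i : ℕ) + 1 ≤ ℓ - 1
    · refine ⟨⟨(i : ℕ), by omega⟩, ChiEAux.mem_eSet' hr i _ _ (by omega) (by omega),
        ⟨(i : ℕ) + 1, by omega⟩, ChiEAux.mem_eSet' hr i _ _ (by omega) (by omega), ?_⟩
      rw [ChiEAux.sigma_one_mk hr hl _ _, ChiEAux.sigma_one_mk hr hl _ _]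
      omega
    · have hc2 : 1 ≤ (i : ℕ) ∧ ℓ ≤ (i : ℕ) + r - 1 := by omega
      refine ⟨⟨(i : ℕ) + r - 2, by omega⟩, ChiEAux.mem_eSet' hr i _ _ (by omega) (by omega),
        ⟨(i : ℕ) + r - 1, by omega⟩, ChiEAux.mem_eSet' hr i _ _ (by omega) (by omega), ?_⟩
      rw [ChiEAux.sigma_one_mk hr hl _ _, ChiEAux.sigma_one_mk hr hl _ _]
      omega
end

section
/- Let r be an even integer, t = r/2, and let C = C_{n,t}^{(r)} be the r-uniform t-tight cycle of length ℓ > 2 with ℓ ≢ 0 (mod 4). Then χ^e(C) = 3. -/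
open Finset

open Classical in
/-- The edge set of the `r`-uniform `t`-tight cycle of length `ℓ`, on vertex set
`Fin (ℓ*(r-t))`: the `i`-th edge (`i : Fin ℓ`) consists of the `r` consecutive
vertices starting at position `i*(r-t)` (0-indexed), taken modulo `ℓ*(r-t)`. -/
noncomputable def tightCycleEdges (r t ℓ : ℕ) : Finset (Finset (Fin (ℓ * (r - t)))) :=
  (Finset.univ : Finset (Fin ℓ)).image (fun i : Fin ℓ =>
    Finset.univ.filter (fun v : Fin (ℓ * (r - t)) =>
      ∃ j < r, (v : ℕ) = ((i : ℕ) * (r - t) + j) % (ℓ * (r - t))))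

lemma mod_two_cases (x l : ℕ) (hl : 0 < l) (h : x < 2*l) :
    (x % l = x ∧ x < l) ∨ (x % l = x - l ∧ l ≤ x) := by
  rcases lt_or_ge x l with h1 | h1
  · exact Or.inl ⟨Nat.mod_eq_of_lt h1, h1⟩
  · exact Or.inr ⟨by rw [Nat.mod_eq_sub_mod h1, Nat.mod_eq_of_lt (by omega)], h1⟩

lemma divHelper' {t : ℕ} (ht : 0 < t) (b s : ℕ) (h : s < t) : (b*t + s)/t = b := by
  rw [mul_comm, Nat.mul_add_div ht, Nat.div_eq_of_lt h, add_zero]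


open Classical in
noncomputable def edgeAt (r t ℓ : ℕ) (i : Fin ℓ) : Finset (Fin (ℓ * (r - t))) :=
  Finset.univ.filter (fun v : Fin (ℓ * (r - t)) =>
    ∃ j < r, (v : ℕ) = ((i : ℕ) * (r - t) + j) % (ℓ * (r - t)))

lemma mem_edgeAt {r t ℓ : ℕ} (ht : 1 ≤ t) (hrt : r = 2*t) (hl : 2 < ℓ)
    (i : Fin ℓ) (v : Fin (ℓ*(r-t))) :
    v ∈ edgeAt r t ℓ i ↔ ((v:ℕ)/t = (i:ℕ) ∨ (v:ℕ)/t = ((i:ℕ)+1) % ℓ) := by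
  have hrt' : r - t = t := by omega
  have hv : (v:ℕ) < ℓ * t := by simpa [hrt'] using v.isLt
  have hi : (i:ℕ) < ℓ := i.isLt
  have e1 : ((i:ℕ)+1)*t = (i:ℕ)*t + t := by ring
  have e3 : ((i:ℕ)+1)*t ≤ ℓ*t := Nat.mul_le_mul_right t hi
  have e4 : t ≤ ℓ*t := Nat.le_mul_of_pos_left t (by omega)
  have hdm : t * ((v:ℕ)/t) + (v:ℕ) % t = (v:ℕ) := Nat.div_add_mod _ _
  have hs : (v:ℕ) % t < t := Nat.mod_lt _ (by omega)
  rw [edgeAt, mem_filter]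
  simp only [mem_univ, true_and, hrt']
  constructor
  · rintro ⟨j, hj, hx⟩
    have hx2 : (i:ℕ)*t + j < 2*(ℓ*t) := by omega
    rcases mod_two_cases _ _ (by positivity) hx2 with ⟨hm, hlt⟩ | ⟨hm, hge⟩
    · rw [hm] at hx
      rcases lt_or_ge j t with hjt | hjt
      · left; rw [hx, divHelper' (by omega) _ _ hjt]
      · right
        have hi1 : (i:ℕ)+1 < ℓ := by
          have : ((i:ℕ)+1)*t < ℓ*t := by omega
          exact Nat.lt_of_mul_lt_mul_right this
        have hveq : (v:ℕ) = ((i:ℕ)+1)*t + (j - t) := by omega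
        rw [hveq, divHelper' (by omega) _ _ (by omega), Nat.mod_eq_of_lt hi1]
    · rw [hm] at hx
      have hile : (i:ℕ) ≤ ℓ - 1 := by omega
      have e5 : ((ℓ-1)+1)*t = ℓ*t := by rw [Nat.sub_add_cancel (by omega)]
      have e6 : ((ℓ-1)+1)*t = (ℓ-1)*t + t := by ring
      have e7 : (i:ℕ)*t ≤ (ℓ-1)*t := Nat.mul_le_mul_right t hile
      have hieq : (i:ℕ) = ℓ - 1 := by
        by_contra hne
        have h8 : (i:ℕ)+1 ≤ ℓ-1 := by omega
        have h9 : ((i:ℕ)+1)*t ≤ (ℓ-1)*t := Nat.mul_le_mul_right t h8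
        omega
      rw [hieq] at hx ⊢
      have hveq : (v:ℕ) = j - t := by omega
      have hvt : (v:ℕ) < t := by omega
      right
      rw [Nat.div_eq_of_lt hvt, Nat.sub_add_cancel (by omega), Nat.mod_self]
  · rintro (hb | hb)
    · have ec : t*(i:ℕ) = (i:ℕ)*t := by ring
      rw [hb] at hdm
      refine ⟨(v:ℕ)%t, by omega, ?_⟩
      rw [Nat.mod_eq_of_lt (show (i:ℕ)*t + (v:ℕ)%t < ℓ*t by omega)]
      omega
    · rcases lt_or_ge ((i:ℕ)+1) ℓ with hi1 | hi1
      · rw [Nat.mod_eq_of_lt hi1] at hb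
        have ec : t*((i:ℕ)+1) = ((i:ℕ)+1)*t := by ring
        rw [hb] at hdm
        refine ⟨t + (v:ℕ)%t, by omega, ?_⟩
        rw [Nat.mod_eq_of_lt (show (i:ℕ)*t + (t + (v:ℕ)%t) < ℓ*t by omega)]
        omega
      · have hieq : (i:ℕ) = ℓ - 1 := by omega
        have h0 : ((i:ℕ)+1) % ℓ = 0 := by
          rw [hieq, Nat.sub_add_cancel (by omega), Nat.mod_self]
        rw [h0] at hb
        have hvt : (v:ℕ) < t := by
          rcases Nat.lt_or_ge (v:ℕ) t with h | h
          · exact h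
          · exfalso
            have : 1 ≤ (v:ℕ)/t := (Nat.one_le_div_iff (by omega)).2 h
            omega
        refine ⟨t + (v:ℕ), by omega, ?_⟩
        have e5 : ((ℓ-1)+1)*t = ℓ*t := by rw [Nat.sub_add_cancel (by omega)]
        have e6 : ((ℓ-1)+1)*t = (ℓ-1)*t + t := by ring
        have heq : (i:ℕ)*t + (t + (v:ℕ)) = ℓ*t + (v:ℕ) := by rw [hieq]; omega
        rw [heq, Nat.add_mod_left, Nat.mod_eq_of_lt hv]

lemma mod_pred_iff {ℓ : ℕ} (hl : 2 < ℓ) {i b : ℕ} (hi : i < ℓ) (hb : b < ℓ) :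
    (i+1) % ℓ = b ↔ i = (b+ℓ-1) % ℓ := by
  rcases mod_two_cases (i+1) ℓ (by omega) (by omega) with ⟨h1, h2⟩ | ⟨h1, h2⟩ <;>
    rcases mod_two_cases (b+ℓ-1) ℓ (by omega) (by omega) with ⟨h3, h4⟩ | ⟨h3, h4⟩ <;>
      omega

lemma mod_pred_ne {ℓ : ℕ} (hl : 2 < ℓ) {b : ℕ} (hb : b < ℓ) : (b+ℓ-1) % ℓ ≠ b := by
  rcases mod_two_cases (b+ℓ-1) ℓ (by omega) (by omega) with ⟨h1, h2⟩ | ⟨h1, h2⟩ <;> omega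

lemma vertexAt_lt {r t ℓ : ℕ} (ht : 1 ≤ t) (hrt : r = 2*t) (i : Fin ℓ) :
    (i:ℕ)*t < ℓ*(r-t) := by
  have hrt' : r - t = t := by omega
  rw [hrt']
  exact (Nat.mul_lt_mul_right (by omega : 0 < t)).2 i.isLt

lemma div_vertexAt {t : ℕ} (ht : 1 ≤ t) (i : ℕ) : (i*t)/t = i := by
  rw [Nat.mul_div_cancel _ (by omega)]

lemma edgeAt_injective {r t ℓ : ℕ} (ht : 1 ≤ t) (hrt : r = 2*t) (hl : 2 < ℓ) :
    Function.Injective (edgeAt r t ℓ) := by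
  intro i j hij
  have h1 : (⟨(i:ℕ)*t, vertexAt_lt ht hrt i⟩ : Fin (ℓ*(r-t))) ∈ edgeAt r t ℓ i := by
    rw [mem_edgeAt ht hrt hl]
    left
    exact div_vertexAt ht _
  rw [hij, mem_edgeAt ht hrt hl] at h1
  have h2 : (⟨(j:ℕ)*t, vertexAt_lt ht hrt j⟩ : Fin (ℓ*(r-t))) ∈ edgeAt r t ℓ j := by
    rw [mem_edgeAt ht hrt hl]
    left
    exact div_vertexAt ht _
  rw [← hij, mem_edgeAt ht hrt hl] at h2
  simp only [div_vertexAt ht] at h1 h2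
  have hi := i.isLt
  have hj := j.isLt
  apply Fin.ext
  rcases h1 with h1 | h1
  · exact h1
  rcases h2 with h2 | h2
  · exact h2.symm
  exfalso
  rcases mod_two_cases ((j:ℕ)+1) ℓ (by omega) (by omega) with ⟨ha, hb⟩ | ⟨ha, hb⟩ <;>
    rcases mod_two_cases ((i:ℕ)+1) ℓ (by omega) (by omega) with ⟨hc, hd⟩ | ⟨hc, hd⟩ <;>
      omega

lemma tightCycleEdges_eq (r t ℓ : ℕ) :
    tightCycleEdges r t ℓ = Finset.univ.image (edgeAt r t ℓ) := rfl

lemma sigma_eq_s11 {r t ℓ : ℕ} (ht : 1 ≤ t) (hrt : r = 2*t) (hl : 2 < ℓ)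
    (w : Finset (Fin (ℓ*(r-t))) → ℕ) (v : Fin (ℓ*(r-t)))
    (b : ℕ) (hbl : b < ℓ) (hbv : (v:ℕ)/t = b) :
    sigmaE (tightCycleEdges r t ℓ) w v
      = w (edgeAt r t ℓ ⟨b, hbl⟩) +
        w (edgeAt r t ℓ ⟨(b+ℓ-1)%ℓ, Nat.mod_lt _ (by omega)⟩) := by
  classical
  set i1 : Fin ℓ := ⟨b, hbl⟩ with hi1
  set i2 : Fin ℓ := ⟨(b+ℓ-1)%ℓ, Nat.mod_lt _ (by omega)⟩ with hi2
  have hmem : ∀ i : Fin ℓ, v ∈ edgeAt r t ℓ i ↔ (i = i1 ∨ i = i2) := by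
    intro i
    rw [mem_edgeAt ht hrt hl, hbv]
    simp only [hi1, hi2, Fin.ext_iff]
    constructor
    · rintro (h | h)
      · left; exact h.symm
      · right; exact (mod_pred_iff hl i.isLt hbl).1 h.symm
    · rintro (h | h)
      · left; exact h.symm
      · right; exact ((mod_pred_iff hl i.isLt hbl).2 h).symm
  have hne : edgeAt r t ℓ i1 ≠ edgeAt r t ℓ i2 := by
    intro h
    have := edgeAt_injective ht hrt hl h
    rw [hi1, hi2, Fin.ext_iff] at this
    exact mod_pred_ne hl hbl this.symm
  rw [sigmaE]
  refine Eq.trans (Finset.sum_congr ?_ (fun _ _ => rfl)) (Finset.sum_pair hne)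
  ext e
  simp only [Finset.mem_filter, tightCycleEdges_eq, Finset.mem_image, Finset.mem_univ,
    true_and, Finset.mem_insert, Finset.mem_singleton]
  constructor
  · rintro ⟨⟨i, rfl⟩, hv⟩
    rcases (hmem i).1 hv with rfl | rfl
    · left; rfl
    · right; rfl
  · rintro (rfl | rfl)
    · exact ⟨⟨i1, rfl⟩, (hmem i1).2 (Or.inl rfl)⟩
    · exact ⟨⟨i2, rfl⟩, (hmem i2).2 (Or.inr rfl)⟩

/-! ### coloring -/

def Lval (ℓ : ℕ) : ℕ := if ℓ % 2 = 1 then ℓ else ℓ/2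
def pmap (ℓ i : ℕ) : ℕ := if ℓ % 2 = 1 then (if i % 2 = 0 then i/2 else (ℓ+i)/2) else i/2
def gcol (L q : ℕ) : ℕ := if q = L - 1 then 3 else 1 + q % 2
def fcol (ℓ i : ℕ) : ℕ := gcol (Lval ℓ) (pmap ℓ i)

lemma gcol_bounds (L q : ℕ) : 1 ≤ gcol L q ∧ gcol L q ≤ 3 := by
  unfold gcol; split_ifs <;> omega

lemma fcol_bounds (ℓ i : ℕ) : 1 ≤ fcol ℓ i ∧ fcol ℓ i ≤ 3 := gcol_bounds _ _

lemma Lval_odd {ℓ : ℕ} (hl : 2 < ℓ) (hmod : ℓ % 4 ≠ 0) :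
    Lval ℓ % 2 = 1 ∧ 3 ≤ Lval ℓ := by
  unfold Lval; split_ifs <;> omega

lemma pmap_lt {ℓ i : ℕ} (hl : 2 < ℓ) (hi : i < ℓ) : pmap ℓ i < Lval ℓ := by
  unfold pmap Lval; split_ifs <;> omega

lemma pmap_step {ℓ i : ℕ} (hl : 2 < ℓ) (hi : i < ℓ) :
    pmap ℓ ((i+2) % ℓ) = (if pmap ℓ i = Lval ℓ - 1 then 0 else pmap ℓ i + 1) := by
  rcases mod_two_cases (i+2) ℓ (by omega) (by omega) with ⟨h1, h2⟩ | ⟨h1, h2⟩ <;>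
    (rw [h1]; unfold pmap Lval; split_ifs <;> omega)

lemma gcol_step {L q : ℕ} (hL2 : L % 2 = 1) (hL3 : 3 ≤ L) (hq : q < L) :
    gcol L q ≠ gcol L (if q = L - 1 then 0 else q + 1) := by
  unfold gcol; split_ifs <;> omega

lemma fcol_step {ℓ i : ℕ} (hl : 2 < ℓ) (hmod : ℓ % 4 ≠ 0) (hi : i < ℓ) :
    fcol ℓ i ≠ fcol ℓ ((i+2) % ℓ) := by
  obtain ⟨hL2, hL3⟩ := Lval_odd hl hmod
  have := gcol_step (q := pmap ℓ i) hL2 hL3 (pmap_lt hl hi)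
  rw [fcol, fcol, pmap_step hl hi]
  exact this

/-! ### mod helpers -/

lemma mA {ℓ j : ℕ} (hl : 2 < ℓ) (hj : j < ℓ) : ((j+1) % ℓ + ℓ - 1) % ℓ = j := by
  have hm : (j+1) % ℓ < ℓ := Nat.mod_lt _ (by omega)
  have c1 := mod_two_cases (j+1) ℓ (by omega) (by omega)
  have c2 := mod_two_cases ((j+1) % ℓ + ℓ - 1) ℓ (by omega) (by omega)
  omega

lemma mB {ℓ j : ℕ} (hl : 2 < ℓ) (hj : j < ℓ) : ((j+1) % ℓ + 1) % ℓ = (j+2) % ℓ := by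
  have hm : (j+1) % ℓ < ℓ := Nat.mod_lt _ (by omega)
  have c1 := mod_two_cases (j+1) ℓ (by omega) (by omega)
  have c2 := mod_two_cases (j+2) ℓ (by omega) (by omega)
  have c3 := mod_two_cases ((j+1) % ℓ + 1) ℓ (by omega) (by omega)
  omega

lemma mC {ℓ i : ℕ} (hl : 2 < ℓ) (hi : i < ℓ) : ((i+ℓ-1) % ℓ + 2) % ℓ = (i+1) % ℓ := by
  have hm : (i+ℓ-1) % ℓ < ℓ := Nat.mod_lt _ (by omega)
  have c1 := mod_two_cases (i+ℓ-1) ℓ (by omega) (by omega)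
  have c2 := mod_two_cases ((i+ℓ-1) % ℓ + 2) ℓ (by omega) (by omega)
  have c3 := mod_two_cases (i+1) ℓ (by omega) (by omega)
  omega

/-! ### no 2-weighting -/

lemma no_two_coloring {ℓ : ℕ} (hl : 2 < ℓ) (hmod : ℓ % 4 ≠ 0) (f : ℕ → ℕ)
    (hf1 : ∀ j < ℓ, 1 ≤ f j ∧ f j ≤ 2) (hf2 : ∀ j < ℓ, f j ≠ f ((j+2) % ℓ)) : False := by
  have key : ∀ j < ℓ, f j + f ((j+2) % ℓ) = 3 := by
    intro j hj
    have h1 := hf1 j hj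
    have h2 := hf1 ((j+2)%ℓ) (Nat.mod_lt _ (by omega))
    have h3 := hf2 j hj
    omega
  have F : ∀ k, f ((2*k) % ℓ) = if k % 2 = 0 then f 0 else 3 - f 0 := by
    intro k
    induction k with
    | zero => simp
    | succ k ih =>
      have h1 : (2*k) % ℓ < ℓ := Nat.mod_lt _ (by omega)
      have h2 := key _ h1
      have h3 : ((2*k) % ℓ + 2) % ℓ = (2*(k+1)) % ℓ := by
        rw [Nat.mod_add_mod]; ring_nf
      rw [h3] at h2
      have h0 := hf1 0 (by omega)
      split_ifs at ih ⊢ <;> omega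
  set k := if ℓ % 2 = 1 then ℓ else ℓ/2 with hk
  have hk1 : k % 2 = 1 := by rw [hk]; split_ifs <;> omega
  have hk2 : (2*k) % ℓ = 0 := by
    rw [hk]; split_ifs with h
    · exact Nat.mul_mod_left 2 ℓ
    · rw [show 2*(ℓ/2) = ℓ by omega]; exact Nat.mod_self ℓ
  have := F k
  rw [hk2] at this
  have h0 := hf1 0 (by omega)
  split_ifs at this <;> omega

/-! ### assembly -/

lemma sigma_mem {r t ℓ : ℕ} (ht : 1 ≤ t) (hrt : r = 2*t) (hl : 2 < ℓ)
    (w : Finset (Fin (ℓ*(r-t))) → ℕ) (i : Fin ℓ) (u : Fin (ℓ*(r-t)))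
    (hu : u ∈ edgeAt r t ℓ i) :
    sigmaE (tightCycleEdges r t ℓ) w u
        = w (edgeAt r t ℓ i) + w (edgeAt r t ℓ ⟨((i:ℕ)+ℓ-1)%ℓ, Nat.mod_lt _ (by omega)⟩)
      ∨ sigmaE (tightCycleEdges r t ℓ) w u
        = w (edgeAt r t ℓ ⟨((i:ℕ)+1)%ℓ, Nat.mod_lt _ (by omega)⟩) + w (edgeAt r t ℓ i) := by
  rcases (mem_edgeAt ht hrt hl i u).1 hu with hb | hb
  · left
    rw [sigma_eq_s11 ht hrt hl w u (i:ℕ) i.isLt hb]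
  · right
    rw [sigma_eq_s11 ht hrt hl w u (((i:ℕ)+1)%ℓ) (Nat.mod_lt _ (by omega)) hb]
    congr 2
    exact congrArg _ (Fin.ext (by simpa using mA hl i.isLt))

lemma w_congr {r t ℓ : ℕ} (w : Finset (Fin (ℓ*(r-t))) → ℕ) {x y : ℕ}
    (hx : x < ℓ) (hy : y < ℓ) (h : x = y) :
    w (edgeAt r t ℓ ⟨x, hx⟩) = w (edgeAt r t ℓ ⟨y, hy⟩) := by subst h; rfl

lemma vtx_mem_self {r t ℓ : ℕ} (ht : 1 ≤ t) (hrt : r = 2*t) (hl : 2 < ℓ) (i : Fin ℓ) :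
    (⟨(i:ℕ)*t, vertexAt_lt ht hrt i⟩ : Fin (ℓ*(r-t))) ∈ edgeAt r t ℓ i := by
  rw [mem_edgeAt ht hrt hl]
  left
  exact div_vertexAt ht _

lemma vtx_mem_next {r t ℓ : ℕ} (ht : 1 ≤ t) (hrt : r = 2*t) (hl : 2 < ℓ) (i : Fin ℓ) :
    (⟨(((i:ℕ)+1)%ℓ)*t, vertexAt_lt ht hrt ⟨((i:ℕ)+1)%ℓ, Nat.mod_lt _ (by omega)⟩⟩ :
      Fin (ℓ*(r-t))) ∈ edgeAt r t ℓ i := by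
  rw [mem_edgeAt ht hrt hl]
  right
  exact div_vertexAt ht _

lemma vtx_ne {r t ℓ : ℕ} (ht : 1 ≤ t) (hrt : r = 2*t) (hl : 2 < ℓ) (i : Fin ℓ) :
    (⟨(i:ℕ)*t, vertexAt_lt ht hrt i⟩ : Fin (ℓ*(r-t)))
      ≠ ⟨(((i:ℕ)+1)%ℓ)*t, vertexAt_lt ht hrt ⟨((i:ℕ)+1)%ℓ, Nat.mod_lt _ (by omega)⟩⟩ := by
  have hi := i.isLt
  have hne : (i:ℕ) ≠ ((i:ℕ)+1)%ℓ := by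
    have := mod_two_cases ((i:ℕ)+1) ℓ (by omega) (by omega)
    omega
  intro h
  rw [Fin.mk.injEq] at h
  exact hne (Nat.eq_of_mul_eq_mul_right (by omega) h)

/-- the key consequence of properness at edge `i`. -/
lemma edge_forces {r t ℓ : ℕ} (ht : 1 ≤ t) (hrt : r = 2*t) (hl : 2 < ℓ)
    (w : Finset (Fin (ℓ*(r-t))) → ℕ) (i : Fin ℓ)
    (h : ∃ u ∈ edgeAt r t ℓ i, ∃ v ∈ edgeAt r t ℓ i,
      sigmaE (tightCycleEdges r t ℓ) w u ≠ sigmaE (tightCycleEdges r t ℓ) w v) :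
    w (edgeAt r t ℓ ⟨((i:ℕ)+ℓ-1)%ℓ, Nat.mod_lt _ (by omega)⟩)
      ≠ w (edgeAt r t ℓ ⟨((i:ℕ)+1)%ℓ, Nat.mod_lt _ (by omega)⟩) := by
  obtain ⟨u, hu, v, hv, hne⟩ := h
  rcases sigma_mem ht hrt hl w i u hu with h1 | h1 <;>
    rcases sigma_mem ht hrt hl w i v hv with h2 | h2 <;>
      (rw [h1, h2] at hne; omega)

open Classical in
noncomputable def wUp (r t ℓ : ℕ) : Finset (Fin (ℓ*(r-t))) → ℕ :=
  fun e => if h : ∃ i : Fin ℓ, edgeAt r t ℓ i = e then fcol ℓ ((Classical.choose h : Fin ℓ) : ℕ) else 1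

lemma wUp_bounds (r t ℓ : ℕ) (e : Finset (Fin (ℓ*(r-t)))) :
    1 ≤ wUp r t ℓ e ∧ wUp r t ℓ e ≤ 3 := by
  rw [wUp]
  split_ifs
  · exact ⟨(fcol_bounds _ _).1, (fcol_bounds _ _).2⟩
  · omega

lemma wUp_edge {r t ℓ : ℕ} (ht : 1 ≤ t) (hrt : r = 2*t) (hl : 2 < ℓ) (i : Fin ℓ) :
    wUp r t ℓ (edgeAt r t ℓ i) = fcol ℓ (i:ℕ) := by
  have hex : ∃ j : Fin ℓ, edgeAt r t ℓ j = edgeAt r t ℓ i := ⟨i, rfl⟩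
  rw [wUp, dif_pos hex]
  congr 1
  rw [edgeAt_injective ht hrt hl (Classical.choose_spec hex)]

lemma edgeAt_mem {r t ℓ : ℕ} (i : Fin ℓ) : edgeAt r t ℓ i ∈ tightCycleEdges r t ℓ := by
  rw [tightCycleEdges_eq]
  exact Finset.mem_image_of_mem _ (Finset.mem_univ i)

lemma upper_bound {r t ℓ : ℕ} (ht : 1 ≤ t) (hrt : r = 2*t) (hl : 2 < ℓ) (hmod : ℓ % 4 ≠ 0) :
    HasNSDEdgeWeighting (tightCycleEdges r t ℓ) 3 := by
  refine ⟨wUp r t ℓ, fun e _ => wUp_bounds r t ℓ e, ?_⟩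
  intro e he _
  rw [tightCycleEdges_eq, Finset.mem_image] at he
  obtain ⟨i, -, rfl⟩ := he
  refine ⟨⟨(i:ℕ)*t, vertexAt_lt ht hrt i⟩, vtx_mem_self ht hrt hl i,
    ⟨(((i:ℕ)+1)%ℓ)*t, vertexAt_lt ht hrt ⟨((i:ℕ)+1)%ℓ, Nat.mod_lt _ (by omega)⟩⟩,
    vtx_mem_next ht hrt hl i, ?_⟩
  rw [sigma_eq_s11 ht hrt hl _ _ (i:ℕ) i.isLt (div_vertexAt ht (i:ℕ)),
    sigma_eq_s11 ht hrt hl _ _ (((i:ℕ)+1)%ℓ) (Nat.mod_lt _ (by omega)) (div_vertexAt ht _)]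
  rw [wUp_edge ht hrt hl, wUp_edge ht hrt hl, wUp_edge ht hrt hl, wUp_edge ht hrt hl]
  simp only []
  rw [show ((((i:ℕ)+1)%ℓ + ℓ - 1)%ℓ : ℕ) = (i:ℕ) from mA hl i.isLt]
  have hstep := fcol_step (i := ((i:ℕ)+ℓ-1)%ℓ) hl hmod (Nat.mod_lt _ (by omega))
  rw [mC hl i.isLt] at hstep
  omega

lemma lower_bound {r t ℓ : ℕ} (ht : 1 ≤ t) (hrt : r = 2*t) (hl : 2 < ℓ) (hmod : ℓ % 4 ≠ 0) :
    ¬ HasNSDEdgeWeighting (tightCycleEdges r t ℓ) 2 := by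
  rintro ⟨w, hw, hprop⟩
  have key : ∀ i : Fin ℓ,
      w (edgeAt r t ℓ ⟨((i:ℕ)+ℓ-1)%ℓ, Nat.mod_lt _ (by omega)⟩)
        ≠ w (edgeAt r t ℓ ⟨((i:ℕ)+1)%ℓ, Nat.mod_lt _ (by omega)⟩) := by
    intro i
    apply edge_forces ht hrt hl
    apply hprop (edgeAt r t ℓ i) (edgeAt_mem i)
    refine Finset.one_lt_card.2 ⟨_, vtx_mem_self ht hrt hl i, _, vtx_mem_next ht hrt hl i,
      vtx_ne ht hrt hl i⟩
  apply no_two_coloring hl hmod (fun x => w (edgeAt r t ℓ ⟨x % ℓ, Nat.mod_lt _ (by omega)⟩))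
  · intro j _
    exact hw _ (edgeAt_mem _)
  · intro j hj
    have hk := key ⟨(j+1)%ℓ, Nat.mod_lt _ (by omega)⟩
    have e1 : j % ℓ = ((j+1)%ℓ+ℓ-1)%ℓ := by rw [mA hl hj, Nat.mod_eq_of_lt hj]
    have e2 : (j+2)%ℓ % ℓ = ((j+1)%ℓ+1)%ℓ := by
      rw [mB hl hj, Nat.mod_eq_of_lt (Nat.mod_lt _ (by omega : 0 < ℓ))]
    rw [w_congr w _ _ e1, w_congr w _ _ e2]
    exact hk


/-- For `r` even, `t = r/2`, and the `r`-uniform `t`-tight cycle `C` of length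
`ℓ > 2` with `ℓ ≢ 0 (mod 4)`, `χ^e(C) = 3`. -/
theorem chiE_tightCycle_half_three (r t ℓ : ℕ) (ht : 1 ≤ t) (hrt : r = 2 * t)
    (hl : 2 < ℓ) (hmod : ℓ % 4 ≠ 0) :
    IsLeast {k : ℕ | 0 < k ∧ HasNSDEdgeWeighting (tightCycleEdges r t ℓ) k} 3 := by
  constructor
  · exact ⟨by norm_num, upper_bound ht hrt hl hmod⟩
  · rintro k ⟨hk0, hkNSD⟩
    by_contra hlt
    push_neg at hlt
    obtain ⟨w, hw, hp⟩ := hkNSD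
    exact lower_bound ht hrt hl hmod
      ⟨w, fun e he => ⟨(hw e he).1, le_trans (hw e he).2 (by omega)⟩, hp⟩
end

section
/- Let r be an even integer, t = r/2, and let C = C_{n,t}^{(r)} be the r-uniform t-tight cycle of length ℓ > 2 with ℓ ≡ 0 (mod 4). Then χ^e(C) = 2. -/
open Finset

lemma keyMem (t ℓ i v : ℕ) (ht : 1 ≤ t) (hl : 1 ≤ ℓ) (hi : i < ℓ) (hv : v < ℓ * t) :
    (∃ j, j < 2*t ∧ v = (i*t + j) % (ℓ*t)) ↔ (i = v/t ∨ (i+1) % ℓ = v/t) := by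
  have htℓ : t ≤ ℓ * t := Nat.le_mul_of_pos_left t hl
  constructor
  · rintro ⟨j, hj, rfl⟩
    by_cases hjt : j < t
    · have h1 : i*t + j < ℓ*t := by
        have : (i+1)*t ≤ ℓ*t := Nat.mul_le_mul_right t hi
        nlinarith
      rw [Nat.mod_eq_of_lt h1]
      left
      rw [mul_comm i t, Nat.mul_add_div ht, Nat.div_eq_of_lt hjt]
      omega
    · have hj' : j - t < t := by omega
      have hje : i*t + j = (i+1)*t + (j-t) := by ring_nf; omega
      rw [hje]
      by_cases hi1 : i + 1 < ℓ
      · have h1 : (i+1)*t + (j-t) < ℓ*t := by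
          have : (i+2)*t ≤ ℓ*t := Nat.mul_le_mul_right t hi1
          nlinarith
        rw [Nat.mod_eq_of_lt h1]
        right
        rw [Nat.mod_eq_of_lt hi1, mul_comm (i+1) t, Nat.mul_add_div ht,
          Nat.div_eq_of_lt hj']
      · have hi2 : i + 1 = ℓ := by omega
        rw [hi2, Nat.add_mod_left, Nat.mod_eq_of_lt (by omega), Nat.mod_self]
        right
        rw [Nat.div_eq_of_lt hj']
  · have hvq : t * (v/t) + v % t = v := Nat.div_add_mod v t
    have hs : v % t < t := Nat.mod_lt v ht
    rintro (rfl | h)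
    · exact ⟨v % t, by omega, by rw [mul_comm, hvq, Nat.mod_eq_of_lt hv]⟩
    · refine ⟨t + v % t, by omega, ?_⟩
      by_cases hi1 : i + 1 < ℓ
      · rw [Nat.mod_eq_of_lt hi1] at h
        have : i*t + (t + v % t) = v := by
          rw [← h, Nat.mul_add, Nat.mul_one, mul_comm t i] at hvq; omega
        rw [this, Nat.mod_eq_of_lt hv]
      · have hi2 : i + 1 = ℓ := by omega
        rw [hi2, Nat.mod_self] at h
        have hv0 : v = v % t := by rw [← h] at hvq; omega
        have : i*t + (t + v % t) = ℓ*t + v % t := by rw [← hi2]; ring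
        rw [this, Nat.add_mod_left, Nat.mod_eq_of_lt (by omega)]
        exact hv0

lemma modPred1 (ℓ x : ℕ) (hl : 1 ≤ ℓ) (hx : x < ℓ) : ((x + 1) % ℓ + ℓ - 1) % ℓ = x := by
  have h1 : (x + 1) % ℓ + ℓ - 1 = (x + 1) % ℓ + (ℓ - 1) := by omega
  rw [h1, Nat.mod_add_mod]
  have h2 : x + 1 + (ℓ - 1) = x + ℓ := by omega
  rw [h2, Nat.add_mod_right, Nat.mod_eq_of_lt hx]

lemma modPred2 (ℓ x : ℕ) (hl : 1 ≤ ℓ) (hx : x < ℓ) : ((x + ℓ - 1) % ℓ + 1) % ℓ = x := by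
  rw [Nat.mod_add_mod]
  have h2 : x + ℓ - 1 + 1 = x + ℓ := by omega
  rw [h2, Nat.add_mod_right, Nat.mod_eq_of_lt hx]

lemma modPredIff (ℓ a b : ℕ) (hl : 1 ≤ ℓ) (ha : a < ℓ) (hb : b < ℓ) :
    (a + 1) % ℓ = b ↔ a = (b + ℓ - 1) % ℓ := by
  constructor
  · rintro rfl; exact (modPred1 ℓ a hl ha).symm
  · rintro rfl; exact modPred2 ℓ b hl hb

open Classical in
noncomputable def tcEdge (r t ℓ : ℕ) (i : Fin ℓ) : Finset (Fin (ℓ * (r - t))) :=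
  Finset.univ.filter (fun v : Fin (ℓ * (r - t)) =>
    ∃ j < r, (v : ℕ) = ((i : ℕ) * (r - t) + j) % (ℓ * (r - t)))

lemma tcE_eq (r t ℓ : ℕ) : tightCycleEdges r t ℓ = Finset.univ.image (tcEdge r t ℓ) := rfl

section Main
variable {r t ℓ : ℕ} (ht : 1 ≤ t) (hrt : r = 2 * t) (hl : 2 < ℓ)

include ht hrt hl

lemma tc_mem' (i : Fin ℓ) (x : ℕ) (hx : x < ℓ * (r - t)) :
    ((⟨x, hx⟩ : Fin (ℓ * (r - t))) ∈ tcEdge r t ℓ i) ↔ (i.val = x/t ∨ (i.val+1) % ℓ = x/t) := by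
  have hd : r - t = t := by omega
  simp only [tcEdge, mem_filter, mem_univ, true_and]
  rw [hd, hrt]
  have hx' : x < ℓ * t := by rw [hd] at hx; exact hx
  exact keyMem t ℓ i x ht (by omega) i.isLt hx'

lemma tc_mem (i : Fin ℓ) (v : Fin (ℓ * (r - t))) :
    v ∈ tcEdge r t ℓ i ↔ (i.val = (v:ℕ)/t ∨ (i.val+1) % ℓ = (v:ℕ)/t) := by
  have := tc_mem' ht hrt hl i v.val v.isLt
  simpa using this

lemma tc_inj (i i' : Fin ℓ) (h : tcEdge r t ℓ i = tcEdge r t ℓ i') : i = i' := by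
  have hd : r - t = t := by omega
  have hmul : ∀ a : ℕ, a < ℓ → a * t < ℓ * (r - t) := by
    intro a ha; rw [hd]; exact (Nat.mul_lt_mul_right ht).2 ha
  have hdiv : ∀ a : ℕ, (a * t) / t = a := fun a => Nat.mul_div_cancel a ht
  have key : ∀ a b : Fin ℓ, tcEdge r t ℓ a = tcEdge r t ℓ b →
      (b.val = a.val ∨ (b.val + 1) % ℓ = a.val) := by
    intro a b hab
    have hm : (⟨a.val * t, hmul a.val a.isLt⟩ : Fin (ℓ*(r-t))) ∈ tcEdge r t ℓ a := by
      rw [tc_mem' ht hrt hl]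
      left; simp [hdiv]
    rw [hab, tc_mem' ht hrt hl] at hm
    simpa [hdiv] using hm
  rcases key i i' h with h1 | h1
  · exact (Fin.ext h1).symm
  rcases key i' i h.symm with h2 | h2
  · exact Fin.ext h2
  exfalso
  rw [← h2, Nat.mod_add_mod] at h1
  by_cases hc : i.val + 1 + 1 < ℓ
  · rw [Nat.mod_eq_of_lt hc] at h1; omega
  · have h3 : i.val + 1 + 1 - ℓ < ℓ := by omega
    rw [Nat.mod_eq_sub_mod (by omega), Nat.mod_eq_of_lt h3] at h1
    have := i.isLt; omega

lemma tc_sigma (w : Finset (Fin (ℓ * (r - t))) → ℕ) (v : Fin (ℓ * (r - t)))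
    (q : Fin ℓ) (hq : q.val = (v:ℕ)/t) :
    sigmaE (tightCycleEdges r t ℓ) w v
      = w (tcEdge r t ℓ q) + w (tcEdge r t ℓ ⟨(q.val + ℓ - 1) % ℓ, Nat.mod_lt _ (by omega)⟩) := by
  classical
  have hd : r - t = t := by omega
  have hql : (v:ℕ)/t < ℓ := by
    rw [Nat.div_lt_iff_lt_mul ht]
    exact lt_of_lt_of_eq v.isLt (by rw [hd])
  set q' : Fin ℓ := ⟨(q.val + ℓ - 1) % ℓ, Nat.mod_lt _ (by omega)⟩ with hq'
  have hq'v : q'.val = ((v:ℕ)/t + ℓ - 1) % ℓ := by rw [hq', ← hq]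
  have hq'succ : (q'.val + 1) % ℓ = (v:ℕ)/t := by
    rw [hq'v]; exact modPred2 ℓ _ (by omega) hql
  have hne : q ≠ q' := by
    intro hcon
    have hvv : q.val = (q.val + ℓ - 1) % ℓ := congrArg Fin.val hcon
    have h2 : ((q.val + ℓ - 1) % ℓ + 1) % ℓ = q.val := modPred2 ℓ q.val (by omega) q.isLt
    rw [← hvv] at h2
    by_cases hc : q.val + 1 < ℓ
    · rw [Nat.mod_eq_of_lt hc] at h2; omega
    · have hc2 : q.val + 1 = ℓ := by have := q.isLt; omega
      rw [hc2, Nat.mod_self] at h2; omega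
  have hnee : tcEdge r t ℓ q ≠ tcEdge r t ℓ q' :=
    fun h => hne (tc_inj ht hrt hl q q' h)
  have hfilter : (tightCycleEdges r t ℓ).filter (fun e => v ∈ e)
      = {tcEdge r t ℓ q, tcEdge r t ℓ q'} := by
    ext e
    simp only [mem_filter, tcE_eq, mem_image, mem_univ, true_and, mem_insert, mem_singleton]
    constructor
    · rintro ⟨⟨i, rfl⟩, hvi⟩
      rw [tc_mem ht hrt hl] at hvi
      rcases hvi with h1 | h1
      · left
        congr 1
        exact Fin.ext (by omega)
      · right
        congr 1
        apply Fin.ext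
        rw [hq'v]
        exact (modPredIff ℓ i.val ((v:ℕ)/t) (by omega) i.isLt hql).1 h1
    · rintro (rfl | rfl)
      · exact ⟨⟨q, rfl⟩, (tc_mem ht hrt hl q v).2 (Or.inl hq)⟩
      · exact ⟨⟨q', rfl⟩, (tc_mem ht hrt hl q' v).2 (Or.inr hq'succ)⟩
  rw [sigmaE, Finset.filter_congr_decidable, hfilter, Finset.sum_pair hnee]

end Main

/-- For `r` even, `t = r/2`, and the `r`-uniform `t`-tight cycle `C` of length
`ℓ > 2` with `ℓ ≡ 0 (mod 4)`, `χ^e(C) = 2`. -/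
theorem chiE_tightCycle_half_two (r t ℓ : ℕ) (ht : 1 ≤ t) (hrt : r = 2 * t)
    (hl : 2 < ℓ) (hmod : ℓ % 4 = 0) :
    IsLeast {k : ℕ | 0 < k ∧ HasNSDEdgeWeighting (tightCycleEdges r t ℓ) k} 2 := by
  classical
  have hd : r - t = t := by omega
  have h4 : 4 ∣ ℓ := Nat.dvd_of_mod_eq_zero hmod
  have hl4 : 4 ≤ ℓ := Nat.le_of_dvd (by omega) h4
  have hmul : ∀ a : ℕ, a < ℓ → a * t < ℓ * (r - t) := by
    intro a ha; rw [hd]; exact (Nat.mul_lt_mul_right ht).2 ha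
  have hdiv : ∀ a : ℕ, (a * t) / t = a := fun a => Nat.mul_div_cancel a ht
  have hqlt : ∀ x : Fin (ℓ*(r-t)), (x:ℕ)/t < ℓ := by
    intro x
    rw [Nat.div_lt_iff_lt_mul ht]
    exact lt_of_lt_of_eq x.isLt (by rw [hd])
  constructor
  · refine ⟨by norm_num, ?_⟩
    refine ⟨fun s => if ∃ i : Fin ℓ, s = tcEdge r t ℓ i ∧ (i.val % 4 = 2 ∨ i.val % 4 = 3)
      then 2 else 1, ?_, ?_⟩
    · intro e _
      dsimp only
      split_ifs <;> omega
    · intro e he hcard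
      set w : Finset (Fin (ℓ*(r-t))) → ℕ := fun s =>
        if ∃ i : Fin ℓ, s = tcEdge r t ℓ i ∧ (i.val % 4 = 2 ∨ i.val % 4 = 3) then 2 else 1
        with hwdef
      have hwv : ∀ i : Fin ℓ, w (tcEdge r t ℓ i)
          = if i.val % 4 = 2 ∨ i.val % 4 = 3 then 2 else 1 := by
        intro i
        by_cases hc : i.val % 4 = 2 ∨ i.val % 4 = 3
        · rw [if_pos hc, hwdef]
          exact if_pos ⟨i, rfl, hc⟩
        · rw [if_neg hc, hwdef]
          refine if_neg ?_
          rintro ⟨i', he', hc'⟩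
          exact hc ((tc_inj ht hrt hl i i' he') ▸ hc')
      rw [tcE_eq] at he
      obtain ⟨i, -, rfl⟩ := mem_image.1 he
      set u : Fin (ℓ*(r-t)) := ⟨i.val * t, hmul _ i.isLt⟩ with hu'
      set z : Fin (ℓ*(r-t)) := ⟨((i.val+1) % ℓ) * t, hmul _ (Nat.mod_lt _ (by omega))⟩ with hz'
      have hu : u ∈ tcEdge r t ℓ i := by
        rw [hu', tc_mem' ht hrt hl]
        left; rw [hdiv]
      have hz : z ∈ tcEdge r t ℓ i := by
        rw [hz', tc_mem' ht hrt hl]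
        right; rw [hdiv]
      refine ⟨u, hu, z, hz, ?_⟩
      have hqu : (i : Fin ℓ).val = (u:ℕ)/t := by rw [hu']; exact (hdiv _).symm
      have hzlt : (i.val + 1) % ℓ < ℓ := Nat.mod_lt _ (by omega)
      have hqz : (⟨(i.val+1) % ℓ, hzlt⟩ : Fin ℓ).val = (z:ℕ)/t := by
        rw [hz']; exact (hdiv _).symm
      rw [tc_sigma ht hrt hl w u i hqu, tc_sigma ht hrt hl w z ⟨(i.val+1) % ℓ, hzlt⟩ hqz]
      have hback : (⟨((⟨(i.val+1) % ℓ, hzlt⟩ : Fin ℓ).val + ℓ - 1) % ℓ,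
          Nat.mod_lt _ (by omega)⟩ : Fin ℓ) = i :=
        Fin.ext (modPred1 ℓ i.val (by omega) i.isLt)
      rw [hback]
      rw [hwv, hwv, hwv]
      simp only []
      rw [Nat.mod_mod_of_dvd _ h4, Nat.mod_mod_of_dvd _ h4]
      have hi := i.isLt
      split_ifs <;> omega
  · rintro k ⟨hk0, w, hwb, hprop⟩
    by_contra hlt
    have hk1 : k = 1 := by omega
    have hEmem : ∀ i : Fin ℓ, tcEdge r t ℓ i ∈ tightCycleEdges r t ℓ := by
      intro i; rw [tcE_eq]; exact mem_image_of_mem _ (mem_univ _)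
    have hw1 : ∀ i : Fin ℓ, w (tcEdge r t ℓ i) = 1 := by
      intro i
      have := hwb _ (hEmem i)
      omega
    have hsig : ∀ x : Fin (ℓ*(r-t)), sigmaE (tightCycleEdges r t ℓ) w x = 2 := by
      intro x
      rw [tc_sigma ht hrt hl w x ⟨(x:ℕ)/t, hqlt x⟩ rfl, hw1, hw1]
    set i0 : Fin ℓ := ⟨0, by omega⟩ with hi0
    have hcard : 2 ≤ (tcEdge r t ℓ i0).card := by
      refine Finset.one_lt_card.2 ⟨⟨0 * t, hmul 0 (by omega)⟩, ?_, ⟨(1 % ℓ) * t, hmul _ (Nat.mod_lt _ (by omega))⟩, ?_, ?_⟩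
      · rw [tc_mem' ht hrt hl]; left; rw [hdiv]
      · rw [tc_mem' ht hrt hl]; right; rw [hdiv, hi0]
      · intro hcon
        have := congrArg Fin.val hcon
        simp only [] at this
        rw [Nat.mod_eq_of_lt (by omega)] at this
        omega
    obtain ⟨a, _, b, _, hab⟩ := hprop _ (hEmem i0) hcard
    exact hab (by rw [hsig a, hsig b])
end

section
/- Let r, s ≥ 3 and 1 ≤ t < r/2, and let H = Θ_t^r(ℓ_1,…,ℓ_s) be the r-uniform theta hypergraph. Then χ^e(H) = 1. -/
open Finset

/-- The vertex type of the `r`-uniform `t`-tight theta hypergraph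
`Θ_t^r(L 0, …, L (s-1))`: `t` common initial vertices `x_1,…,x_t`,
`t` common final vertices `y_1,…,y_t`, and for each path `i` its
`L i * (r-t) - t` internal vertices. -/
def ThetaVert (r t s : ℕ) (L : Fin s → ℕ) : Type :=
  (Fin t ⊕ Fin t) ⊕ (Σ i : Fin s, Fin (L i * (r - t) - t))

instance (r t s : ℕ) (L : Fin s → ℕ) : Fintype (ThetaVert r t s L) := by
  unfold ThetaVert; infer_instance

instance (r t s : ℕ) (L : Fin s → ℕ) : DecidableEq (ThetaVert r t s L) := by
  unfold ThetaVert; infer_instance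

/-- Membership of a vertex of the theta hypergraph in the `m`-th edge
(0-indexed, `m < L i`) of the `i`-th path.  In the `i`-th path, the vertex
`x_a` has (0-indexed) position `a`, the vertex `y_b` has position
`L i * (r-t) + b`, and the `c`-th internal vertex of path `i` has position
`t + c`; the `m`-th edge consists of the vertices at positions
`m*(r-t), …, m*(r-t) + r - 1`. -/
def thetaMem (r t : ℕ) {s : ℕ} (L : Fin s → ℕ) (i : Fin s) (m : ℕ) :
    ThetaVert r t s L → Prop
  | Sum.inl (Sum.inl a) =>
      m * (r - t) ≤ (a : ℕ) ∧ (a : ℕ) < m * (r - t) + r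
  | Sum.inl (Sum.inr b) =>
      m * (r - t) ≤ L i * (r - t) + (b : ℕ) ∧ L i * (r - t) + (b : ℕ) < m * (r - t) + r
  | Sum.inr ⟨i', c⟩ =>
      i' = i ∧ m * (r - t) ≤ t + (c : ℕ) ∧ t + (c : ℕ) < m * (r - t) + r

open Classical in
/-- The edge set of the `r`-uniform `t`-tight theta hypergraph with `s` paths of
lengths `L 0, …, L (s-1)`. -/
noncomputable def thetaEdges (r t : ℕ) {s : ℕ} (L : Fin s → ℕ) :
    Finset (Finset (ThetaVert r t s L)) :=
  (Finset.univ : Finset (Σ i : Fin s, Fin (L i))).image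
    (fun p => Finset.univ.filter (fun v => thetaMem r t L p.1 (p.2 : ℕ) v))

section ProofAux

open Classical in
/-- The `m`-th edge of the `i`-th path of the theta hypergraph. -/
noncomputable def edgeOf (r t : ℕ) {s : ℕ} (L : Fin s → ℕ) (i : Fin s) (m : ℕ) :
    Finset (ThetaVert r t s L) :=
  Finset.univ.filter (fun v => thetaMem r t L i m v)

lemma thetaEdges_eq_image (r t : ℕ) {s : ℕ} (L : Fin s → ℕ) :
    thetaEdges r t L =
      (Finset.univ : Finset (Σ i : Fin s, Fin (L i))).image
        (fun p => edgeOf r t L p.1 (p.2 : ℕ)) := rfl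

lemma edgeOf_mem_thetaEdges (r t : ℕ) {s : ℕ} (L : Fin s → ℕ) (i : Fin s) (m : ℕ)
    (hm : m < L i) : edgeOf r t L i m ∈ thetaEdges r t L := by
  rw [thetaEdges_eq_image]
  exact Finset.mem_image.2 ⟨⟨i, ⟨m, hm⟩⟩, Finset.mem_univ _, rfl⟩

lemma mem_edgeOf {r t : ℕ} {s : ℕ} {L : Fin s → ℕ} {i : Fin s} {m : ℕ}
    {v : ThetaVert r t s L} : v ∈ edgeOf r t L i m ↔ thetaMem r t L i m v := by
  simp [edgeOf]

lemma pos_unique {r t : ℕ} (ht : 1 ≤ t) (h2t : 2 * t < r) {m m' : ℕ}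
    (h1 : m' * (r - t) ≤ t + m * (r - t)) (h2 : t + m * (r - t) < m' * (r - t) + r) :
    m' = m := by
  have hd : t < r - t := by omega
  have hru : r = (r - t) + t := by omega
  rcases lt_trichotomy m' m with h | h | h
  · have h3 : (m' + 1) * (r - t) ≤ m * (r - t) := mul_le_mul_left (by omega) _
    rw [add_one_mul] at h3
    linarith
  · exact h
  · have h3 : (m + 1) * (r - t) ≤ m' * (r - t) := mul_le_mul_left (by omega) _
    rw [add_one_mul] at h3
    linarith

lemma sigmaE_one {V : Type*} [Fintype V] (E : Finset (Finset V)) (v : V)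
    [DecidablePred fun e : Finset V => v ∈ e] :
    sigmaE E (fun _ => 1) v = (E.filter (fun e => v ∈ e)).card := by
  simp only [sigmaE, Finset.sum_const, smul_eq_mul, mul_one]
  exact congrArg Finset.card (Finset.filter_congr_decidable E (fun e => v ∈ e) _)

end ProofAux

/-- For `r, s ≥ 3` and `1 ≤ t < r/2`, the `r`-uniform theta hypergraph
`H = Θ_t^r(ℓ_1,…,ℓ_s)` satisfies `χ^e(H) = 1`. -/
theorem chiE_theta_small_t (r t s : ℕ) (L : Fin s → ℕ) (hr : 3 ≤ r) (hs : 3 ≤ s)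
    (ht : 1 ≤ t) (h2t : 2 * t < r)
    (hL : ∀ i, t ≤ L i * (r - t))
    (hone : ∀ i j, L i = 1 → L j = 1 → i = j) :
    IsLeast {k : ℕ | 0 < k ∧ HasNSDEdgeWeighting (thetaEdges r t L) k} 1 := by
  classical
  have hd : t < r - t := by omega
  have hLpos : ∀ i, 1 ≤ L i := by
    intro i
    have h := hL i
    rcases Nat.eq_zero_or_pos (L i) with h0 | h1
    · rw [h0, zero_mul] at h; omega
    · exact h1
  constructor
  · refine ⟨Nat.one_pos, fun _ => 1, fun e _ => ⟨le_rfl, le_rfl⟩, ?_⟩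
    intro e he _
    rw [thetaEdges_eq_image] at he
    obtain ⟨⟨i, mf⟩, -, rfl⟩ := Finset.mem_image.1 he
    set m : ℕ := (mf : ℕ) with hmdef
    have hmLi : m < L i := mf.isLt
    have hBi : m * (r - t) + (r - t) ≤ L i * (r - t) := by
      have h := mul_le_mul_left (show m + 1 ≤ L i by omega) (r - t)
      rw [add_one_mul] at h
      exact h
    have huc : m * (r - t) < L i * (r - t) - t := by
      rw [lt_tsub_iff_right]
      linarith
    -- the degree-one vertex
    set uv : ThetaVert r t s L := Sum.inr ⟨i, ⟨m * (r - t), huc⟩⟩ with huv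
    have hu_mem : uv ∈ edgeOf r t L i m :=
      mem_edgeOf.2 ⟨rfl, by show m * (r - t) ≤ t + m * (r - t); omega,
        by show t + m * (r - t) < m * (r - t) + r; omega⟩
    -- uniqueness: uv is in no other edge
    have hu_unique : ∀ (j : Fin s) (m' : ℕ), thetaMem r t L j m' uv → j = i ∧ m' = m := by
      intro j m' hmem
      obtain ⟨hji, h1, h2⟩ := hmem
      exact ⟨hji.symm, pos_unique ht h2t h1 h2⟩
    have hfilter : (thetaEdges r t L).filter (fun e => uv ∈ e) = {edgeOf r t L i m} := by
      ext e
      simp only [Finset.mem_filter, Finset.mem_singleton]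
      constructor
      · rintro ⟨he', hu⟩
        rw [thetaEdges_eq_image] at he'
        obtain ⟨⟨j, m'f⟩, -, rfl⟩ := Finset.mem_image.1 he'
        have hm' := mem_edgeOf.1 hu
        obtain ⟨rfl, hm'm⟩ := hu_unique j (m'f : ℕ) hm'
        rw [hm'm]
      · rintro rfl
        exact ⟨edgeOf_mem_thetaEdges r t L i m hmLi, hu_mem⟩
    have hsu : sigmaE (thetaEdges r t L) (fun _ => 1) uv = 1 := by
      rw [sigmaE_one, hfilter, Finset.card_singleton]
    -- helper to get sigma ≥ 2
    have two_le : ∀ (vv : ThetaVert r t s L) (e1 e2 : Finset (ThetaVert r t s L)),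
        e1 ≠ e2 → e1 ∈ thetaEdges r t L → e2 ∈ thetaEdges r t L → vv ∈ e1 → vv ∈ e2 →
        2 ≤ sigmaE (thetaEdges r t L) (fun _ => 1) vv := by
      intro vv e1 e2 hne he1 he2 hv1 hv2
      rw [sigmaE_one]
      exact Finset.one_lt_card.2 ⟨e1, Finset.mem_filter.2 ⟨he1, hv1⟩,
        e2, Finset.mem_filter.2 ⟨he2, hv2⟩, hne⟩
    rcases Nat.eq_zero_or_pos m with hm0 | hm1
    · -- first edge of the path: use the common vertex x₀
      set x0 : ThetaVert r t s L := Sum.inl (Sum.inl ⟨0, ht⟩) with hx0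
      have hx0mem : ∀ j : Fin s, x0 ∈ edgeOf r t L j 0 := by
        intro j
        exact mem_edgeOf.2 ⟨by show 0 * (r - t) ≤ 0; omega,
          by show (0 : ℕ) < 0 * (r - t) + r; omega⟩
      have hs0 : (0 : ℕ) < s := by omega
      have hs1 : (1 : ℕ) < s := by omega
      set j0 : Fin s := ⟨0, hs0⟩ with hj0
      set j1 : Fin s := ⟨1, hs1⟩ with hj1
      have hw0 : (0 : ℕ) < L j0 * (r - t) - t := by
        have h := mul_le_mul_left (hLpos j0) (r - t)
        rw [one_mul] at h
        omega
      set w0 : ThetaVert r t s L := Sum.inr ⟨j0, ⟨0, hw0⟩⟩ with hw0def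
      have hw0in : w0 ∈ edgeOf r t L j0 0 :=
        mem_edgeOf.2 ⟨rfl, by show 0 * (r - t) ≤ t + 0; omega,
          by show t + 0 < 0 * (r - t) + r; omega⟩
      have hw0out : w0 ∉ edgeOf r t L j1 0 := by
        rw [mem_edgeOf]
        rintro ⟨hj, -⟩
        have h01 : (0 : ℕ) = 1 := congrArg Fin.val hj
        omega
      have hne : edgeOf r t L j0 0 ≠ edgeOf r t L j1 0 := by
        intro h
        exact hw0out (h ▸ hw0in)
      have hsx : 2 ≤ sigmaE (thetaEdges r t L) (fun _ => 1) x0 :=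
        two_le x0 _ _ hne (edgeOf_mem_thetaEdges r t L j0 0 (hLpos j0))
          (edgeOf_mem_thetaEdges r t L j1 0 (hLpos j1)) (hx0mem j0) (hx0mem j1)
      refine ⟨uv, hu_mem, x0, ?_, ?_⟩
      · have h := hx0mem i
        rwa [hm0]
      · omega
    · -- later edge: the first vertex of this edge is shared with the previous edge
      have htm : t ≤ m * (r - t) := by
        have h1 : 1 * (r - t) ≤ m * (r - t) := mul_le_mul_left (by omega) _
        rw [one_mul] at h1
        omega
      have hvc : m * (r - t) - t < L i * (r - t) - t :=
        Nat.sub_lt_sub_right htm (by linarith)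
      set vv : ThetaVert r t s L := Sum.inr ⟨i, ⟨m * (r - t) - t, hvc⟩⟩ with hvv
      have hstep : (m - 1) * (r - t) + (r - t) = m * (r - t) := by
        rw [← add_one_mul]
        congr 1
        omega
      have hv_mem : vv ∈ edgeOf r t L i m :=
        mem_edgeOf.2 ⟨rfl, by show m * (r - t) ≤ t + (m * (r - t) - t); omega,
          by show t + (m * (r - t) - t) < m * (r - t) + r; omega⟩
      have hv_mem' : vv ∈ edgeOf r t L i (m - 1) :=
        mem_edgeOf.2 ⟨rfl, by show (m - 1) * (r - t) ≤ t + (m * (r - t) - t); omega,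
          by show t + (m * (r - t) - t) < (m - 1) * (r - t) + r; omega⟩
      have hne : edgeOf r t L i (m - 1) ≠ edgeOf r t L i m := by
        intro h
        have h1 : uv ∈ edgeOf r t L i (m - 1) := h.symm ▸ hu_mem
        have h2 := (hu_unique i (m - 1) (mem_edgeOf.1 h1)).2
        omega
      have hsv : 2 ≤ sigmaE (thetaEdges r t L) (fun _ => 1) vv :=
        two_le vv _ _ hne (edgeOf_mem_thetaEdges r t L i (m - 1) (by omega))
          (edgeOf_mem_thetaEdges r t L i m hmLi) hv_mem' hv_mem
      exact ⟨uv, hu_mem, vv, hv_mem, by omega⟩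
  · rintro k ⟨hk, -⟩
    exact hk
end

section
/- Let r, s ≥ 3 and r/2 < t < r, and let H = Θ_t^r(ℓ_1,…,ℓ_s) be the r-uniform theta hypergraph. If r−t divides r, k = r/(r−t), and ℓ_i > 2(k−1) for some 1 ≤ i ≤ s, then χ^e(H) = 2; otherwise (i.e., if r−t does not divide r, or r−t divides r and ℓ_i ≤ 2(k−1) for all i), χ^e(H) = 1. -/
open Finset

/-!
Write `d = r - t` and number the vertices of path `i` by positions `0, …, L i * d + t - 1`: the
`x`'s, then the internal vertices, then the `y`'s; its `m`-th edge covers `[m d, m d + r)`. For a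
positive weighting, the set of edges through a vertex only grows when an edge starts, and only
shrinks when one ends, which separates two `x`'s (or two `y`'s) lying on either side of an edge
boundary, and two neighbouring internal vertices at a boundary where no edge starts and ends
at once.

If `d ∤ r`, starts and ends never coincide and the constant weighting `1` works. If `r = (n + 1) d`
then `t = n d`, every internal vertex lies in exactly `n + 1` edges, and an edge made of internal
vertices only, which exists iff some `ℓ_i > 2 n`, is monochromatic under constant weights. When
all `ℓ_i ≤ 2 n` every edge meets `x`'s or `y`'s, and `x_{t-1}`, `y_0` collect `n` edges from
each of at least two paths. Otherwise weight `2` on the edges of index divisible by `n` makes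
every internal window of `n` blocks contain two blocks with different `σ^e`.
-/

section Hypergraph

variable {V : Type*} [Fintype V] {E : Finset (Finset V)} {w : Finset V → ℕ}

def IsNonMonochromatic (E : Finset (Finset V)) (w : Finset V → ℕ) (e : Finset V) : Prop :=
  ∃ u ∈ e, ∃ v ∈ e, sigmaE E w u ≠ sigmaE E w v

lemma IsNonMonochromatic.of_lt {e : Finset V} {u v : V} (hu : u ∈ e) (hv : v ∈ e)
    (h : sigmaE E w u < sigmaE E w v) : IsNonMonochromatic E w e :=
  ⟨u, hu, v, hv, h.ne⟩

lemma sum_le_sigmaE {A : Finset (Finset V)} {v : V} (hA : A ⊆ E) (hv : ∀ e ∈ A, v ∈ e) :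
    ∑ e ∈ A, w e ≤ sigmaE E w v := by
  classical
  exact sum_le_sum_of_subset fun e he => mem_filter.mpr ⟨hA he, hv e he⟩

lemma sigmaE_lt_sigmaE_of_subset {u v : V} (hw : ∀ e ∈ E, 1 ≤ w e)
    (hsub : ∀ e ∈ E, u ∈ e → v ∈ e) {e₀ : Finset V} (he₀ : e₀ ∈ E) (hv : v ∈ e₀)
    (hu : u ∉ e₀) : sigmaE E w u < sigmaE E w v := by
  classical
  refine sum_lt_sum_of_subset (i := e₀) ?_ ?_ ?_ (hw e₀ he₀) fun _ _ _ => Nat.zero_le _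
  · intro e he
    simp only [mem_filter] at he ⊢
    exact ⟨he.1, hsub e he.1 he.2⟩
  · exact mem_filter.mpr ⟨he₀, hv⟩
  · simp [hu]

end Hypergraph

namespace ThetaHypergraph

variable {r t s : ℕ} {L : Fin s → ℕ}

open Classical in
noncomputable def pathEdge (r t : ℕ) {s : ℕ} (L : Fin s → ℕ) (i : Fin s) (m : ℕ) :
    Finset (ThetaVert r t s L) :=
  univ.filter (fun v => thetaMem r t L i m v)

def xVert (a : Fin t) : ThetaVert r t s L := Sum.inl (Sum.inl a)

def yVert (b : Fin t) : ThetaVert r t s L := Sum.inl (Sum.inr b)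

def OnPath (i : Fin s) : ThetaVert r t s L → Prop
  | Sum.inl _ => True
  | Sum.inr ⟨j, _⟩ => j = i

/-- The position along path `i`, as in `thetaMem`; junk for internal vertices of other paths. -/
def pathPos (i : Fin s) : ThetaVert r t s L → ℕ
  | Sum.inl (Sum.inl a) => a
  | Sum.inl (Sum.inr b) => L i * (r - t) + b
  | Sum.inr ⟨_, c⟩ => t + c

def pathVertex (i : Fin s) (p : ℕ) (hp : p < L i * (r - t)) : ThetaVert r t s L :=
  if hpt : p < t then Sum.inl (Sum.inl ⟨p, hpt⟩) else Sum.inr ⟨i, ⟨p - t, by omega⟩⟩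

lemma mem_pathEdge {i : Fin s} {m : ℕ} {v : ThetaVert r t s L} :
    v ∈ pathEdge r t L i m ↔
      OnPath i v ∧ m * (r - t) ≤ pathPos i v ∧ pathPos i v < m * (r - t) + r := by
  simp only [pathEdge, mem_filter, mem_univ, true_and]
  rcases v with (a | b) | ⟨j, c⟩ <;> simp [thetaMem, OnPath, pathPos]

lemma mem_thetaEdges {e : Finset (ThetaVert r t s L)} :
    e ∈ thetaEdges r t L ↔ ∃ i m, m < L i ∧ e = pathEdge r t L i m := by
  simp only [thetaEdges, mem_image, mem_univ, true_and]
  constructor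
  · rintro ⟨⟨i, m⟩, rfl⟩
    exact ⟨i, m, m.isLt, rfl⟩
  · rintro ⟨i, m, hm, rfl⟩
    exact ⟨⟨i, ⟨m, hm⟩⟩, rfl⟩

lemma pathEdge_mem_thetaEdges {i : Fin s} {m : ℕ} (hm : m < L i) :
    pathEdge r t L i m ∈ thetaEdges r t L :=
  mem_thetaEdges.mpr ⟨i, m, hm, rfl⟩

lemma xVert_mem_pathEdge {i : Fin s} {m : ℕ} {a : Fin t} :
    (xVert a : ThetaVert r t s L) ∈ pathEdge r t L i m ↔
      m * (r - t) ≤ a ∧ (a : ℕ) < m * (r - t) + r := by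
  rw [mem_pathEdge]; simp [xVert, OnPath, pathPos]

lemma yVert_mem_pathEdge {i : Fin s} {m : ℕ} {b : Fin t} :
    (yVert b : ThetaVert r t s L) ∈ pathEdge r t L i m ↔
      m * (r - t) ≤ L i * (r - t) + b ∧ L i * (r - t) + b < m * (r - t) + r := by
  rw [mem_pathEdge]; simp [yVert, OnPath, pathPos]

lemma onPath_xVert {i : Fin s} (a : Fin t) : OnPath i (xVert a : ThetaVert r t s L) := trivial

lemma onPath_yVert {i : Fin s} (b : Fin t) : OnPath i (yVert b : ThetaVert r t s L) := trivial

lemma pathPos_xVert {i : Fin s} (a : Fin t) : pathPos i (xVert a : ThetaVert r t s L) = a := rfl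

lemma pathPos_yVert {i : Fin s} (b : Fin t) :
    pathPos i (yVert b : ThetaVert r t s L) = L i * (r - t) + b := rfl

lemma onPath_pathVertex {i : Fin s} {p : ℕ} (hp : p < L i * (r - t)) :
    OnPath i (pathVertex i p hp) := by
  by_cases hpt : p < t <;> simp [pathVertex, hpt, OnPath]

lemma pathPos_pathVertex {i : Fin s} {p : ℕ} (hp : p < L i * (r - t)) (j : Fin s) :
    pathPos j (pathVertex i p hp) = p := by
  by_cases hpt : p < t
  · simp [pathVertex, hpt, pathPos]
  · simp [pathVertex, hpt, pathPos, Nat.add_sub_of_le (not_lt.mp hpt)]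

lemma mem_pathEdge_pathVertex {i : Fin s} {m p : ℕ} (hp : p < L i * (r - t)) :
    pathVertex i p hp ∈ pathEdge r t L i m ↔ m * (r - t) ≤ p ∧ p < m * (r - t) + r := by
  rw [mem_pathEdge, pathPos_pathVertex hp]
  exact and_iff_right (onPath_pathVertex hp)

lemma onPath_iff_of_internal {i : Fin s} {v : ThetaVert r t s L} (hv : OnPath i v)
    (h₁ : t ≤ pathPos i v) (h₂ : pathPos i v < L i * (r - t)) (j : Fin s) :
    OnPath j v ↔ j = i := by
  rcases v with (a | b) | ⟨k, c⟩
  · exact absurd a.isLt (not_lt.mpr h₁)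
  · exact absurd h₂ (by simp only [pathPos]; omega)
  · simp only [OnPath] at hv ⊢; subst hv; exact eq_comm

lemma le_of_pathEdge_subset (htr : t < r) {i j : Fin s} {m m' : ℕ} (hm : m < L i)
    (h : pathEdge r t L i m ⊆ pathEdge r t L j m') : m' ≤ m := by
  have hp : m * (r - t) < L i * (r - t) := Nat.mul_lt_mul_of_pos_right hm (by omega)
  have hv := h ((mem_pathEdge_pathVertex hp).mpr ⟨le_rfl, by omega⟩)
  rw [mem_pathEdge, pathPos_pathVertex] at hv
  exact Nat.le_of_mul_le_mul_right hv.2.1 (by omega)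

/-- An edge determines its index along the path, even when two paths without internal vertices
share their edges. -/
lemma index_eq_of_pathEdge_eq (htr : t < r) {i j : Fin s} {m m' : ℕ} (hm : m < L i)
    (hm' : m' < L j) (h : pathEdge r t L i m = pathEdge r t L j m') : m = m' :=
  le_antisymm (le_of_pathEdge_subset htr hm' h.ge) (le_of_pathEdge_subset htr hm h.le)

lemma pathEdge_ne_of_ne (htr : t < r) {i j : Fin s} {m m' : ℕ} (hi : t < L i * (r - t))
    (hm : m < L i) (hij : i ≠ j) : pathEdge r t L i m ≠ pathEdge r t L j m' := by
  intro h
  have hmL : m * (r - t) < L i * (r - t) := Nat.mul_lt_mul_of_pos_right hm (by omega)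
  have hp : max (m * (r - t)) t < L i * (r - t) := max_lt hmL hi
  have hv := (mem_pathEdge_pathVertex (m := m) hp).mpr ⟨le_max_left _ _, by omega⟩
  rw [h, mem_pathEdge] at hv
  have hinternal := onPath_iff_of_internal (onPath_pathVertex hp)
    (by rw [pathPos_pathVertex]; omega) (by rw [pathPos_pathVertex]; exact hp) j
  exact hij (hinternal.mp hv.1).symm

def edgeIndicesAt (r t : ℕ) {s : ℕ} (L : Fin s → ℕ) (i : Fin s) (p : ℕ) : Finset ℕ :=
  (range (L i)).filter (fun m => m * (r - t) ≤ p ∧ p < m * (r - t) + r)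

lemma mem_edgeIndicesAt {i : Fin s} {p m : ℕ} :
    m ∈ edgeIndicesAt r t L i p ↔ m < L i ∧ m * (r - t) ≤ p ∧ p < m * (r - t) + r := by
  simp [edgeIndicesAt]

lemma pathEdge_injOn (htr : t < r) (i : Fin s) (p : ℕ) :
    Set.InjOn (pathEdge r t L i) (edgeIndicesAt r t L i p) := fun _ hm _ hm' h =>
  index_eq_of_pathEdge_eq htr (mem_edgeIndicesAt.mp hm).1 (mem_edgeIndicesAt.mp hm').1 h

/-- The part of `σ^e` at position `p` that comes from the edges of path `i`. -/
noncomputable def pathLoad (w : Finset (ThetaVert r t s L) → ℕ) (i : Fin s) (p : ℕ) : ℕ :=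
  ∑ m ∈ edgeIndicesAt r t L i p, w (pathEdge r t L i m)

lemma sigmaE_eq_pathLoad (htr : t < r) (w : Finset (ThetaVert r t s L) → ℕ) {i : Fin s}
    {v : ThetaVert r t s L} (hv : OnPath i v) (h₁ : t ≤ pathPos i v)
    (h₂ : pathPos i v < L i * (r - t)) :
    sigmaE (thetaEdges r t L) w v = pathLoad w i (pathPos i v) := by
  classical
  have hedges : (thetaEdges r t L).filter (fun e => v ∈ e) =
      (edgeIndicesAt r t L i (pathPos i v)).image (pathEdge r t L i) := by
    ext e
    simp only [mem_filter, mem_image, mem_edgeIndicesAt, mem_thetaEdges]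
    constructor
    · rintro ⟨⟨j, m, hm, rfl⟩, hve⟩
      obtain rfl := (onPath_iff_of_internal hv h₁ h₂ j).mp (mem_pathEdge.mp hve).1
      exact ⟨m, ⟨hm, (mem_pathEdge.mp hve).2⟩, rfl⟩
    · rintro ⟨m, ⟨hm, hmv⟩, rfl⟩
      exact ⟨⟨i, m, hm, rfl⟩, mem_pathEdge.mpr ⟨hv, hmv⟩⟩
  unfold sigmaE pathLoad
  rw [← sum_image (pathEdge_injOn htr i _), ← hedges]
  convert rfl

lemma sigmaE_pathVertex (htr : t < r) (w : Finset (ThetaVert r t s L) → ℕ) {i : Fin s}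
    {p : ℕ} (hp : p < L i * (r - t)) (ht : t ≤ p) :
    sigmaE (thetaEdges r t L) w (pathVertex i p hp) = pathLoad w i p := by
  have h := sigmaE_eq_pathLoad htr w (onPath_pathVertex hp) (by rwa [pathPos_pathVertex])
    (by rwa [pathPos_pathVertex])
  rwa [pathPos_pathVertex] at h

/-- The two families of edges are disjoint because path `i` has an internal vertex. -/
lemma pathLoad_add_pathLoad_le_sigmaE (htr : t < r) (w : Finset (ThetaVert r t s L) → ℕ)
    {i j : Fin s} (hij : i ≠ j) (hi : t < L i * (r - t)) {v : ThetaVert r t s L}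
    (hvi : OnPath i v) (hvj : OnPath j v) :
    pathLoad w i (pathPos i v) + pathLoad w j (pathPos j v) ≤
      sigmaE (thetaEdges r t L) w v := by
  classical
  have hdisj : Disjoint ((edgeIndicesAt r t L i (pathPos i v)).image (pathEdge r t L i))
      ((edgeIndicesAt r t L j (pathPos j v)).image (pathEdge r t L j)) := by
    simp only [disjoint_left, mem_image]
    rintro _ ⟨m, hm, rfl⟩ ⟨m', -, h⟩
    exact pathEdge_ne_of_ne htr hi (mem_edgeIndicesAt.mp hm).1 hij h.symm
  unfold pathLoad
  rw [← sum_image (pathEdge_injOn htr i _), ← sum_image (pathEdge_injOn htr j _),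
    ← sum_union hdisj]
  apply sum_le_sigmaE
  · intro e he
    rcases mem_union.mp he with he | he <;> obtain ⟨m, hm, rfl⟩ := mem_image.mp he <;>
      exact pathEdge_mem_thetaEdges (mem_edgeIndicesAt.mp hm).1
  · intro e he
    rcases mem_union.mp he with he | he <;> obtain ⟨m, hm, rfl⟩ := mem_image.mp he
    · exact mem_pathEdge.mpr ⟨hvi, (mem_edgeIndicesAt.mp hm).2⟩
    · exact mem_pathEdge.mpr ⟨hvj, (mem_edgeIndicesAt.mp hm).2⟩

lemma pathLoad_lt_pathLoad_succ (htr : t < r) {w : Finset (ThetaVert r t s L) → ℕ}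
    (hw : ∀ e ∈ thetaEdges r t L, 1 ≤ w e) {i : Fin s} {p q : ℕ} (hq : q < L i)
    (hstart : p + 1 = q * (r - t)) (hend : ∀ m, m * (r - t) + r ≠ p + 1) :
    pathLoad w i p < pathLoad w i (p + 1) := by
  refine sum_lt_sum_of_subset (i := q) ?_ ?_ ?_ (hw _ (pathEdge_mem_thetaEdges hq))
    fun _ _ _ => Nat.zero_le _
  · intro m hm
    rw [mem_edgeIndicesAt] at hm ⊢
    have := hend m
    omega
  · rw [mem_edgeIndicesAt]
    omega
  · rw [mem_edgeIndicesAt]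
    omega

lemma sigmaE_xVert_lt (htr : t < r) {w : Finset (ThetaVert r t s L) → ℕ}
    (hw : ∀ e ∈ thetaEdges r t L, 1 ≤ w e) {a a' : Fin t} {j : Fin s} {m : ℕ} (hm : m < L j)
    (ha : (a : ℕ) < m * (r - t)) (ha' : m * (r - t) ≤ a') :
    sigmaE (thetaEdges r t L) w (xVert a) < sigmaE (thetaEdges r t L) w (xVert a') := by
  refine sigmaE_lt_sigmaE_of_subset hw ?_ (pathEdge_mem_thetaEdges hm)
    (xVert_mem_pathEdge.mpr ⟨ha', by omega⟩) (by rw [xVert_mem_pathEdge]; omega)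
  intro e he hae
  obtain ⟨j', m', -, rfl⟩ := mem_thetaEdges.mp he
  rw [xVert_mem_pathEdge] at hae ⊢
  omega

lemma sigmaE_yVert_lt {w : Finset (ThetaVert r t s L) → ℕ}
    (hw : ∀ e ∈ thetaEdges r t L, 1 ≤ w e) {b b' : Fin t} {j : Fin s} {m : ℕ} (hm : m < L j)
    (hb : L j * (r - t) + b < m * (r - t) + r) (hb' : m * (r - t) + r ≤ L j * (r - t) + b') :
    sigmaE (thetaEdges r t L) w (yVert b') < sigmaE (thetaEdges r t L) w (yVert b) := by
  have hmL : ∀ {j : Fin s} {m : ℕ}, m < L j → m * (r - t) ≤ L j * (r - t) :=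
    fun hm => Nat.mul_le_mul_right _ hm.le
  refine sigmaE_lt_sigmaE_of_subset hw ?_ (pathEdge_mem_thetaEdges hm)
    (yVert_mem_pathEdge.mpr ⟨by have := hmL hm; omega, hb⟩) (by rw [yVert_mem_pathEdge]; omega)
  intro e he hbe
  obtain ⟨j', m', hm', rfl⟩ := mem_thetaEdges.mp he
  rw [yVert_mem_pathEdge] at hbe ⊢
  have := hmL hm'
  omega

lemma isNonMonochromatic_of_succ_mul_lt (htr : t < r) {w : Finset (ThetaVert r t s L) → ℕ}
    (hw : ∀ e ∈ thetaEdges r t L, 1 ≤ w e) (hL : ∀ i, t ≤ L i * (r - t)) {i : Fin s} {m : ℕ}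
    (h : (m + 1) * (r - t) < t) :
    IsNonMonochromatic (thetaEdges r t L) w (pathEdge r t L i m) := by
  have hm : m + 1 < L i := (Nat.mul_lt_mul_right (a := r - t) (by omega)).mp (h.trans_le (hL i))
  have hsucc : (m + 1) * (r - t) = m * (r - t) + (r - t) := add_one_mul _ _
  exact IsNonMonochromatic.of_lt (u := xVert ⟨m * (r - t), by omega⟩)
    (v := xVert ⟨(m + 1) * (r - t), h⟩) (xVert_mem_pathEdge.mpr ⟨le_rfl, by simp only; omega⟩)
    (xVert_mem_pathEdge.mpr (by simp only; omega))
    (sigmaE_xVert_lt htr hw hm (by simp only; omega) le_rfl)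

lemma isNonMonochromatic_of_sub_mul_lt (htr : t < r) {w : Finset (ThetaVert r t s L) → ℕ}
    (hw : ∀ e ∈ thetaEdges r t L, 1 ≤ w e) (hL : ∀ i, t ≤ L i * (r - t)) {i : Fin s} {m : ℕ}
    (hm : m < L i) (h : (L i - m) * (r - t) < t) :
    IsNonMonochromatic (thetaEdges r t L) w (pathEdge r t L i m) := by
  have hm1 : 1 ≤ m := by
    by_contra h0
    rw [show m = 0 by omega, Nat.sub_zero] at h
    exact absurd (hL i) (not_le.mpr h)
  rw [Nat.sub_mul] at h
  have hmL : m * (r - t) < L i * (r - t) := Nat.mul_lt_mul_of_pos_right hm (by omega)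
  have hpred : (m - 1) * (r - t) + (r - t) = m * (r - t) := by
    rw [← add_one_mul, Nat.sub_add_cancel hm1]
  obtain ⟨b, hb⟩ := Nat.exists_eq_add_of_le (show L i * (r - t) ≤ m * (r - t) + t by omega)
  have hbt : b < t := by omega
  exact IsNonMonochromatic.of_lt (u := yVert ⟨b, hbt⟩) (v := yVert ⟨b - 1, by omega⟩)
    (yVert_mem_pathEdge.mpr ⟨by omega, by simp only; omega⟩)
    (yVert_mem_pathEdge.mpr ⟨by omega, by simp only; omega⟩)
    (sigmaE_yVert_lt (j := i) (m := m - 1) hw (by omega) (by simp only; omega)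
      (by simp only; omega))

/-- If `r - t ∤ r`, no edge ends where another one starts, so inside a path the load strictly
increases at every starting position. -/
lemma isNonMonochromatic_of_not_dvd (htr : t < r) (hdt : r - t < t) (hndvd : ¬ (r - t) ∣ r)
    {w : Finset (ThetaVert r t s L) → ℕ} (hw : ∀ e ∈ thetaEdges r t L, 1 ≤ w e)
    (hL : ∀ i, t ≤ L i * (r - t)) {i : Fin s} {m : ℕ} (hm : m < L i) :
    IsNonMonochromatic (thetaEdges r t L) w (pathEdge r t L i m) := by
  rcases lt_or_ge ((L i - m) * (r - t)) t with hy | hy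
  · exact isNonMonochromatic_of_sub_mul_lt htr hw hL hm hy
  rcases lt_or_ge ((m + 1) * (r - t)) t with hx | hx
  · exact isNonMonochromatic_of_succ_mul_lt htr hw hL hx
  have hm1 : m + 1 < L i := by
    by_contra h
    have : L i - m ≤ 1 := by omega
    have := Nat.mul_le_mul_right (r - t) this
    omega
  have hxt : (m + 1) * (r - t) ≠ t := fun h =>
    hndvd ⟨m + 2, by
      rw [mul_comm, show (m + 2) * (r - t) = (m + 1) * (r - t) + (r - t) by ring]; omega⟩
  have hsucc : (m + 1) * (r - t) = m * (r - t) + (r - t) := add_one_mul _ _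
  have hp : (m + 1) * (r - t) < L i * (r - t) := Nat.mul_lt_mul_of_pos_right hm1 (by omega)
  have hend : ∀ m', m' * (r - t) + r ≠ (m + 1) * (r - t) - 1 + 1 := by
    intro m' h
    apply hndvd
    refine ⟨m + 1 - m', ?_⟩
    rw [Nat.mul_sub, mul_comm (r - t), mul_comm (r - t)]
    omega
  refine IsNonMonochromatic.of_lt (u := pathVertex i ((m + 1) * (r - t) - 1) (by omega))
    (v := pathVertex i ((m + 1) * (r - t)) hp) ((mem_pathEdge_pathVertex _).mpr (by omega))
    ((mem_pathEdge_pathVertex _).mpr (by omega)) ?_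
  rw [sigmaE_pathVertex htr w _ (by omega), sigmaE_pathVertex htr w _ (by omega)]
  have := pathLoad_lt_pathLoad_succ htr hw hm1 (by omega) hend
  rwa [Nat.sub_add_cancel (by omega)] at this

lemma filter_range_window {d n r p M : ℕ} (hd : 0 < d) (hr : r = (n + 1) * d) :
    (range M).filter (fun m => m * d ≤ p ∧ p < m * d + r) =
      Ico (p / d - n) (min (p / d + 1) M) := by
  ext m
  have h₁ : m * d ≤ p ↔ m ≤ p / d := (Nat.le_div_iff_mul_le hd).symm
  have h₂ : p < m * d + r ↔ p / d < m + n + 1 := by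
    rw [Nat.div_lt_iff_lt_mul hd, hr]; ring_nf
  simp only [mem_filter, mem_range, mem_Ico, h₁, h₂]
  omega

section Divisible

variable {n : ℕ}

lemma pathLoad_eq_sum_Ico (htr : t < r) (htn : t = n * (r - t))
    (w : Finset (ThetaVert r t s L) → ℕ) (i : Fin s) (p : ℕ) :
    pathLoad w i p = ∑ m ∈ Ico (p / (r - t) - n) (min (p / (r - t) + 1) (L i)),
      w (pathEdge r t L i m) := by
  rw [pathLoad, edgeIndicesAt, filter_range_window (n := n) (by omega) (by rw [add_one_mul]; omega)]

lemma pathLoad_eq_of_eq_one (htr : t < r) (htn : t = n * (r - t))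
    {w : Finset (ThetaVert r t s L) → ℕ} (hw : ∀ e ∈ thetaEdges r t L, w e = 1) (i : Fin s)
    (p : ℕ) : pathLoad w i p = min (p / (r - t) + 1) (L i) - (p / (r - t) - n) := by
  rw [pathLoad_eq_sum_Ico htr htn, ← Nat.card_Ico (p / (r - t) - n), card_eq_sum_ones]
  refine sum_congr rfl fun m hm => hw _ (pathEdge_mem_thetaEdges ?_)
  have := (mem_Ico.mp hm).2
  omega

lemma div_mem_Ico_of_internal (htr : t < r) (htn : t = n * (r - t)) {i : Fin s} {p : ℕ}
    (h₁ : t ≤ p) (h₂ : p < L i * (r - t)) : p / (r - t) ∈ Set.Ico n (L i) :=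
  ⟨(Nat.le_div_iff_mul_le (by omega)).mpr (by omega),
    (Nat.div_lt_iff_lt_mul (by omega)).mpr h₂⟩

lemma sub_one_div_eq (htr : t < r) (hn : 1 ≤ n) (htn : t = n * (r - t)) :
    (t - 1) / (r - t) = n - 1 := by
  have hsucc : (n - 1) * (r - t) + (r - t) = t := by
    rw [← add_one_mul, Nat.sub_add_cancel hn]; exact htn.symm
  exact Nat.div_eq_of_lt_le (by omega) (by rw [add_one_mul]; omega)

lemma sigmaE_eq_of_eq_one (htr : t < r) (htn : t = n * (r - t))
    {w : Finset (ThetaVert r t s L) → ℕ} (hw : ∀ e ∈ thetaEdges r t L, w e = 1) {i : Fin s}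
    {v : ThetaVert r t s L} (hv : OnPath i v) (h₁ : t ≤ pathPos i v)
    (h₂ : pathPos i v < L i * (r - t)) : sigmaE (thetaEdges r t L) w v = n + 1 := by
  rw [sigmaE_eq_pathLoad htr w hv h₁ h₂, pathLoad_eq_of_eq_one htr htn hw]
  obtain ⟨hn₁, hn₂⟩ := div_mem_Ico_of_internal htr htn h₁ h₂
  omega

lemma not_hasNSDEdgeWeighting_one (htr : t < r) (hn : 1 ≤ n) (htn : t = n * (r - t))
    {i : Fin s} (hlong : 2 * n < L i) : ¬ HasNSDEdgeWeighting (thetaEdges r t L) 1 := by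
  rintro ⟨w, hw, hproper⟩
  have hw1 : ∀ e ∈ thetaEdges r t L, w e = 1 := fun e he => by have := hw e he; omega
  have hlen : (2 * n + 1) * (r - t) ≤ L i * (r - t) := Nat.mul_le_mul_right _ hlong
  have hblocks : (2 * n + 1) * (r - t) = n * (r - t) + n * (r - t) + (r - t) := by ring
  have hdt : r - t ≤ t := by have := Nat.le_mul_of_pos_left (r - t) hn; omega
  have hσ : ∀ v ∈ pathEdge r t L i n, sigmaE (thetaEdges r t L) w v = n + 1 := by
    intro v hv
    obtain ⟨hvi, h₁, h₂⟩ := mem_pathEdge.mp hv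
    exact sigmaE_eq_of_eq_one htr htn hw1 hvi (by omega) (by omega)
  have hcard : 2 ≤ (pathEdge r t L i n).card := by
    have hp : t + 1 < L i * (r - t) := by omega
    refine one_lt_card.mpr ⟨pathVertex i t (by omega), ?_, pathVertex i (t + 1) hp, ?_, ?_⟩
    · exact (mem_pathEdge_pathVertex _).mpr (by omega)
    · exact (mem_pathEdge_pathVertex _).mpr (by omega)
    · intro h
      have := congrArg (pathPos i) h
      simp only [pathPos_pathVertex] at this
      omega
  obtain ⟨u, hu, v, hv, hne⟩ := hproper _ (pathEdge_mem_thetaEdges (by omega)) hcard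
  exact hne (by rw [hσ u hu, hσ v hv])

/-- Edges meeting two blocks of `x`'s, or two blocks of `y`'s, are never monochromatic. -/
lemma isNonMonochromatic_of_middle (htr : t < r) (hn : 2 ≤ n) (htn : t = n * (r - t))
    {w : Finset (ThetaVert r t s L) → ℕ} (hw : ∀ e ∈ thetaEdges r t L, 1 ≤ w e)
    (hL : ∀ i, t ≤ L i * (r - t)) {i : Fin s} {m : ℕ} (hm : m < L i)
    (hmiddle : n ≤ m + 1 → m + n ≤ L i → t < L i * (r - t) →
      IsNonMonochromatic (thetaEdges r t L) w (pathEdge r t L i m)) :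
    IsNonMonochromatic (thetaEdges r t L) w (pathEdge r t L i m) := by
  rcases lt_or_ge ((m + 1) * (r - t)) t with hx | hx
  · exact isNonMonochromatic_of_succ_mul_lt htr hw hL hx
  rcases lt_or_ge ((L i - m) * (r - t)) t with hy | hy
  · exact isNonMonochromatic_of_sub_mul_lt htr hw hL hm hy
  have hd : 0 < r - t := by omega
  have hm₁ : n ≤ m + 1 := Nat.le_of_mul_le_mul_right (c := r - t) (by omega) hd
  have hm₂ : n ≤ L i - m := Nat.le_of_mul_le_mul_right (c := r - t) (by omega) hd
  have hi : (n + 1) * (r - t) ≤ L i * (r - t) := Nat.mul_le_mul_right _ (by omega)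
  rw [add_one_mul] at hi
  exact hmiddle hm₁ (by omega) (by omega)

lemma isNonMonochromatic_of_xVert_corner (htr : t < r) (hn : 1 ≤ n) (htn : t = n * (r - t))
    {w : Finset (ThetaVert r t s L) → ℕ} {i j : Fin s} (hij : i ≠ j)
    (hi : t < L i * (r - t))
    (hload : pathLoad w i t < pathLoad w i (t - 1) + pathLoad w j (t - 1)) :
    IsNonMonochromatic (thetaEdges r t L) w (pathEdge r t L i (n - 1)) := by
  have hpred : (n - 1) * (r - t) + (r - t) = t := by
    rw [← add_one_mul, Nat.sub_add_cancel hn]; exact htn.symm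
  have ht : t - 1 < t := by omega
  refine IsNonMonochromatic.of_lt (u := pathVertex i t hi) (v := xVert ⟨t - 1, ht⟩)
    ((mem_pathEdge_pathVertex hi).mpr (by omega)) (xVert_mem_pathEdge.mpr (by simp only; omega))
    ?_
  have hx := pathLoad_add_pathLoad_le_sigmaE htr w hij hi (onPath_xVert ⟨t - 1, ht⟩)
    (onPath_xVert _)
  rw [pathPos_xVert, pathPos_xVert] at hx
  rw [sigmaE_pathVertex htr w hi le_rfl]
  exact hload.trans_le hx

lemma isNonMonochromatic_of_yVert_corner (htr : t < r) (hn : 1 ≤ n) (htn : t = n * (r - t))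
    {w : Finset (ThetaVert r t s L) → ℕ} {i j : Fin s} (hij : i ≠ j)
    (hi : t < L i * (r - t)) {m : ℕ} (hm : m + n = L i) (hm₁ : 1 ≤ m)
    (hload : pathLoad w i (L i * (r - t) - 1) <
      pathLoad w i (L i * (r - t)) + pathLoad w j (L j * (r - t))) :
    IsNonMonochromatic (thetaEdges r t L) w (pathEdge r t L i m) := by
  have hLi : L i * (r - t) = m * (r - t) + t := by rw [← hm, add_mul]; omega
  have hmd : r - t ≤ m * (r - t) := Nat.le_mul_of_pos_left _ hm₁
  have hnd : r - t ≤ t := by have := Nat.le_mul_of_pos_left (r - t) hn; omega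
  have hp : L i * (r - t) - 1 < L i * (r - t) := by omega
  refine IsNonMonochromatic.of_lt (u := pathVertex i (L i * (r - t) - 1) hp)
    (v := yVert ⟨0, by omega⟩)
    ((mem_pathEdge_pathVertex hp).mpr (by omega)) (yVert_mem_pathEdge.mpr (by simp only; omega))
    ?_
  have hy := pathLoad_add_pathLoad_le_sigmaE htr w hij hi (onPath_yVert ⟨0, by omega⟩)
    (onPath_yVert _)
  rw [pathPos_yVert, pathPos_yVert, Nat.add_zero, Nat.add_zero] at hy
  rw [sigmaE_pathVertex htr w hp (by omega)]
  exact hload.trans_le hy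

lemma isNonMonochromatic_of_eq_one_of_short (htr : t < r) (hn : 2 ≤ n)
    (htn : t = n * (r - t)) (hs : 2 ≤ s) (hL : ∀ i, t ≤ L i * (r - t))
    {w : Finset (ThetaVert r t s L) → ℕ} (hw : ∀ e ∈ thetaEdges r t L, w e = 1) {i : Fin s}
    (hshort : L i ≤ 2 * n) {m : ℕ} (hm : m < L i) :
    IsNonMonochromatic (thetaEdges r t L) w (pathEdge r t L i m) := by
  refine isNonMonochromatic_of_middle htr hn htn (fun e he => (hw e he).ge) hL hm
    fun hm₁ hm₂ hi => ?_
  have : Nontrivial (Fin s) := Fin.nontrivial_iff_two_le.mpr hs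
  obtain ⟨j, hji⟩ := exists_ne i
  have hLn : ∀ j, n ≤ L j := fun j =>
    Nat.le_of_mul_le_mul_right (c := r - t) (by have := hL j; omega) (by omega)
  have hinternal : ∀ p, t ≤ p → p < L i * (r - t) → pathLoad w i p = n + 1 := by
    intro p h₁ h₂
    rw [pathLoad_eq_of_eq_one htr htn hw]
    obtain ⟨hn₁, hn₂⟩ := div_mem_Ico_of_internal htr htn h₁ h₂
    omega
  rcases (show m = n - 1 ∨ m + n = L i by omega) with rfl | hcorner
  · refine isNonMonochromatic_of_xVert_corner htr (by omega) htn hji.symm hi ?_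
    simp only [hinternal t le_rfl hi, pathLoad_eq_of_eq_one htr htn hw,
      sub_one_div_eq htr (by omega) htn]
    have := hLn i
    have := hLn j
    omega
  · refine isNonMonochromatic_of_yVert_corner htr (by omega) htn hji.symm hi hcorner (by omega) ?_
    simp only [hinternal (L i * (r - t) - 1) (by omega) (by omega),
      pathLoad_eq_of_eq_one htr htn hw,
      Nat.mul_div_cancel _ (show 0 < r - t by omega)]
    have := hLn j
    omega

lemma exists_adjacent_dvd (hn : 2 ≤ n) (m : ℕ) :
    ∃ q, m ≤ q ∧ q + 2 ≤ m + n ∧ (n ∣ q ∨ n ∣ q + 1) := by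
  by_cases hm : n ∣ m
  · exact ⟨m, le_rfl, by omega, Or.inl hm⟩
  have hmod : m % n ≠ 0 := fun h => hm (Nat.dvd_of_mod_eq_zero h)
  have := Nat.div_add_mod m n
  have := Nat.mod_lt m (by omega : 0 < n)
  refine ⟨n * (m / n) + n - 1, by omega, by omega, Or.inr ⟨m / n + 1, ?_⟩⟩
  rw [Nat.sub_add_cancel (by omega), mul_add_one]

open Classical in
noncomputable def periodicWeight (r t : ℕ) {s : ℕ} (L : Fin s → ℕ) (n : ℕ)
    (e : Finset (ThetaVert r t s L)) : ℕ :=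
  if ∃ j m, m < L j ∧ n ∣ m ∧ e = pathEdge r t L j m then 2 else 1

lemma one_le_periodicWeight (e : Finset (ThetaVert r t s L)) : 1 ≤ periodicWeight r t L n e := by
  unfold periodicWeight; split <;> omega

lemma periodicWeight_le_two (e : Finset (ThetaVert r t s L)) : periodicWeight r t L n e ≤ 2 := by
  unfold periodicWeight; split <;> omega

lemma periodicWeight_pathEdge (htr : t < r) {i : Fin s} {m : ℕ} (hm : m < L i) :
    periodicWeight r t L n (pathEdge r t L i m) = if n ∣ m then 2 else 1 := by
  unfold periodicWeight
  refine if_congr ⟨?_, fun h => ⟨i, m, hm, h, rfl⟩⟩ rfl rfl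
  rintro ⟨j, m', hm', hdvd, h⟩
  rwa [index_eq_of_pathEdge_eq htr hm hm' h]

/-- Moving from block `q` to block `q + 1` of a path trades the edge `q - n` for the edge
`q + 1`, whose weights differ when `n` divides `q` or `q + 1`. -/
lemma pathLoad_periodicWeight_ne (htr : t < r) (hn : 2 ≤ n) (htn : t = n * (r - t))
    {i : Fin s} {q : ℕ} (hq : n ≤ q) (hqL : q + 1 < L i) (hdvd : n ∣ q ∨ n ∣ q + 1) :
    pathLoad (periodicWeight r t L n) i (q * (r - t)) ≠
      pathLoad (periodicWeight r t L n) i ((q + 1) * (r - t)) := by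
  have hd : 0 < r - t := by omega
  rw [pathLoad_eq_sum_Ico htr htn, pathLoad_eq_sum_Ico htr htn, Nat.mul_div_cancel _ hd,
    Nat.mul_div_cancel _ hd, min_eq_left (by omega), min_eq_left (by omega)]
  set f := fun m => periodicWeight r t L n (pathEdge r t L i m)
  have hshift : (Ico (q - n) (q + 1)).sum f + f (q + 1) =
      f (q - n) + (Ico (q + 1 - n) (q + 1 + 1)).sum f := by
    rw [← sum_Ico_succ_top (by omega), sum_eq_sum_Ico_succ_bot (by omega),
      show q - n + 1 = q + 1 - n by omega]
  have hf : ∀ m, m < L i → f m = if n ∣ m then 2 else 1 := fun m hm =>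
    periodicWeight_pathEdge htr hm
  have hperiod : (n ∣ q - n ↔ n ∣ q) := by
    rw [Nat.dvd_sub_self_right]
    refine ⟨fun h => h.elim id fun h' => ?_, Or.inl⟩
    rw [le_antisymm h' hq]
  have hnot : ¬ (n ∣ q ∧ n ∣ q + 1) := fun ⟨h₁, h₂⟩ =>
    absurd (Nat.le_of_dvd one_pos ((Nat.dvd_add_right h₁).mp h₂)) (by omega)
  rw [hf _ (by omega), hf _ (by omega), if_congr hperiod rfl rfl] at hshift
  rcases hdvd with h | h
  · rw [if_pos h, if_neg fun h' => hnot ⟨h, h'⟩] at hshift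
    omega
  · rw [if_pos h, if_neg fun h' => hnot ⟨h', h⟩] at hshift
    omega

lemma pathLoad_periodicWeight_lt (htr : t < r) (hn : 2 ≤ n) (htn : t = n * (r - t))
    {i j : Fin s} (hLi : n < L i) (hLj : n ≤ L j) :
    pathLoad (periodicWeight r t L n) i t <
      pathLoad (periodicWeight r t L n) i (t - 1) +
        pathLoad (periodicWeight r t L n) j (t - 1) := by
  have hd : 0 < r - t := by omega
  rw [pathLoad_eq_sum_Ico htr htn, pathLoad_eq_sum_Ico htr htn, pathLoad_eq_sum_Ico htr htn,
    sub_one_div_eq htr (by omega) htn, Nat.div_eq_of_eq_mul_left hd htn, Nat.sub_self,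
    Nat.sub_eq_zero_of_le (by omega : n - 1 ≤ n), Nat.sub_add_cancel (by omega : 1 ≤ n),
    min_eq_left hLi, min_eq_left hLi.le, min_eq_left hLj, sum_Ico_succ_top (Nat.zero_le _),
    periodicWeight_pathEdge htr hLi, if_pos dvd_rfl]
  have h01 : ({0, 1} : Finset ℕ) ⊆ Ico 0 n := by
    intro x hx
    simp only [mem_insert, mem_singleton] at hx
    simp only [mem_Ico]
    omega
  have hj := sum_le_sum_of_subset (f := fun m => periodicWeight r t L n (pathEdge r t L j m)) h01
  rw [sum_pair zero_ne_one, periodicWeight_pathEdge htr (by omega), if_pos (dvd_zero n)] at hj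
  have := one_le_periodicWeight (r := r) (t := t) (L := L) (n := n) (pathEdge r t L j 1)
  omega

lemma isNonMonochromatic_periodicWeight (htr : t < r) (hn : 2 ≤ n) (htn : t = n * (r - t))
    (hs : 2 ≤ s) (hL : ∀ i, t ≤ L i * (r - t)) {i : Fin s} {m : ℕ} (hm : m < L i) :
    IsNonMonochromatic (thetaEdges r t L) (periodicWeight r t L n) (pathEdge r t L i m) := by
  have hd : 0 < r - t := by omega
  refine isNonMonochromatic_of_middle htr hn htn (fun e _ => one_le_periodicWeight e) hL hm
    fun hm₁ hm₂ hi => ?_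
  rcases (show m = n - 1 ∨ n ≤ m by omega) with rfl | hnm
  · have : Nontrivial (Fin s) := Fin.nontrivial_iff_two_le.mpr hs
    obtain ⟨j, hji⟩ := exists_ne i
    have hLj : n ≤ L j := Nat.le_of_mul_le_mul_right (c := r - t) (by have := hL j; omega) hd
    exact isNonMonochromatic_of_xVert_corner htr (by omega) htn hji.symm hi
      (pathLoad_periodicWeight_lt htr hn htn (by omega) hLj)
  · obtain ⟨q, hmq, hqm, hdvd⟩ := exists_adjacent_dvd hn m
    have hq : (q + 1) * (r - t) < L i * (r - t) := Nat.mul_lt_mul_of_pos_right (by omega) hd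
    have hsucc : (q + 1) * (r - t) = q * (r - t) + (r - t) := add_one_mul _ _
    have hmq' : m * (r - t) ≤ q * (r - t) := Nat.mul_le_mul_right _ hmq
    have hqm' : (q + 2) * (r - t) ≤ (m + n) * (r - t) := Nat.mul_le_mul_right _ hqm
    have hnq : n * (r - t) ≤ q * (r - t) := Nat.mul_le_mul_right _ (hnm.trans hmq)
    rw [show (q + 2) * (r - t) = q * (r - t) + (r - t) + (r - t) by ring, add_mul] at hqm'
    refine ⟨pathVertex i (q * (r - t)) (by omega), (mem_pathEdge_pathVertex _).mpr (by omega),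
      pathVertex i ((q + 1) * (r - t)) hq, (mem_pathEdge_pathVertex _).mpr (by omega), ?_⟩
    rw [sigmaE_pathVertex htr _ _ (by omega), sigmaE_pathVertex htr _ _ (by omega)]
    exact pathLoad_periodicWeight_ne htr hn htn (hnm.trans hmq) (by omega) hdvd

end Divisible

lemma exists_eq_mul_sub_of_dvd (htr : t < r) (hdt : r - t < t) (hdvd : (r - t) ∣ r) :
    ∃ n, 2 ≤ n ∧ t = n * (r - t) ∧ r / (r - t) - 1 = n := by
  obtain ⟨k, hk⟩ := hdvd
  have hd : 0 < r - t := by omega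
  have htk : t = (k - 1) * (r - t) := by rw [Nat.sub_one_mul, mul_comm, ← hk]; omega
  refine ⟨k - 1, ?_, htk, by rw [Nat.div_eq_of_eq_mul_left hd (hk.trans (mul_comm _ _))]⟩
  by_contra! hk2
  have : (k - 1) * (r - t) ≤ 1 * (r - t) := Nat.mul_le_mul_right _ (by omega)
  omega

lemma hasNSDEdgeWeighting_of_forall_pathEdge {k : ℕ} {w : Finset (ThetaVert r t s L) → ℕ}
    (hw : ∀ e ∈ thetaEdges r t L, 1 ≤ w e ∧ w e ≤ k)
    (h : ∀ i m, m < L i → IsNonMonochromatic (thetaEdges r t L) w (pathEdge r t L i m)) :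
    HasNSDEdgeWeighting (thetaEdges r t L) k := by
  refine ⟨w, hw, fun e he _ => ?_⟩
  obtain ⟨i, m, hm, rfl⟩ := mem_thetaEdges.mp he
  exact h i m hm

end ThetaHypergraph

open ThetaHypergraph in
theorem chiE_theta_large_t_general (r t s : ℕ) (L : Fin s → ℕ) (hs : 3 ≤ s)
    (htr : t < r) (h2t : r < 2 * t)
    (hL : ∀ i, t ≤ L i * (r - t)) :
    (((r - t) ∣ r ∧ ∃ i, 2 * (r / (r - t) - 1) < L i) →
      IsLeast {k : ℕ | 0 < k ∧ HasNSDEdgeWeighting (thetaEdges r t L) k} 2) ∧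
    (¬((r - t) ∣ r ∧ ∃ i, 2 * (r / (r - t) - 1) < L i) →
      IsLeast {k : ℕ | 0 < k ∧ HasNSDEdgeWeighting (thetaEdges r t L) k} 1) := by
  have hdt : r - t < t := by omega
  refine ⟨fun ⟨hdvd, i, hlong⟩ => ?_, fun hnot => ⟨⟨one_pos, ?_⟩, fun k hk => hk.1⟩⟩
  · obtain ⟨n, hn, htn, hk⟩ := exists_eq_mul_sub_of_dvd htr hdt hdvd
    refine ⟨⟨two_pos, hasNSDEdgeWeighting_of_forall_pathEdge
      (fun e _ => ⟨one_le_periodicWeight e, periodicWeight_le_two e⟩)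
      fun i m hm => isNonMonochromatic_periodicWeight htr hn htn (by omega) hL hm⟩, ?_⟩
    rintro k ⟨hk0, hchi⟩
    by_contra! hk1
    obtain rfl : k = 1 := by omega
    exact not_hasNSDEdgeWeighting_one htr (by omega) htn (hk ▸ hlong) hchi
  · refine hasNSDEdgeWeighting_of_forall_pathEdge (w := fun _ => 1)
      (fun _ _ => ⟨le_rfl, le_rfl⟩) fun i m hm => ?_
    by_cases hdvd : (r - t) ∣ r
    · obtain ⟨n, hn, htn, hk⟩ := exists_eq_mul_sub_of_dvd htr hdt hdvd
      have hshort : L i ≤ 2 * n := by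
        by_contra! h
        exact hnot ⟨hdvd, i, hk ▸ h⟩
      exact isNonMonochromatic_of_eq_one_of_short htr hn htn (by omega) hL (fun _ _ => rfl)
        hshort hm
    · exact isNonMonochromatic_of_not_dvd htr hdt hdvd (fun _ _ => le_rfl) hL hm

/-- For `r, s ≥ 3` and `r/2 < t < r`, and the `r`-uniform theta hypergraph
`H = Θ_t^r(ℓ_1,…,ℓ_s)`: if `r-t` divides `r`, `k = r/(r-t)` and `ℓ_i > 2(k-1)`
for some `i`, then `χ^e(H) = 2`; otherwise `χ^e(H) = 1`. -/
theorem chiE_theta_large_t (r t s : ℕ) (L : Fin s → ℕ) (hr : 3 ≤ r) (hs : 3 ≤ s)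
    (htr : t < r) (h2t : r < 2 * t)
    (hL : ∀ i, t ≤ L i * (r - t))
    (hone : ∀ i j, L i = 1 → L j = 1 → i = j) :
    (((r - t) ∣ r ∧ ∃ i, 2 * (r / (r - t) - 1) < L i) →
      IsLeast {k : ℕ | 0 < k ∧ HasNSDEdgeWeighting (thetaEdges r t L) k} 2) ∧
    (¬((r - t) ∣ r ∧ ∃ i, 2 * (r / (r - t) - 1) < L i) →
      IsLeast {k : ℕ | 0 < k ∧ HasNSDEdgeWeighting (thetaEdges r t L) k} 1) :=
  chiE_theta_large_t_general r t s L hs htr h2t hL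
end
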